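/- arXiv:2105.07766 — 8 statements merged into one kernel-verified Lean document; each statement's English description precedes it below -/
import Mathlib

section
/- If the polynomials π_k satisfy the generating relation A₁(h(t))·A₂(x·h(t)) = Σ_{k=0}^∞ π_k(x) t^k and h'(1)=1, then for every n ≥ 1 and x ≥ 0 one has Σ_{k=0}^∞ k²·π_k(nx) = [(h''(1)+1)·A₁'(h(1)) + A₁''(h(1))]·A₂(nx·h(1)) + [2A₁'(h(1)) + (h''(1)+1)·A₁(h(1))]·A₂'(nx·h(1))·nx + A₁(h(1))·A₂''(nx·h(1))·(nx)². -/
open Filter Metric Set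

private lemma aux_summable (a : ℕ → ℝ) {s r : ℝ} (hr : 0 ≤ r) (hrs : r < s)
    (hs : Summable fun k => a k * s ^ k) :
    Summable fun k : ℕ => ((k : ℝ) + 1) * |a (k + 1)| * r ^ k := by
  have hs0 : 0 < s := lt_of_le_of_lt hr hrs
  have hq : 0 ≤ r / s := div_nonneg hr hs0.le
  have hq1 : r / s < 1 := (div_lt_one hs0).2 hrs
  have htend : Tendsto (fun k => |a k * s ^ k|) atTop (nhds 0) := by
    simpa using hs.tendsto_atTop_zero.abs
  obtain ⟨C, hC⟩ := htend.bddAbove_range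
  have hCk : ∀ k, |a k * s ^ k| ≤ C := fun k => hC (Set.mem_range_self k)
  have hsummable : Summable (fun k : ℕ => C / s * (((k : ℝ) + 1) * (r / s) ^ k)) := by
    apply Summable.mul_left
    have h1 : Summable (fun k : ℕ => (k : ℝ) * (r / s) ^ k) := by
      have := summable_pow_mul_geometric_of_norm_lt_one 1
        (r := r / s) (by rwa [Real.norm_eq_abs, abs_of_nonneg hq])
      simpa using this
    have h2 : Summable (fun k : ℕ => (r / s) ^ k) := summable_geometric_of_lt_one hq hq1
    have := h1.add h2
    simpa [add_mul, one_mul] using this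
  refine Summable.of_nonneg_of_le (fun k => mul_nonneg (mul_nonneg (by positivity) (abs_nonneg _)) (pow_nonneg hr k)) (fun k => ?_) hsummable
  have hb : |a (k + 1)| ≤ C / s ^ (k + 1) := by
    rw [le_div_iff₀ (by positivity)]
    have := hCk (k + 1)
    rwa [abs_mul, abs_pow, abs_of_pos hs0] at this
  calc ((k : ℝ) + 1) * |a (k + 1)| * r ^ k
      ≤ ((k : ℝ) + 1) * (C / s ^ (k + 1)) * r ^ k := by
        have hk0 : (0:ℝ) ≤ (k : ℝ) + 1 := by positivity
        have hrk : (0:ℝ) ≤ r ^ k := by positivity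
        exact mul_le_mul_of_nonneg_right (mul_le_mul_of_nonneg_left hb hk0) hrk
    _ = C / s * (((k : ℝ) + 1) * (r / s) ^ k) := by
        rw [div_pow]
        field_simp
        ring

private lemma series_hasDerivAt {a : ℕ → ℝ} {f : ℝ → ℝ} {R : ℝ}
    (hf : ∀ t : ℝ, |t| < R → HasSum (fun k => a k * t ^ k) (f t)) :
    ∀ t : ℝ, |t| < R →
      HasSum (fun k : ℕ => ((k : ℝ) + 1) * a (k + 1) * t ^ k) (deriv f t) ∧
        HasDerivAt f (deriv f t) t := by
  intro t₀ ht₀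
  have h0 : (0:ℝ) ≤ |t₀| := abs_nonneg _
  set r : ℝ := (|t₀| + R) / 2 with hrdef
  set s : ℝ := (r + R) / 2 with hsdef
  have htr : |t₀| < r := by rw [hrdef]; linarith
  have hr0 : 0 < r := lt_of_le_of_lt h0 htr
  have hrR : r < R := by rw [hrdef]; linarith
  have hrs : r < s := by rw [hsdef]; linarith
  have hsR : s < R := by rw [hsdef]; linarith
  have hsum_s : Summable fun k => a k * s ^ k :=
    (hf s (by rw [abs_of_pos (by linarith)]; exact hsR)).summable
  set u : ℕ → ℝ := fun n => (n : ℝ) * |a n| * r ^ (n - 1) with hu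
  have hu_sum : Summable u := by
    rw [← summable_nat_add_iff 1]
    have := aux_summable a hr0.le hrs hsum_s
    apply this.congr
    intro k
    rw [hu]
    push_cast
    simp
  set g' : ℕ → ℝ → ℝ := fun n y => a n * ((n : ℝ) * y ^ (n - 1)) with hg'def
  have hbound : ∀ (n : ℕ) (y : ℝ), |y| ≤ r → ‖g' n y‖ ≤ u n := by
    intro n y hyr
    simp only [hg'def, hu, Real.norm_eq_abs]
    rw [abs_mul, abs_mul, Nat.abs_cast, abs_pow]
    have h1 : |y| ^ (n - 1) ≤ r ^ (n - 1) := pow_le_pow_left₀ (abs_nonneg _) hyr (n - 1)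
    have hn0 : (0:ℝ) ≤ (n:ℝ) := Nat.cast_nonneg n
    calc |a n| * ((n:ℝ) * |y| ^ (n - 1)) ≤ |a n| * ((n:ℝ) * r ^ (n - 1)) :=
          mul_le_mul_of_nonneg_left (mul_le_mul_of_nonneg_left h1 hn0) (abs_nonneg _)
      _ = (n:ℝ) * |a n| * r ^ (n - 1) := by ring
  have hDT : HasDerivAt (fun z => ∑' n, a n * z ^ n) (∑' n, g' n t₀) t₀ := by
    refine hasDerivAt_tsum_of_isPreconnected hu_sum isOpen_Ioo
      ((convex_Ioo (-r) r).isPreconnected) (fun n y _ => ?_) (fun n y hy => ?_)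
      (abs_lt.mp htr) ((hf t₀ ht₀).summable) (abs_lt.mp htr)
    · simpa [hg'def] using (hasDerivAt_pow n y).const_mul (a n)
    · exact hbound n y (le_of_lt (abs_lt.mpr hy))
  have hEq : f =ᶠ[nhds t₀] fun z => ∑' n, a n * z ^ n := by
    have hmem : Metric.ball (0:ℝ) R ∈ nhds t₀ :=
      isOpen_ball.mem_nhds (by simpa [Real.norm_eq_abs] using ht₀)
    filter_upwards [hmem] with z hz
    exact ((hf z (by simpa [Real.norm_eq_abs] using mem_ball_zero_iff.mp hz)).tsum_eq).symm
  have hDf : HasDerivAt f (∑' n, g' n t₀) t₀ := hDT.congr_of_eventuallyEq hEq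
  have hsd : Summable fun n => g' n t₀ := by
    exact Summable.of_norm_bounded hu_sum (fun n => hbound n t₀ htr.le)
  have hDsum : HasSum (fun n => g' n t₀) (∑' n, g' n t₀) := hsd.hasSum
  have hshift := (hasSum_nat_add_iff' (f := fun n => g' n t₀) 1).2 hDsum
  have hzero : ∑ i ∈ Finset.range 1, g' i t₀ = 0 := by simp [hg'def]
  rw [hzero, sub_zero] at hshift
  have hfun : (fun n : ℕ => g' (n + 1) t₀)
      = fun k : ℕ => ((k : ℝ) + 1) * a (k + 1) * t₀ ^ k := by
    funext k
    rw [hg'def]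
    push_cast
    ring
  rw [hfun] at hshift
  rw [hDf.deriv]
  exact ⟨hshift, hDf⟩

private lemma abs_lt_of_mem_ball {R t : ℝ} (ht : t ∈ Metric.ball (0:ℝ) R) : |t| < R := by
  simpa [Real.norm_eq_abs] using mem_ball_zero_iff.mp ht

private lemma series_contDiffOn (n : ℕ) : ∀ (a : ℕ → ℝ) (f : ℝ → ℝ) (R : ℝ),
    (∀ t : ℝ, |t| < R → HasSum (fun k => a k * t ^ k) (f t)) →
    ContDiffOn ℝ n f (Metric.ball (0:ℝ) R) := by
  induction n with
  | zero =>
    intro a f R hf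
    rw [CharP.cast_eq_zero, contDiffOn_zero]
    intro t ht
    exact ((series_hasDerivAt hf t (abs_lt_of_mem_ball ht)).2.differentiableAt.continuousAt).continuousWithinAt
  | succ n ih =>
    intro a f R hf
    have hcast : ((n + 1 : ℕ) : WithTop ℕ∞) = (n : WithTop ℕ∞) + 1 := by push_cast; rfl
    rw [hcast, contDiffOn_succ_iff_deriv_of_isOpen isOpen_ball]
    refine ⟨fun t ht => ?_, fun hω => ?_, ?_⟩
    · exact ((series_hasDerivAt hf t (abs_lt_of_mem_ball ht)).2.differentiableAt).differentiableWithinAt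
    · simp at hω
    · exact ih _ _ _ (fun t ht => (series_hasDerivAt hf t ht).1)

private lemma series_contDiffAt {a : ℕ → ℝ} {f : ℝ → ℝ} {R : ℝ}
    (hf : ∀ t : ℝ, |t| < R → HasSum (fun k => a k * t ^ k) (f t))
    {t : ℝ} (ht : |t| < R) (n : ℕ) : ContDiffAt ℝ n f t :=
  (series_contDiffOn n _ _ _ hf).contDiffAt
    (isOpen_ball.mem_nhds (by simpa [Real.norm_eq_abs, mem_ball_zero_iff] using ht))

private lemma contDiffAt_deriv_of {f : ℝ → ℝ} {x : ℝ} {n : ℕ}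
    (hf : ContDiffAt ℝ (n + 1 : ℕ) f x) : ContDiffAt ℝ n (deriv f) x := by
  obtain ⟨u, hu, hcd⟩ := hf.contDiffOn (m := (n + 1 : ℕ)) le_rfl (by simp)
  have hx : x ∈ interior u := mem_interior_iff_mem_nhds.mpr hu
  have hcd' : ContDiffOn ℝ (n + 1 : ℕ) f (interior u) := hcd.mono interior_subset
  have hcast : ((n + 1 : ℕ) : WithTop ℕ∞) = (n : WithTop ℕ∞) + 1 := by push_cast; rfl
  rw [hcast, contDiffOn_succ_iff_deriv_of_isOpen isOpen_interior] at hcd'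
  exact hcd'.2.2.contDiffAt (isOpen_interior.mem_nhds hx)

private lemma ev_differentiable {f : ℝ → ℝ} {x : ℝ} (hf : ContDiffAt ℝ 1 f x) :
    ∀ᶠ t in nhds x, DifferentiableAt ℝ f t := by
  filter_upwards [hf.eventually (by simp)] with t ht
  exact ht.differentiableAt one_ne_zero

private lemma local_inverse_package (h : ℝ → ℝ) (t₀ : ℝ)
    (hh : ∀ m : ℕ, ContDiffAt ℝ m h t₀) (hd : deriv h t₀ ≠ 0) :
    ∃ g : ℝ → ℝ, g (h t₀) = t₀ ∧ Tendsto g (nhds (h t₀)) (nhds t₀) ∧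
      (∀ᶠ z in nhds (h t₀), h (g z) = z) ∧
      (∀ᶠ z in nhds (h t₀), HasDerivAt g ((deriv h (g z))⁻¹) z) := by
  have hh2 : ContDiffAt ℝ 2 h t₀ := by exact_mod_cast hh 2
  have hs : HasStrictDerivAt h (deriv h t₀) t₀ := hh2.hasStrictDerivAt (by norm_num)
  have hE := hs.hasStrictFDerivAt_equiv hd
  set g : ℝ → ℝ := hE.localInverse h _ t₀ with hgdef
  have h1 : g (h t₀) = t₀ := hE.localInverse_apply_image
  have h2 : ContinuousAt g (h t₀) := hE.localInverse_continuousAt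
  have htend : Tendsto g (nhds (h t₀)) (nhds t₀) := by
    have := h2.tendsto
    rwa [h1] at this
  have h3 : ∀ᶠ z in nhds (h t₀), h (g z) = z := hE.eventually_right_inverse
  have h4 : ∀ᶠ x in nhds t₀, g (h x) = x := hE.eventually_left_inverse
  have h5 : ∀ᶠ t in nhds t₀, ContDiffAt ℝ 2 h t := hh2.eventually (by simp)
  have h6 : ContinuousAt (deriv h) t₀ := by
    have : ContDiffAt ℝ 1 (deriv h) t₀ := by
      have := contDiffAt_deriv_of (n := 1) (by exact_mod_cast hh 2)
      exact_mod_cast this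
    exact this.continuousAt
  have h7 : ∀ᶠ t in nhds t₀, deriv h t ≠ 0 := h6.eventually_ne hd
  have h8 : ∀ᶠ t in nhds t₀, ∀ᶠ x in nhds t, g (h x) = x := eventually_eventually_nhds.mpr h4
  have hW := (h5.and (h7.and h8)).eventually_nhds
  refine ⟨g, h1, htend, h3, ?_⟩
  filter_upwards [htend.eventually (h5.and (h7.and h8)), h3] with z hz hz2
  obtain ⟨hz1, hzd, hzli⟩ := hz
  have hst : HasStrictDerivAt h (deriv h (g z)) (g z) := hz1.hasStrictDerivAt (by norm_num)
  have hres : HasStrictDerivAt g (deriv h (g z))⁻¹ (h (g z)) :=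
    hst.to_local_left_inverse hzd hzli
  rw [hz2] at hres
  exact hres.hasDerivAt

private lemma transfer_derivs (h A : ℝ → ℝ) (t₀ : ℝ)
    (hh : ∀ m : ℕ, ContDiffAt ℝ m h t₀)
    (hA : ∀ m : ℕ, ContDiffAt ℝ m (fun t => A (h t)) t₀)
    (hd : deriv h t₀ ≠ 0) :
    deriv A (h t₀) = deriv (fun t => A (h t)) t₀ * (deriv h t₀)⁻¹ ∧
    deriv (deriv A) (h t₀) =
      (deriv (deriv (fun t => A (h t))) t₀ * (deriv h t₀)⁻¹
        + deriv (fun t => A (h t)) t₀ * (-(deriv (deriv h) t₀) / (deriv h t₀) ^ 2))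
        * (deriv h t₀)⁻¹ := by
  obtain ⟨g, hgb, htend, hri, hgd⟩ := local_inverse_package h t₀ hh hd
  have hφ1 : ContDiffAt ℝ 1 (fun t => A (h t)) t₀ := by exact_mod_cast hA 1
  have Eφdiff : ∀ᶠ t in nhds t₀, DifferentiableAt ℝ (fun t => A (h t)) t :=
    ev_differentiable hφ1
  have E0 : ∀ᶠ z in nhds (h t₀), A z = (fun t => A (h t)) (g z) := by
    filter_upwards [hri] with z hz
    exact (congrArg A hz).symm
  have E1 : ∀ᶠ z in nhds (h t₀),
      HasDerivAt A (deriv (fun t => A (h t)) (g z) * (deriv h (g z))⁻¹) z := by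
    filter_upwards [hgd, htend.eventually Eφdiff, E0.eventually_nhds] with z hz1 hz2 hz3
    have hcomp : HasDerivAt (fun w => (fun t => A (h t)) (g w))
        (deriv (fun t => A (h t)) (g z) * (deriv h (g z))⁻¹) z :=
      (hz2.hasDerivAt).comp z hz1
    exact hcomp.congr_of_eventuallyEq hz3
  have E2 : ∀ᶠ z in nhds (h t₀),
      deriv A z = deriv (fun t => A (h t)) (g z) * (deriv h (g z))⁻¹ :=
    E1.mono fun z hz => hz.deriv
  constructor
  · have := E2.self_of_nhds
    rwa [hgb] at this
  · rw [Filter.EventuallyEq.deriv_eq E2]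
    have hgb' : HasDerivAt g ((deriv h t₀)⁻¹) (h t₀) := by
      have := hgd.self_of_nhds
      rwa [hgb] at this
    have hφ'd : DifferentiableAt ℝ (deriv (fun t => A (h t))) t₀ := by
      have h2 : ContDiffAt ℝ 1 (deriv (fun t => A (h t))) t₀ := by
        have := contDiffAt_deriv_of (n := 1) (by exact_mod_cast hA 2)
        exact_mod_cast this
      exact h2.differentiableAt one_ne_zero
    have hh'd : DifferentiableAt ℝ (deriv h) t₀ := by
      have h2 : ContDiffAt ℝ 1 (deriv h) t₀ := by
        have := contDiffAt_deriv_of (n := 1) (by exact_mod_cast hh 2)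
        exact_mod_cast this
      exact h2.differentiableAt one_ne_zero
    have hinv : HasDerivAt (fun t => (deriv h t)⁻¹)
        (-(deriv (deriv h) t₀) / (deriv h t₀) ^ 2) t₀ := hh'd.hasDerivAt.inv hd
    have hmul : HasDerivAt (fun t => deriv (fun t => A (h t)) t * (deriv h t)⁻¹)
        (deriv (deriv (fun t => A (h t))) t₀ * (deriv h t₀)⁻¹
          + deriv (fun t => A (h t)) t₀ * (-(deriv (deriv h) t₀) / (deriv h t₀) ^ 2)) t₀ :=
      hφ'd.hasDerivAt.mul hinv
    have hmul' : HasDerivAt (fun t => deriv (fun t => A (h t)) t * (deriv h t)⁻¹)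
        (deriv (deriv (fun t => A (h t))) t₀ * (deriv h t₀)⁻¹
          + deriv (fun t => A (h t)) t₀ * (-(deriv (deriv h) t₀) / (deriv h t₀) ^ 2))
        (g (h t₀)) := by rwa [hgb]
    have hcomp := hmul'.comp (h t₀) hgb'
    have : (fun z => deriv (fun t => A (h t)) (g z) * (deriv h (g z))⁻¹)
        = (fun t => deriv (fun t => A (h t)) t * (deriv h t)⁻¹) ∘ g := rfl
    rw [this]
    exact hcomp.deriv

private lemma deriv_mul_pt {f g : ℝ → ℝ} {x : ℝ}
    (hf : ∀ m : ℕ, ContDiffAt ℝ m f x) (hg : ∀ m : ℕ, ContDiffAt ℝ m g x) :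
    deriv (fun t => f t * g t) x = deriv f x * g x + f x * deriv g x ∧
    deriv (deriv (fun t => f t * g t)) x =
      deriv (deriv f) x * g x + 2 * (deriv f x * deriv g x) + f x * deriv (deriv g) x := by
  have Ef : ∀ᶠ t in nhds x, DifferentiableAt ℝ f t :=
    ev_differentiable (by exact_mod_cast hf 1)
  have Eg : ∀ᶠ t in nhds x, DifferentiableAt ℝ g t :=
    ev_differentiable (by exact_mod_cast hg 1)
  have E : ∀ᶠ t in nhds x,
      deriv (fun t => f t * g t) t = deriv f t * g t + f t * deriv g t := by
    filter_upwards [Ef, Eg] with t h1 h2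
    exact (h1.hasDerivAt.mul h2.hasDerivAt).deriv
  refine ⟨E.self_of_nhds, ?_⟩
  rw [Filter.EventuallyEq.deriv_eq E]
  have hfd : DifferentiableAt ℝ (deriv f) x :=
    (contDiffAt_deriv_of (n := 1) (by exact_mod_cast hf 2)).differentiableAt
      (by simp)
  have hgd : DifferentiableAt ℝ (deriv g) x :=
    (contDiffAt_deriv_of (n := 1) (by exact_mod_cast hg 2)).differentiableAt
      (by simp)
  have h1 : HasDerivAt (fun t => deriv f t * g t + f t * deriv g t)
      ((deriv (deriv f) x * g x + deriv f x * deriv g x)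
        + (deriv f x * deriv g x + f x * deriv (deriv g) x)) x :=
    (hfd.hasDerivAt.mul (Eg.self_of_nhds).hasDerivAt).add
      ((Ef.self_of_nhds).hasDerivAt.mul hgd.hasDerivAt)
  rw [h1.deriv]
  ring

/-- Data for generalized Brenke polynomials: analytic functions `A₁, A₂, h`
given by power series on `{t : |t| < R}` (`R > 1`), with `A₁, A₂ > 0` on `ℝ`,
`h'(1) = 1`, and polynomials `p k` satisfying the generating relation
`A₁(h(t)) · A₂(x · h(t)) = ∑ₖ p k x · tᵏ` with `p k x ≥ 0` for `x ≥ 0`. -/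
structure BrenkeData where
  R : ℝ
  A₁ : ℝ → ℝ
  A₂ : ℝ → ℝ
  h : ℝ → ℝ
  a₁ : ℕ → ℝ
  a₂ : ℕ → ℝ
  c : ℕ → ℝ
  p : ℕ → ℝ → ℝ
  hR : 1 < R
  ha₁ : a₁ 0 ≠ 0
  ha₂ : ∀ k, a₂ k ≠ 0
  hc0 : c 0 = 0
  hc1 : c 1 ≠ 0
  hA₁ : ∀ t : ℝ, |t| < R → HasSum (fun k => a₁ k * t ^ k) (A₁ t)
  hA₂ : ∀ t : ℝ, |t| < R → HasSum (fun k => a₂ k * t ^ k) (A₂ t)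
  hh : ∀ t : ℝ, |t| < R → HasSum (fun k => c k * t ^ k) (h t)
  hA₁pos : ∀ t : ℝ, 0 < A₁ t
  hA₂pos : ∀ t : ℝ, 0 < A₂ t
  hh1 : deriv h 1 = 1
  hgen : ∀ x t : ℝ, |t| < R → HasSum (fun k => p k x * t ^ k) (A₁ (h t) * A₂ (x * h t))
  hpos : ∀ (k : ℕ) (x : ℝ), 0 ≤ x → 0 ≤ p k x

/-- The Stancu type operator `L_n^{(ν₁,ν₂)}` including generalized Brenke polynomials. -/
noncomputable def stancuL (B : BrenkeData) (ν₁ ν₂ : ℝ) (n : ℕ) (f : ℝ → ℝ) (x : ℝ) : ℝ :=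
  (B.A₁ (B.h 1) * B.A₂ (n * x * B.h 1))⁻¹ *
    ∑' k : ℕ, B.p k (n * x) * f ((k + ν₁) / (n + ν₂))

/-- Lemma 2.1, third identity for `∑ₖ k²·π_k(nx)`. -/
theorem brenke_sum_two (B : BrenkeData) (n : ℕ) (hn : 1 ≤ n) (x : ℝ) (hx : 0 ≤ x) :
    HasSum (fun k : ℕ => (k : ℝ) ^ 2 * B.p k (n * x))
      (((deriv (deriv B.h) 1 + 1) * deriv B.A₁ (B.h 1) + deriv (deriv B.A₁) (B.h 1))
          * B.A₂ (n * x * B.h 1)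
        + (2 * deriv B.A₁ (B.h 1) + (deriv (deriv B.h) 1 + 1) * B.A₁ (B.h 1))
            * deriv B.A₂ (n * x * B.h 1) * (n * x)
        + B.A₁ (B.h 1) * deriv (deriv B.A₂) (n * x * B.h 1) * (n * x) ^ 2) := by
  set y : ℝ := (n : ℝ) * x with hydef
  have hR1 : |(1:ℝ)| < B.R := by rw [abs_one]; exact B.hR
  -- series representations
  have hFs : ∀ t : ℝ, |t| < B.R → HasSum (fun k => B.p k y * t ^ k)
      ((fun t => B.A₁ (B.h t) * B.A₂ (y * B.h t)) t) := fun t ht => B.hgen y t ht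
  have hφs : ∀ t : ℝ, |t| < B.R → HasSum (fun k => B.p k 0 * (B.A₂ 0)⁻¹ * t ^ k)
      ((fun t => B.A₁ (B.h t)) t) := by
    intro t ht
    have h0 := (B.hgen 0 t ht).mul_right (B.A₂ 0)⁻¹
    simp only [zero_mul] at h0
    have hv : B.A₁ (B.h t) * B.A₂ 0 * (B.A₂ 0)⁻¹ = B.A₁ (B.h t) := by
      rw [mul_assoc, mul_inv_cancel₀ (ne_of_gt (B.hA₂pos 0)), mul_one]
    rw [hv] at h0
    have hfun : (fun k : ℕ => B.p k 0 * t ^ k * (B.A₂ 0)⁻¹)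
        = fun k : ℕ => B.p k 0 * (B.A₂ 0)⁻¹ * t ^ k := by funext k; ring
    rwa [hfun] at h0
  -- smoothness
  have hhcd : ∀ m : ℕ, ContDiffAt ℝ m B.h 1 := fun m => series_contDiffAt B.hh hR1 m
  have hφcd : ∀ m : ℕ, ContDiffAt ℝ m (fun t => B.A₁ (B.h t)) 1 :=
    fun m => series_contDiffAt hφs hR1 m
  have hFcd : ∀ m : ℕ, ContDiffAt ℝ m (fun t => B.A₁ (B.h t) * B.A₂ (y * B.h t)) 1 :=
    fun m => series_contDiffAt hFs hR1 m
  have hΦeq : (fun t => B.A₂ (y * B.h t))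
      = fun t => (B.A₁ (B.h t) * B.A₂ (y * B.h t)) * (B.A₁ (B.h t))⁻¹ := by
    funext t
    field_simp [ne_of_gt (B.hA₁pos (B.h t))]
  have hΦcd : ∀ m : ℕ, ContDiffAt ℝ m (fun t => B.A₂ (y * B.h t)) 1 := by
    intro m
    rw [hΦeq]
    exact (hFcd m).mul ((hφcd m).inv (ne_of_gt (B.hA₁pos _)))
  -- derivatives of the scaled map
  have hDy : deriv (fun t => y * B.h t) 1 = y := by
    rw [deriv_const_mul_field, B.hh1, mul_one]
  have hD2y : deriv (deriv (fun t => y * B.h t)) 1 = y * deriv (deriv B.h) 1 := by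
    rw [deriv_const_mul_field', deriv_const_mul_field]
  -- transfer for A₁
  obtain ⟨T1, T2⟩ := transfer_derivs B.h B.A₁ 1 hhcd hφcd (by rw [B.hh1]; exact one_ne_zero)
  rw [B.hh1] at T1 T2
  -- key identities for A₂
  obtain ⟨I1, I2⟩ : deriv B.A₂ (y * B.h 1) * y = deriv (fun t => B.A₂ (y * B.h t)) 1 ∧
      deriv (deriv B.A₂) (y * B.h 1) * y ^ 2 =
        deriv (deriv (fun t => B.A₂ (y * B.h t))) 1
          - deriv (deriv B.h) 1 * deriv (fun t => B.A₂ (y * B.h t)) 1 := by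
    by_cases hy0 : y = 0
    · rw [hy0]
      norm_num
    · obtain ⟨U1, U2⟩ := transfer_derivs (fun t => y * B.h t) B.A₂ 1
        (fun m => contDiffAt_const.mul (hhcd m)) (fun m => hΦcd m)
        (by rw [hDy]; exact hy0)
      rw [hDy] at U1 U2
      rw [hD2y] at U2
      constructor
      · rw [U1]; field_simp
      · rw [U2]; field_simp; ring
  -- product rule
  obtain ⟨M1, M2⟩ := deriv_mul_pt hφcd hΦcd
  -- termwise differentiation
  have S1 := (series_hasDerivAt hFs 1 hR1).1
  have S2 := (series_hasDerivAt (fun t ht => (series_hasDerivAt hFs t ht).1) 1 hR1).1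
  have S1' : HasSum (fun k : ℕ => ((k + 1 : ℕ) : ℝ) * B.p (k + 1) y)
      (deriv (fun t => B.A₁ (B.h t) * B.A₂ (y * B.h t)) 1) := by
    convert S1 using 1
    funext k
    push_cast
    ring
  have S2' : HasSum (fun k : ℕ => ((k + 2 : ℕ) : ℝ) * (((k + 2 : ℕ) : ℝ) - 1) * B.p (k + 2) y)
      (deriv (deriv (fun t => B.A₁ (B.h t) * B.A₂ (y * B.h t))) 1) := by
    convert S2 using 1
    funext k
    push_cast
    ring
  have G1 : HasSum (fun k : ℕ => (k : ℝ) * B.p k y)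
      (deriv (fun t => B.A₁ (B.h t) * B.A₂ (y * B.h t)) 1) := by
    have := (hasSum_nat_add_iff (f := fun k : ℕ => (k : ℝ) * B.p k y) 1).mp S1'
    simpa using this
  have G2 : HasSum (fun k : ℕ => (k : ℝ) * ((k : ℝ) - 1) * B.p k y)
      (deriv (deriv (fun t => B.A₁ (B.h t) * B.A₂ (y * B.h t))) 1) := by
    have := (hasSum_nat_add_iff (f := fun k : ℕ => (k : ℝ) * ((k : ℝ) - 1) * B.p k y) 2).mp S2'
    simpa [Finset.sum_range_succ] using this
  have key : ((deriv (deriv B.h) 1 + 1) * deriv B.A₁ (B.h 1) + deriv (deriv B.A₁) (B.h 1))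
          * B.A₂ (y * B.h 1)
        + (2 * deriv B.A₁ (B.h 1) + (deriv (deriv B.h) 1 + 1) * B.A₁ (B.h 1))
            * deriv B.A₂ (y * B.h 1) * y
        + B.A₁ (B.h 1) * deriv (deriv B.A₂) (y * B.h 1) * y ^ 2
      = deriv (deriv (fun t => B.A₁ (B.h t) * B.A₂ (y * B.h t))) 1
        + deriv (fun t => B.A₁ (B.h t) * B.A₂ (y * B.h t)) 1 := by
    rw [T1, T2, M1, M2]
    linear_combination (2 * (deriv (fun t => B.A₁ (B.h t)) 1) + (deriv (deriv B.h) 1 + 1)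
        * B.A₁ (B.h 1)) * I1 + B.A₁ (B.h 1) * I2
  rw [key]
  have G := G2.add G1
  convert G using 1
  funext k
  ring
end

section
/- For every n ≥ 1, ν₁, ν₂ ≥ 0 and x ≥ 0, the Stancu-type operator applied to the identity function s ↦ s satisfies L_n^{(ν₁,ν₂)}(s; x) = [A₂'(nx·h(1))·n / (A₂(nx·h(1))·(n+ν₂))]·x + (A₁'(h(1))/A₁(h(1)) + ν₁)·1/(n+ν₂). -/
open Filter Topology Metric

lemma ps_aux {a : ℕ → ℝ} {R : ℝ} (hR : 1 < R) {g : ℝ → ℝ}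
    (hg : ∀ t : ℝ, |t| < R → HasSum (fun k => a k * t ^ k) (g t)) :
    Summable (fun k : ℕ => (k : ℝ) * a k) ∧
      HasStrictDerivAt g (∑' k : ℕ, (k : ℝ) * a k) 1 := by
  set r : ℝ := 1 + (R - 1) / 3 with hrdef
  set ρ : ℝ := 1 + 2 * ((R - 1) / 3) with hρdef
  have hR1 : 0 < R - 1 := by linarith
  have h1r : 1 < r := by rw [hrdef]; linarith
  have hr0 : 0 < r := by linarith
  have hrρ : r < ρ := by rw [hrdef, hρdef]; linarith
  have hρR : ρ < R := by rw [hρdef]; linarith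
  have hρ0 : 0 < ρ := by linarith
  -- boundedness of |a k| * ρ ^ k
  have hsρ : Summable (fun k => a k * ρ ^ k) :=
    (hg ρ (by rw [abs_of_pos hρ0]; exact hρR)).summable
  obtain ⟨C, hC⟩ : ∃ C : ℝ, ∀ k : ℕ, |a k| * ρ ^ k ≤ C := by
    have ht : Tendsto (fun k => |a k| * ρ ^ k) atTop (𝓝 0) := by
      have := hsρ.tendsto_atTop_zero.abs
      simpa [abs_mul, abs_of_pos hρ0, abs_pow] using this
    obtain ⟨C, hC⟩ := ht.bddAbove_range
    exact ⟨C, fun k => hC ⟨k, rfl⟩⟩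
  have hCρ : ∀ k : ℕ, |a k| ≤ C / ρ ^ k := fun k =>
    (le_div_iff₀ (pow_pos hρ0 k)).2 (hC k)
  have hC0 : 0 ≤ C := le_trans (by positivity) (hC 0)
  -- the dominating series
  set u : ℕ → ℝ := fun k => C / r * ((k : ℝ) * (r / ρ) ^ k) with hudef
  have hq : |r / ρ| < 1 := by
    rw [abs_of_pos (by positivity)]
    rw [div_lt_one hρ0]; exact hrρ
  have hu : Summable u := by
    have := (summable_pow_mul_geometric_of_norm_lt_one 1 (by simpa using hq)).mul_left (C / r)
    simpa [hudef] using this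
  -- the bound
  have hbound : ∀ (k : ℕ) (y : ℝ), y ∈ ball (0 : ℝ) r →
      ‖a k * ((k : ℝ) * y ^ (k - 1))‖ ≤ u k := by
    intro k y hy
    have hyr : |y| ≤ r := le_of_lt (by simpa [Real.norm_eq_abs] using mem_ball_zero_iff.1 hy)
    cases k with
    | zero => simp [hudef]
    | succ m =>
      have h1 : ‖a (m + 1) * (((m : ℝ) + 1) * y ^ m)‖
          = |a (m + 1)| * (((m : ℝ) + 1) * |y| ^ m) := by
        rw [Real.norm_eq_abs, abs_mul, abs_mul, abs_pow,
          abs_of_nonneg (by positivity : (0:ℝ) ≤ (m : ℝ) + 1)]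
      have h2 : |a (m + 1)| * (((m : ℝ) + 1) * |y| ^ m)
          ≤ (C / ρ ^ (m + 1)) * (((m : ℝ) + 1) * r ^ m) := by
        have hym : |y| ^ m ≤ r ^ m := pow_le_pow_left₀ (abs_nonneg y) hyr m
        exact mul_le_mul (hCρ (m + 1)) (mul_le_mul_of_nonneg_left hym (by positivity))
          (by positivity) (by positivity)
      have h3 : (C / ρ ^ (m + 1)) * (((m : ℝ) + 1) * r ^ m) = u (m + 1) := by
        rw [hudef]
        have : (r / ρ) ^ (m + 1) = r ^ (m + 1) / ρ ^ (m + 1) := div_pow r ρ (m + 1)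
        field_simp
        rw [this]; push_cast; field_simp; ring
      push_cast
      push_cast at h1 h2 h3
      rw [h1]
      rw [h3] at h2
      exact h2
  have hderiv : ∀ (k : ℕ) (y : ℝ), y ∈ ball (0 : ℝ) r →
      HasDerivAt (fun z : ℝ => a k * z ^ k) (a k * ((k : ℝ) * y ^ (k - 1))) y :=
    fun k y _ => (hasDerivAt_pow k y).const_mul (a k)
  have hmem1 : (1 : ℝ) ∈ ball (0 : ℝ) r := by
    simpa [Real.norm_eq_abs] using (mem_ball_zero_iff (a := (1:ℝ))).2 (by rw [norm_one]; exact h1r)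
  have hg0 : Summable (fun k => a k * (1 : ℝ) ^ k) :=
    (hg 1 (by rw [abs_one]; linarith)).summable
  have key : ∀ y ∈ ball (0 : ℝ) r, HasDerivAt (fun z : ℝ => ∑' k : ℕ, a k * z ^ k)
      (∑' k : ℕ, a k * ((k : ℝ) * y ^ (k - 1))) y := fun y hy =>
    hasDerivAt_tsum_of_isPreconnected hu isOpen_ball (convex_ball (0:ℝ) r).isPreconnected
      hderiv hbound hmem1 hg0 hy
  have heq : Set.EqOn g (fun z : ℝ => ∑' k : ℕ, a k * z ^ k) (ball (0 : ℝ) r) := by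
    intro z hz
    have hzR : |z| < R := by
      have := mem_ball_zero_iff.1 hz
      rw [Real.norm_eq_abs] at this
      linarith
    exact ((hg z hzR).tsum_eq).symm
  have hgderiv : ∀ y ∈ ball (0 : ℝ) r,
      HasDerivAt g (∑' k : ℕ, a k * ((k : ℝ) * y ^ (k - 1))) y := fun y hy =>
    (key y hy).congr_of_eventuallyEq (heq.eventuallyEq_of_mem (isOpen_ball.mem_nhds hy))
  -- continuity of the derivative
  have hScont : ContinuousAt (fun y : ℝ => ∑' k : ℕ, a k * ((k : ℝ) * y ^ (k - 1))) 1 := by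
    have hcont : ContinuousOn (fun y : ℝ => ∑' k : ℕ, a k * ((k : ℝ) * y ^ (k - 1)))
        (ball (0 : ℝ) r) := by
      refine (tendstoUniformlyOn_tsum hu hbound).continuousOn
        (Filter.Eventually.of_forall fun N => ?_).frequently
      exact (continuous_finset_sum _ fun i _ =>
        (continuous_const.mul (continuous_const.mul (continuous_pow (i - 1))))).continuousOn
    exact hcont.continuousAt (isOpen_ball.mem_nhds hmem1)
  have hstrict : HasStrictDerivAt g (∑' k : ℕ, a k * ((k : ℝ) * (1:ℝ) ^ (k - 1))) 1 := by
    refine hasStrictDerivAt_of_hasDerivAt_of_continuousAt ?_ hScont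
    filter_upwards [isOpen_ball.mem_nhds hmem1] with y hy using hgderiv y hy
  have hsumval : (∑' k : ℕ, a k * ((k : ℝ) * (1:ℝ) ^ (k - 1))) = ∑' k : ℕ, (k : ℝ) * a k :=
    tsum_congr fun k => by rw [one_pow, mul_one, mul_comm]
  constructor
  · refine Summable.of_norm_bounded hu fun k => ?_
    have := hbound k 1 hmem1
    simpa [mul_comm] using this
  · rwa [hsumval] at hstrict

lemma deriv_comp_inverse {φ : ℝ → ℝ} {c : ℝ} (hc : c ≠ 0) (hφ : HasStrictDerivAt φ c 1)
    {A G : ℝ → ℝ} (hAG : ∀ t, G t = A (φ t)) {G' : ℝ} (hG : HasDerivAt G G' 1) :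
    deriv A (φ 1) = G' / c := by
  have hf := hφ.hasStrictFDerivAt_equiv hc
  have hinv : HasStrictDerivAt (hφ.localInverse φ c 1 hc) c⁻¹ (φ 1) := hφ.to_localInverse hc
  have hright : ∀ᶠ u in 𝓝 (φ 1), φ (hφ.localInverse φ c 1 hc u) = u :=
    hf.eventually_right_inverse
  have hg1 : hφ.localInverse φ c 1 hc (φ 1) = 1 := hf.localInverse_apply_image
  have hGd : HasDerivAt G G' (hφ.localInverse φ c 1 hc (φ 1)) := by rw [hg1]; exact hG
  have hcomp : HasDerivAt (G ∘ hφ.localInverse φ c 1 hc) (G' * c⁻¹) (φ 1) :=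
    HasDerivAt.comp (φ 1) hGd hinv.hasDerivAt
  have hA : HasDerivAt A (G' * c⁻¹) (φ 1) := by
    refine hcomp.congr_of_eventuallyEq ?_
    filter_upwards [hright] with u hu
    show A u = G (hφ.localInverse φ c 1 hc u)
    rw [hAG, hu]
  rw [hA.deriv, div_eq_mul_inv]

/-- `L_n^{(ν₁,ν₂)}(s; x)` formula. -/
theorem stancuL_id (B : BrenkeData) (ν₁ ν₂ : ℝ) (hν₁ : 0 ≤ ν₁) (hν₂ : 0 ≤ ν₂)
    (n : ℕ) (hn : 1 ≤ n) (x : ℝ) (hx : 0 ≤ x) :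
    stancuL B ν₁ ν₂ n (fun s => s) x =
      deriv B.A₂ (n * x * B.h 1) * n / (B.A₂ (n * x * B.h 1) * (n + ν₂)) * x
        + (deriv B.A₁ (B.h 1) / B.A₁ (B.h 1) + ν₁) * (1 / (n + ν₂)) := by
  have hn1 : (1:ℝ) ≤ (n:ℝ) := by exact_mod_cast hn
  have hD : (0:ℝ) < (n:ℝ) + ν₂ := by linarith
  have h1R : |(1:ℝ)| < B.R := by rw [abs_one]; exact B.hR
  rw [stancuL]
  set y : ℝ := (n:ℝ) * x with hy
  -- strict derivative of h at 1 with value 1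
  obtain ⟨-, hhd⟩ := ps_aux B.hR B.hh
  have hh1 : HasStrictDerivAt B.h 1 1 := by
    have hd := hhd.hasDerivAt.deriv
    rw [B.hh1] at hd
    rwa [← hd] at hhd
  -- the series P = A₁ ∘ h
  have hPs : ∀ t : ℝ, |t| < B.R → HasSum (fun k => (B.p k 0 / B.A₂ 0) * t ^ k)
      (B.A₁ (B.h t)) := by
    intro t ht
    have h0 := B.hgen 0 t ht
    simp only [zero_mul] at h0
    have h2 : (fun k => B.p k 0 / B.A₂ 0 * t ^ k) = fun k => B.p k 0 * t ^ k / B.A₂ 0 :=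
      funext fun k => by ring
    have h3 : B.A₁ (B.h t) = B.A₁ (B.h t) * B.A₂ 0 / B.A₂ 0 :=
      (mul_div_cancel_right₀ _ (B.hA₂pos 0).ne').symm
    rw [h2, h3]
    exact h0.div_const _
  obtain ⟨hPsum, hPd⟩ := ps_aux B.hR hPs
  -- the series F
  obtain ⟨hFsum, hFd⟩ := ps_aux (g := fun t => B.A₁ (B.h t) * B.A₂ (y * B.h t)) B.hR
    (fun t ht => B.hgen y t ht)
  set P' : ℝ := ∑' k : ℕ, (k:ℝ) * (B.p k 0 / B.A₂ 0) with hP'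
  set F' : ℝ := ∑' k : ℕ, (k:ℝ) * B.p k y with hF'
  set P1 : ℝ := B.A₁ (B.h 1) with hP1
  set Q1 : ℝ := B.A₂ (y * B.h 1) with hQ1
  have hP1pos : 0 < P1 := B.hA₁pos _
  have hQ1pos : 0 < Q1 := B.hA₂pos _
  -- deriv A₁
  have hdA1 : deriv B.A₁ (B.h 1) = P' := by
    have := deriv_comp_inverse one_ne_zero hh1 (A := B.A₁)
      (G := fun t => B.A₁ (B.h t)) (fun t => rfl) hPd.hasDerivAt
    simpa using this
  -- key : F' = deriv A₁ (h 1) * Q1 + P1 * (deriv A₂ (y * h 1) * y)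
  have key : F' = deriv B.A₁ (B.h 1) * Q1 + P1 * (deriv B.A₂ (y * B.h 1) * y) := by
    rcases eq_or_ne y 0 with hy0 | hyne
    · have hFd' := hFd
      rw [hy0] at hFd'
      simp only [zero_mul] at hFd'
      have hprod : HasDerivAt (fun t => B.A₁ (B.h t) * B.A₂ 0) (P' * B.A₂ 0) 1 :=
        hPd.hasDerivAt.mul_const _
      have := hFd'.hasDerivAt.unique hprod
      rw [this, hdA1, hQ1, hy0]
      simp
    · -- the quotient Q = F / P
      have hPne : ∀ t, B.A₁ (B.h t) ≠ 0 := fun t => (B.hA₁pos _).ne'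
      have hQfun : (fun t => B.A₂ (y * B.h t)) =
          fun t => (B.A₁ (B.h t) * B.A₂ (y * B.h t)) / B.A₁ (B.h t) := by
        funext t
        rw [mul_comm (B.A₁ (B.h t)) _, mul_div_assoc, div_self (hPne t), mul_one]
      have hQd : HasDerivAt (fun t => B.A₂ (y * B.h t))
          ((F' * P1 - (P1 * Q1) * P') / P1 ^ 2) 1 := by
        rw [hQfun]
        exact hFd.hasDerivAt.div hPd.hasDerivAt (hPne 1)
      set Q' : ℝ := (F' * P1 - (P1 * Q1) * P') / P1 ^ 2 with hQ'def
      have hψ : HasStrictDerivAt (fun t => y * B.h t) y 1 := by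
        have := hh1.const_mul y
        simpa using this
      have hdA2 : deriv B.A₂ (y * B.h 1) = Q' / y :=
        deriv_comp_inverse hyne hψ (A := B.A₂) (G := fun t => B.A₂ (y * B.h t))
          (fun t => rfl) hQd
      have hprod : HasDerivAt (fun t => B.A₁ (B.h t) * B.A₂ (y * B.h t))
          (P' * Q1 + P1 * Q') 1 := hPd.hasDerivAt.mul hQd
      have hFeq : F' = P' * Q1 + P1 * Q' := hFd.hasDerivAt.unique hprod
      rw [hdA1, hdA2, div_mul_cancel₀ _ hyne]
      exact hFeq
  -- summability facts at t = 1
  have hS0 : Summable (fun k => B.p k y) := by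
    have := (B.hgen y 1 h1R).summable
    simpa using this
  have hT0 : ∑' k : ℕ, B.p k y = P1 * Q1 := by
    have := (B.hgen y 1 h1R).tsum_eq
    simpa using this
  -- the tsum computation
  have htsum : ∑' k : ℕ, B.p k y * ((k + ν₁) / ((n:ℝ) + ν₂)) =
      F' * (1 / ((n:ℝ) + ν₂)) + (P1 * Q1) * (ν₁ * (1 / ((n:ℝ) + ν₂))) := by
    rw [← hT0, hF']
    rw [show (fun k : ℕ => B.p k y * ((k + ν₁) / ((n:ℝ) + ν₂))) =
        fun k : ℕ => ((k:ℝ) * B.p k y) * (1 / ((n:ℝ) + ν₂))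
          + B.p k y * (ν₁ * (1 / ((n:ℝ) + ν₂))) from funext fun k => by
      field_simp]
    rw [Summable.tsum_add (hFsum.mul_right _) (hS0.mul_right _), tsum_mul_right, tsum_mul_right]
  rw [htsum, key, hy]
  field_simp
  ring
end

section
/- For every n ≥ 1, ν₁, ν₂ ≥ 0 and x ≥ 0, the Stancu-type operator applied to s ↦ s² satisfies L_n^{(ν₁,ν₂)}(s²; x) = [A₂''(nx·h(1))·n² / (A₂(nx·h(1))·(n+ν₂)²)]·x² + {[(1+2ν₁+h''(1))·A₁(h(1)) + 2A₁'(h(1))]·A₂'(nx·h(1))·n / [A₁(h(1))·A₂(nx·h(1))·(n+ν₂)²]}·x + [ν₁²·A₁(h(1)) + (1+2ν₁+h''(1))·A₁'(h(1)) + A₁''(h(1))] / [A₁(h(1))·(n+ν₂)²]. -/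
open Filter Topology


private lemma geom_aux {q : ℝ} (hq0 : 0 ≤ q) (hq1 : q < 1) :
    Summable (fun k : ℕ => ((k : ℝ) + 1) * q ^ k) := by
  have h1 : Summable (fun k : ℕ => (k : ℝ) ^ 1 * q ^ k) :=
    summable_pow_mul_geometric_of_norm_lt_one 1 (by rwa [Real.norm_eq_abs, abs_of_nonneg hq0])
  have h2 : Summable (fun k : ℕ => q ^ k) := summable_geometric_of_lt_one hq0 hq1
  have := h1.add h2
  refine this.congr fun k => by ring

private lemma coeff_bound {a : ℕ → ℝ} {f : ℝ → ℝ} {R : ℝ}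
    (hf : ∀ t : ℝ, |t| < R → HasSum (fun k => a k * t ^ k) (f t))
    {r : ℝ} (hr0 : 0 ≤ r) (hrR : r < R) :
    Summable (fun k : ℕ => ((k : ℝ) + 1) * |a (k + 1)| * r ^ k) := by
  set ρ := (r + R) / 2 with hρdef
  have hρr : r < ρ := by simp only [hρdef]; linarith
  have hρR : ρ < R := by simp only [hρdef]; linarith
  have hρ0 : 0 < ρ := lt_of_le_of_lt hr0 hρr
  clear_value ρ
  have hsum := (hf ρ (by rwa [abs_of_pos hρ0])).summable
  have htend : Tendsto (fun k : ℕ => |a k * ρ ^ k|) atTop (𝓝 0) := by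
    simpa using hsum.tendsto_atTop_zero.abs
  obtain ⟨C, hC⟩ := htend.bddAbove_range
  have hCb : ∀ k : ℕ, |a k| * ρ ^ k ≤ C := by
    intro k
    have := hC (Set.mem_range_self k)
    rwa [abs_mul, abs_pow, abs_of_pos hρ0] at this
  have hq : r / ρ < 1 := (div_lt_one hρ0).2 hρr
  have hq0 : 0 ≤ r / ρ := div_nonneg hr0 hρ0.le
  have hgeo := (geom_aux hq0 hq).mul_left (C / ρ)
  refine Summable.of_nonneg_of_le (fun k => by positivity) (fun k => ?_) hgeo
  have h1 : |a (k + 1)| ≤ C / ρ ^ (k + 1) :=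
    (le_div_iff₀ (pow_pos hρ0 _)).2 (hCb (k + 1))
  calc ((k : ℝ) + 1) * |a (k + 1)| * r ^ k
      ≤ ((k : ℝ) + 1) * (C / ρ ^ (k + 1)) * r ^ k := by
        apply mul_le_mul_of_nonneg_right
          (mul_le_mul_of_nonneg_left h1 (by positivity)) (by positivity)
    _ = C / ρ * (((k : ℝ) + 1) * (r / ρ) ^ k) := by
        rw [div_pow]
        field_simp
        ring


private lemma ps_step {a : ℕ → ℝ} {f : ℝ → ℝ} {R : ℝ}
    (hf : ∀ t : ℝ, |t| < R → HasSum (fun k => a k * t ^ k) (f t)) :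
    ∃ g : ℝ → ℝ, (∀ t : ℝ, |t| < R → HasSum (fun k : ℕ => ((k : ℝ) + 1) * a (k + 1) * t ^ k) (g t)) ∧
      ∀ t : ℝ, |t| < R → HasDerivAt f (g t) t := by
  have hsum : ∀ t : ℝ, |t| < R → Summable (fun k : ℕ => ((k : ℝ) + 1) * a (k + 1) * t ^ k) := by
    intro t ht
    apply Summable.of_norm
    refine (coeff_bound hf (abs_nonneg t) ht).congr fun k => ?_
    simp [abs_mul, abs_pow, abs_of_nonneg (by positivity : (0:ℝ) ≤ (k:ℝ) + 1)]
  refine ⟨fun t => ∑' k : ℕ, ((k : ℝ) + 1) * a (k + 1) * t ^ k, fun t ht => (hsum t ht).hasSum, ?_⟩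
  intro t ht
  set r' := (|t| + R) / 2 with hr'def
  have h1 : |t| < r' := by simp only [hr'def]; linarith [abs_nonneg t, lt_of_le_of_lt (abs_nonneg t) ht]
  have h2 : r' < R := by simp only [hr'def]; linarith
  have h0 : 0 ≤ r' := le_trans (abs_nonneg t) h1.le
  clear_value r'
  have husum : Summable (fun k : ℕ => |a k| * ((k : ℝ) * r' ^ (k - 1))) := by
    rw [← summable_nat_add_iff 1]
    refine (coeff_bound hf h0 h2).congr fun k => ?_
    push_cast [Nat.add_sub_cancel]
    ring
  have hmem : t ∈ Metric.ball (0 : ℝ) r' := by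
    simpa [Real.norm_eq_abs] using h1
  have hder := hasDerivAt_tsum_of_isPreconnected husum Metric.isOpen_ball
    ((convex_ball (0:ℝ) r').isPreconnected)
    (g := fun (k : ℕ) (z : ℝ) => a k * z ^ k)
    (g' := fun (k : ℕ) (z : ℝ) => a k * ((k : ℝ) * z ^ (k - 1)))
    (fun k y _ => (hasDerivAt_pow k y).const_mul (a k))
    (fun k y hy => ?_) hmem ((hf t ht).summable) hmem
  · -- convert the function and the value
    set S := ∑' k : ℕ, ((k : ℝ) + 1) * a (k + 1) * t ^ k with hSdef
    have hval : HasSum (fun k : ℕ => a k * ((k : ℝ) * t ^ (k - 1))) S := by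
      have h1' : HasSum (fun k : ℕ => ((k : ℝ) + 1) * a (k + 1) * t ^ k) S := (hsum t ht).hasSum
      clear_value S
      rw [show (fun k : ℕ => ((k : ℝ) + 1) * a (k + 1) * t ^ k)
          = (fun k : ℕ => a (k + 1) * (((k + 1 : ℕ) : ℝ) * t ^ (k + 1 - 1))) from
          funext fun k => by push_cast [Nat.add_sub_cancel]; ring] at h1'
      have h3' := (hasSum_nat_add_iff (f := fun k : ℕ => a k * ((k : ℝ) * t ^ (k - 1))) 1).1 h1'
      simpa using h3'
    show HasDerivAt f S t
    rw [← hval.tsum_eq]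
    apply hder.congr_of_eventuallyEq
    have hball : {z : ℝ | |z| < R} ∈ 𝓝 t := by
      have : IsOpen {z : ℝ | |z| < R} := isOpen_lt continuous_abs continuous_const
      exact this.mem_nhds ht
    filter_upwards [hball] with z hz
    exact ((hf z hz).tsum_eq).symm
  · -- the bound
    rw [Real.norm_eq_abs, abs_mul, abs_mul, abs_pow]
    rw [mem_ball_zero_iff, Real.norm_eq_abs] at hy
    have : |(k : ℝ)| = (k : ℝ) := abs_of_nonneg (Nat.cast_nonneg k)
    rw [this]
    apply mul_le_mul_of_nonneg_left _ (abs_nonneg _)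
    exact mul_le_mul_of_nonneg_left (pow_le_pow_left₀ (abs_nonneg _) hy.le _) (Nat.cast_nonneg k)
private lemma ps_contDiffOn {a : ℕ → ℝ} {f : ℝ → ℝ} {R : ℝ}
    (hf : ∀ t : ℝ, |t| < R → HasSum (fun k : ℕ => a k * t ^ k) (f t)) :
    ContDiffOn ℝ 2 f {t : ℝ | |t| < R} := by
  obtain ⟨g1, hs1, hd1⟩ := ps_step hf
  obtain ⟨g2, hs2, hd2⟩ := ps_step hs1
  obtain ⟨g3, _, hd3⟩ := ps_step hs2
  have hopen : IsOpen {t : ℝ | |t| < R} := isOpen_lt continuous_abs continuous_const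
  rw [show (2 : WithTop ℕ∞) = 1 + 1 by norm_num, contDiffOn_succ_iff_deriv_of_isOpen hopen]
  refine ⟨fun t ht => (hd1 t ht).differentiableAt.differentiableWithinAt, by simp, ?_⟩
  have hderiv1 : ∀ t ∈ {t : ℝ | |t| < R}, deriv f t = g1 t := fun t ht => (hd1 t ht).deriv
  refine ContDiffOn.congr ?_ hderiv1
  rw [show (1 : WithTop ℕ∞) = 0 + 1 by norm_num, contDiffOn_succ_iff_deriv_of_isOpen hopen]
  refine ⟨fun t ht => (hd2 t ht).differentiableAt.differentiableWithinAt, by simp, ?_⟩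
  have hderiv2 : ∀ t ∈ {t : ℝ | |t| < R}, deriv g1 t = g2 t := fun t ht => (hd2 t ht).deriv
  refine ContDiffOn.congr ?_ hderiv2
  rw [contDiffOn_zero]
  exact fun t ht => (hd3 t ht).continuousAt.continuousWithinAt


private lemma key_chain (A f E f₁ e₁ : ℝ → ℝ) (k₂ v : ℝ)
    (hEA : ∀ t, E t = A (f t))
    (hfc : ContDiffAt ℝ 2 f 1)
    (hf₁ : ∀ᶠ t in 𝓝 (1 : ℝ), HasDerivAt f (f₁ t) t)
    (hf₂ : HasDerivAt f₁ k₂ 1)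
    (hm : f₁ 1 ≠ 0)
    (hEc : ContDiffAt ℝ 2 E 1)
    (he₁ : ∀ᶠ t in 𝓝 (1 : ℝ), HasDerivAt E (e₁ t) t)
    (he₂ : HasDerivAt e₁ v 1) :
    deriv A (f 1) * f₁ 1 = e₁ 1 ∧
      deriv (deriv A) (f 1) * f₁ 1 ^ 2 = v - deriv A (f 1) * k₂ := by
  have hfd1 : HasDerivAt f (f₁ 1) 1 := hf₁.self_of_nhds
  have hn : (2 : WithTop ℕ∞) ≠ 0 := by norm_num
  have hf'F := hfd1.hasFDerivAt_equiv hm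
  set τ := hfc.localInverse hf'F hn with hτdef
  have htauC : ContDiffAt ℝ 2 τ (f 1) := hfc.to_localInverse hf'F hn
  have htau1 : τ (f 1) = 1 := hfc.localInverse_apply_image hf'F hn
  have hrinv : ∀ᶠ y in 𝓝 (f 1), f (τ y) = y :=
    (hfc.hasStrictFDerivAt' hf'F hn).eventually_right_inverse
  have hAE : A =ᶠ[𝓝 (f 1)] E ∘ τ := by
    filter_upwards [hrinv] with y hy
    simp only [Function.comp_apply, hEA, hy]
  have hAc : ContDiffAt ℝ 2 A (f 1) := by
    have : ContDiffAt ℝ 2 (E ∘ τ) (f 1) := (htau1 ▸ hEc).comp (f 1) htauC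
    exact this.congr_of_eventuallyEq hAE
  -- eventual differentiability of A near f 1
  have hAd : ∀ᶠ y in 𝓝 (f 1), DifferentiableAt ℝ A y :=
    (hAc.eventually (by norm_num)).mono fun y hy => hy.differentiableAt (by norm_num)
  -- differentiability of deriv A at f 1
  have hdA : DifferentiableAt ℝ (deriv A) (f 1) := by
    have : ContDiffAt ℝ 1 (deriv A) (f 1) := by
      have := hAc.fderiv_right (m := 1) (by norm_num)
      -- deriv = fderiv applied to 1
      have hde : (deriv A) = fun y => fderiv ℝ A y 1 := by
        funext y; rfl
      rw [hde]
      exact (ContinuousLinearMap.apply ℝ ℝ (1:ℝ)).contDiff.contDiffAt.comp _ this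
    exact this.differentiableAt one_ne_zero
  have hEAd : ∀ᶠ t in 𝓝 (1 : ℝ), HasDerivAt E (deriv A (f t) * f₁ t) t := by
    filter_upwards [hf₁, hfc.continuousAt.eventually hAd] with t h1 h2
    have := (h2.hasDerivAt.comp t h1)
    have hEfun : E = fun s => A (f s) := funext hEA
    rw [hEfun]
    exact this
  have hew : e₁ =ᶠ[𝓝 (1 : ℝ)] fun t => deriv A (f t) * f₁ t := by
    filter_upwards [he₁, hEAd] with t h1 h2
    exact h1.unique h2
  have h1v : e₁ 1 = deriv A (f 1) * f₁ 1 := hew.self_of_nhds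
  have hw : HasDerivAt (fun t => deriv A (f t) * f₁ t)
      (deriv (deriv A) (f 1) * f₁ 1 * f₁ 1 + deriv A (f 1) * k₂) 1 := by
    have hc1 : HasDerivAt (fun t => deriv A (f t)) (deriv (deriv A) (f 1) * f₁ 1) 1 :=
      (hdA.hasDerivAt.comp 1 hfd1)
    exact hc1.mul hf₂
  have he₂' : HasDerivAt (fun t => deriv A (f t) * f₁ t) v 1 :=
    he₂.congr_of_eventuallyEq hew.symm
  have hveq : v = deriv (deriv A) (f 1) * f₁ 1 * f₁ 1 + deriv A (f 1) * k₂ := he₂'.unique hw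
  constructor
  · rw [h1v]
  · rw [hveq]; ring


private lemma moment_sum {R : ℝ} (hR : 1 < R) {q : ℕ → ℝ} {f g1 g2 : ℝ → ℝ}
    (h0 : ∀ t : ℝ, |t| < R → HasSum (fun k : ℕ => q k * t ^ k) (f t))
    (h1 : ∀ t : ℝ, |t| < R → HasSum (fun k : ℕ => ((k : ℝ) + 1) * q (k + 1) * t ^ k) (g1 t))
    (h2 : ∀ t : ℝ, |t| < R → HasSum
      (fun k : ℕ => ((k : ℝ) + 1) * ((((k + 1 : ℕ) : ℝ) + 1) * q (k + 1 + 1)) * t ^ k) (g2 t))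
    (ν₁ c : ℝ) (hc : c ≠ 0) :
    HasSum (fun k : ℕ => q k * (((k : ℝ) + ν₁) / c) ^ 2)
      ((g2 1 + (1 + 2 * ν₁) * g1 1 + ν₁ ^ 2 * f 1) / c ^ 2) := by
  have h1R : |(1 : ℝ)| < R := by rwa [abs_one]
  have hS0 : HasSum (fun k : ℕ => q k) (f 1) := by simpa using h0 1 h1R
  have hS1 : HasSum (fun k : ℕ => (k : ℝ) * q k) (g1 1) := by
    have ha := h1 1 h1R
    simp only [one_pow, mul_one] at ha
    rw [show (fun k : ℕ => ((k : ℝ) + 1) * q (k + 1))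
        = fun k : ℕ => (fun m : ℕ => (m : ℝ) * q m) (k + 1) from
        funext fun k => by push_cast; ring] at ha
    have := (hasSum_nat_add_iff (f := fun m : ℕ => (m : ℝ) * q m) 1).1 ha
    simpa using this
  have hS2 : HasSum (fun k : ℕ => (k : ℝ) * ((k : ℝ) - 1) * q k) (g2 1) := by
    have ha := h2 1 h1R
    simp only [one_pow, mul_one] at ha
    rw [show (fun k : ℕ => ((k : ℝ) + 1) * ((((k + 1 : ℕ) : ℝ) + 1) * q (k + 1 + 1)))
        = fun k : ℕ => (fun m : ℕ => (m : ℝ) * ((m : ℝ) - 1) * q m) (k + 2) from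
        funext fun k => by push_cast; ring] at ha
    have := (hasSum_nat_add_iff (f := fun m : ℕ => (m : ℝ) * ((m : ℝ) - 1) * q m) 2).1 ha
    simpa [Finset.sum_range_succ] using this
  have hcomb := ((hS2.add (hS1.mul_left (1 + 2 * ν₁))).add (hS0.mul_left (ν₁ ^ 2))).div_const
    (c ^ 2)
  rw [show (fun k : ℕ => ((k : ℝ) * ((k : ℝ) - 1) * q k + (1 + 2 * ν₁) * ((k : ℝ) * q k)
      + ν₁ ^ 2 * q k) / c ^ 2) = fun k : ℕ => q k * (((k : ℝ) + ν₁) / c) ^ 2 from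
      funext fun k => by field_simp; ring] at hcomb
  convert hcomb using 1



/-- `L_n^{(ν₁,ν₂)}(s²; x)` formula. -/
theorem stancuL_sq (B : BrenkeData) (ν₁ ν₂ : ℝ) (hν₁ : 0 ≤ ν₁) (hν₂ : 0 ≤ ν₂)
    (n : ℕ) (hn : 1 ≤ n) (x : ℝ) (hx : 0 ≤ x) :
    stancuL B ν₁ ν₂ n (fun s => s ^ 2) x =
      deriv (deriv B.A₂) (n * x * B.h 1) * n ^ 2
          / (B.A₂ (n * x * B.h 1) * (n + ν₂) ^ 2) * x ^ 2
        + ((1 + 2 * ν₁ + deriv (deriv B.h) 1) * B.A₁ (B.h 1) + 2 * deriv B.A₁ (B.h 1))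
            * deriv B.A₂ (n * x * B.h 1) * n
            / (B.A₁ (B.h 1) * B.A₂ (n * x * B.h 1) * (n + ν₂) ^ 2) * x
        + (ν₁ ^ 2 * B.A₁ (B.h 1) + (1 + 2 * ν₁ + deriv (deriv B.h) 1) * deriv B.A₁ (B.h 1)
            + deriv (deriv B.A₁) (B.h 1)) / (B.A₁ (B.h 1) * (n + ν₂) ^ 2) := by
  have h1R : |(1 : ℝ)| < B.R := by rw [abs_one]; exact B.hR
  have hopen : IsOpen {t : ℝ | |t| < B.R} := isOpen_lt continuous_abs continuous_const
  have hball : {t : ℝ | |t| < B.R} ∈ 𝓝 (1 : ℝ) := hopen.mem_nhds h1R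
  have hnpos : (0 : ℝ) < (n : ℝ) := by exact_mod_cast Nat.pos_of_ne_zero (by omega)
  have hcpos : (0 : ℝ) < (n : ℝ) + ν₂ := by linarith
  have hA20 : B.A₂ 0 ≠ 0 := (B.hA₂pos 0).ne'
  -- machinery for h
  obtain ⟨h1f, hh1s, hh1d⟩ := ps_step B.hh
  obtain ⟨h2f, hh2s, hh2d⟩ := ps_step hh1s
  have hch : ContDiffAt ℝ 2 B.h 1 := (ps_contDiffOn B.hh).contDiffAt hball
  have hh1v : h1f 1 = 1 := by
    have := (hh1d 1 h1R).deriv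
    rw [B.hh1] at this
    exact this.symm
  have hdh2 : deriv (deriv B.h) 1 = h2f 1 := by
    have hev : deriv B.h =ᶠ[𝓝 (1 : ℝ)] h1f := by
      filter_upwards [hball] with t ht
      exact (hh1d t ht).deriv
    rw [hev.deriv_eq]
    exact (hh2d 1 h1R).deriv
  have hh1ev : ∀ᶠ t in 𝓝 (1 : ℝ), HasDerivAt B.h (h1f t) t := by
    filter_upwards [hball] with t ht
    exact hh1d t ht
  -- machinery for fF
  set fF : ℝ → ℝ := fun t => B.A₁ (B.h t) * B.A₂ 0 with hfFdef
  have hfFs : ∀ t : ℝ, |t| < B.R → HasSum (fun k : ℕ => B.p k 0 * t ^ k) (fF t) := by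
    intro t ht
    simpa [hfFdef] using B.hgen 0 t ht
  obtain ⟨F1, hF1s, hF1d⟩ := ps_step hfFs
  obtain ⟨F2, hF2s, hF2d⟩ := ps_step hF1s
  have hcF : ContDiffAt ℝ 2 fF 1 := (ps_contDiffOn hfFs).contDiffAt hball
  have hfF1 : fF 1 = B.A₁ (B.h 1) * B.A₂ 0 := rfl
  -- key chain for A₁
  have KA1 := key_chain B.A₁ B.h (fun t => fF t / B.A₂ 0) h1f (fun t => F1 t / B.A₂ 0)
    (h2f 1) (F2 1 / B.A₂ 0)
    (fun t => by rw [hfFdef]; field_simp)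
    hch hh1ev (hh2d 1 h1R) (by rw [hh1v]; exact one_ne_zero)
    (hcF.div_const _)
    (by filter_upwards [hball] with t ht; exact (hF1d t ht).div_const _)
    ((hF2d 1 h1R).div_const _)
  have e_dA1 : deriv B.A₁ (B.h 1) = F1 1 / B.A₂ 0 := by
    have := KA1.1
    rwa [hh1v, mul_one] at this
  have e_ddA1 : deriv (deriv B.A₁) (B.h 1) = F2 1 / B.A₂ 0 - F1 1 / B.A₂ 0 * h2f 1 := by
    have := KA1.2
    rwa [hh1v, one_pow, mul_one, e_dA1] at this
  rcases eq_or_lt_of_le hx with hx0 | hxpos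
  · -- case x = 0
    subst hx0
    have hM := moment_sum B.hR hfFs hF1s hF2s ν₁ ((n : ℝ) + ν₂) hcpos.ne'
    simp only [stancuL, mul_zero, zero_mul]
    rw [hM.tsum_eq, e_dA1, e_ddA1, hdh2, hfF1]
    have hA1 : B.A₁ (B.h 1) ≠ 0 := (B.hA₁pos _).ne'
    field_simp
    ring
  · -- case x > 0
    set x₀ : ℝ := (n : ℝ) * x with hx₀def
    have hx₀ : x₀ ≠ 0 := by rw [hx₀def]; positivity
    set fg : ℝ → ℝ := fun t => B.A₁ (B.h t) * B.A₂ (x₀ * B.h t) with hfgdef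
    have hgs : ∀ t : ℝ, |t| < B.R → HasSum (fun k : ℕ => B.p k x₀ * t ^ k) (fg t) :=
      fun t ht => B.hgen x₀ t ht
    obtain ⟨G1, hG1s, hG1d⟩ := ps_step hgs
    obtain ⟨G2, hG2s, hG2d⟩ := ps_step hG1s
    have hcg : ContDiffAt ℝ 2 fg 1 := (ps_contDiffOn hgs).contDiffAt hball
    have hfFne : ∀ t, fF t ≠ 0 := fun t => by
      rw [hfFdef]; exact (mul_pos (B.hA₁pos _) (B.hA₂pos _)).ne'
    have KA2 := key_chain B.A₂ (fun t => x₀ * B.h t) (fun t => fg t * B.A₂ 0 / fF t)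
      (fun t => x₀ * h1f t)
      (fun t => (G1 t * B.A₂ 0 * fF t - fg t * B.A₂ 0 * F1 t) / fF t ^ 2)
      (x₀ * h2f 1) _
      (fun t => by
        rw [hfgdef, hfFdef]
        field_simp [(B.hA₁pos (B.h t)).ne'])
      (contDiffAt_const.mul hch)
      (by filter_upwards [hball] with t ht; exact (hh1d t ht).const_mul x₀)
      ((hh2d 1 h1R).const_mul x₀)
      (by simp only [hh1v, mul_one]; exact hx₀)
      ((hcg.mul contDiffAt_const).div hcF (hfFne 1))
      (by filter_upwards [hball] with t ht
          exact ((hG1d t ht).mul_const (B.A₂ 0)).div (hF1d t ht) (hfFne t))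
      (((((hG2d 1 h1R).mul_const (B.A₂ 0)).mul (hF1d 1 h1R)).sub
          (((hG1d 1 h1R).mul_const (B.A₂ 0)).mul (hF2d 1 h1R))).div
          ((hF1d 1 h1R).pow 2) (pow_ne_zero 2 (hfFne 1)))
    obtain ⟨hb, hb2⟩ := KA2
    simp only [hh1v, mul_one] at hb hb2
    have e_dA2 : deriv B.A₂ (x₀ * B.h 1)
        = (G1 1 * B.A₂ 0 * fF 1 - fg 1 * B.A₂ 0 * F1 1) / fF 1 ^ 2 / x₀ :=
      (eq_div_iff hx₀).mpr hb
    rw [e_dA2] at hb2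
    have e_ddA2 := (eq_div_iff (pow_ne_zero 2 hx₀)).mpr hb2
    have hM := moment_sum B.hR hgs hG1s hG2s ν₁ ((n : ℝ) + ν₂) hcpos.ne'
    simp only [stancuL]
    rw [hM.tsum_eq, e_dA2, e_ddA2, e_dA1, e_ddA1, hdh2]
    simp only [hfgdef, hfFdef, Pi.mul_apply, Pi.sub_apply, Pi.pow_apply, Nat.cast_ofNat]
    have hA1 : B.A₁ (B.h 1) ≠ 0 := (B.hA₁pos _).ne'
    have hA2v : B.A₂ (x₀ * B.h 1) ≠ 0 := (B.hA₂pos _).ne'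
    rw [hx₀def] at hA2v ⊢
    have hxne : x ≠ 0 := hxpos.ne'
    have hnne : (n : ℝ) ≠ 0 := hnpos.ne'
    field_simp
    ring
end

section
/- For every n ≥ 1, ν₁, ν₂ ≥ 0 and x ≥ 0, the first central moment of the Stancu-type operator satisfies L_n^{(ν₁,ν₂)}(s−x; x) = (A₂'(nx·h(1))·n / (A₂(nx·h(1))·(n+ν₂)) − 1)·x + (A₁'(h(1))/A₁(h(1)) + ν₁)·1/(n+ν₂). -/
open Filter Topology
open scoped NNReal ENNReal


private lemma termwise {a : ℕ → ℝ} {f : ℝ → ℝ} {R z : ℝ}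
    (hf : ∀ t : ℝ, |t| < R → HasSum (fun k => a k * t ^ k) (f t)) (hz : |z| < R) :
    Summable (fun k => a k * ((k : ℝ) * z ^ (k - 1))) ∧
      HasDerivAt f (∑' k, a k * ((k : ℝ) * z ^ (k - 1))) z := by
  have h0z : (0:ℝ) ≤ |z| := abs_nonneg z
  obtain ⟨r, hzr, hrR⟩ : ∃ r, |z| < r ∧ r < R :=
    ⟨(|z| + R) / 2, by linarith, by linarith⟩
  have hr0 : 0 < r := lt_of_le_of_lt h0z hzr
  obtain ⟨r₂, hrr₂, hr₂R⟩ : ∃ r₂, r < r₂ ∧ r₂ < R :=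
    ⟨(r + R) / 2, by linarith, by linarith⟩
  have hr₂0 : 0 < r₂ := hr0.trans hrr₂
  have hq0 : 0 < r / r₂ := div_pos hr0 hr₂0
  have hq1 : r / r₂ < 1 := (div_lt_one hr₂0).2 hrr₂
  have hs₂ : Summable fun k => a k * r₂ ^ k :=
    (hf r₂ (by rwa [abs_of_pos hr₂0])).summable
  obtain ⟨C, hC⟩ : ∃ C, ∀ k, |a k * r₂ ^ k| ≤ C := by
    obtain ⟨C, hC⟩ := (hs₂.tendsto_atTop_zero.abs).bddAbove_range
    exact ⟨C, fun k => hC (Set.mem_range_self k)⟩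
  have hle : ∀ k : ℕ, |a k| * ((k : ℝ) * r ^ (k - 1)) ≤
      C / r * ((k : ℝ) * (r / r₂) ^ k) := by
    intro k
    cases k with
    | zero => simp
    | succ j =>
      have hC' := hC (j + 1)
      rw [abs_mul, abs_pow, abs_of_pos hr₂0] at hC'
      have ha : |a (j + 1)| ≤ C / r₂ ^ (j + 1) :=
        (le_div_iff₀ (pow_pos hr₂0 _)).2 hC'
      have hstep : |a (j + 1)| * (((j + 1 : ℕ) : ℝ) * r ^ j) ≤
          (C / r₂ ^ (j + 1)) * (((j + 1 : ℕ) : ℝ) * r ^ j) := by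
        have hnn : (0:ℝ) ≤ ((j + 1 : ℕ) : ℝ) * r ^ j := by positivity
        exact mul_le_mul_of_nonneg_right ha hnn
      have heq : (C / r₂ ^ (j + 1)) * (((j + 1 : ℕ) : ℝ) * r ^ j) =
          C / r * (((j + 1 : ℕ) : ℝ) * (r / r₂) ^ (j + 1)) := by
        rw [div_pow]
        field_simp
        ring
      calc |a (j + 1)| * (((j + 1 : ℕ) : ℝ) * r ^ (j + 1 - 1))
          = |a (j + 1)| * (((j + 1 : ℕ) : ℝ) * r ^ j) := by norm_num
        _ ≤ (C / r₂ ^ (j + 1)) * (((j + 1 : ℕ) : ℝ) * r ^ j) := hstep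
        _ = C / r * (((j + 1 : ℕ) : ℝ) * (r / r₂) ^ (j + 1)) := heq
  have hgeom : Summable fun k : ℕ => (k : ℝ) * (r / r₂) ^ k := by
    have := summable_pow_mul_geometric_of_norm_lt_one (R := ℝ) 1
      (r := r / r₂) (by rw [Real.norm_eq_abs, abs_of_pos hq0]; exact hq1)
    simpa using this
  have hu_sum : Summable fun k : ℕ => |a k| * ((k : ℝ) * r ^ (k - 1)) :=
    Summable.of_nonneg_of_le (fun k => by positivity) hle (hgeom.mul_left (C / r))
  have hbound : ∀ (k : ℕ) (w : ℝ), w ∈ Set.Ioo (-r) r →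
      ‖a k * ((k : ℝ) * w ^ (k - 1))‖ ≤ |a k| * ((k : ℝ) * r ^ (k - 1)) := by
    intro k w hw
    have hwr : |w| ≤ r := le_of_lt (abs_lt.2 ⟨hw.1, hw.2⟩)
    have hrw : ‖a k * ((k : ℝ) * w ^ (k - 1))‖ = |a k| * ((k : ℝ) * |w| ^ (k - 1)) := by
      rw [Real.norm_eq_abs, abs_mul, abs_mul, abs_pow, Nat.abs_cast]
    rw [hrw]
    exact mul_le_mul_of_nonneg_left
      (mul_le_mul_of_nonneg_left (pow_le_pow_left₀ (abs_nonneg w) hwr _) (Nat.cast_nonneg k))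
      (abs_nonneg _)
  have hderiv : ∀ (k : ℕ) (w : ℝ), w ∈ Set.Ioo (-r) r →
      HasDerivAt (fun t => a k * t ^ k) (a k * ((k : ℝ) * w ^ (k - 1))) w :=
    fun k w _ => (hasDerivAt_pow k w).const_mul (a k)
  have hzIoo : z ∈ Set.Ioo (-r) r := Set.mem_Ioo.2 ⟨(abs_lt.1 hzr).1, (abs_lt.1 hzr).2⟩
  have hsm : Summable fun k => a k * z ^ k := (hf z hz).summable
  have key := hasDerivAt_tsum_of_isPreconnected hu_sum isOpen_Ioo
    (isPreconnected_Ioo) hderiv hbound hzIoo hsm hzIoo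
  refine ⟨Summable.of_norm_bounded hu_sum (fun k => hbound k z hzIoo), ?_⟩
  refine key.congr_of_eventuallyEq ?_
  have hmem : Set.Ioo (-r) r ∈ 𝓝 z := isOpen_Ioo.mem_nhds hzIoo
  exact eventuallyEq_of_mem hmem (fun w hw =>
    ((hf w (lt_trans (abs_lt.2 ⟨hw.1, hw.2⟩) hrR)).tsum_eq).symm)


private lemma analyticAt_of_hasSum {a : ℕ → ℝ} {f : ℝ → ℝ} {R z : ℝ}
    (hf : ∀ t : ℝ, |t| < R → HasSum (fun k => a k * t ^ k) (f t)) (hz : |z| < R) :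
    AnalyticAt ℝ f z := by
  have h0z : (0:ℝ) ≤ |z| := abs_nonneg z
  obtain ⟨r, hzr, hrR⟩ : ∃ r, |z| < r ∧ r < R :=
    ⟨(|z| + R) / 2, by linarith, by linarith⟩
  have hr0 : 0 < r := lt_of_le_of_lt h0z hzr
  set p : FormalMultilinearSeries ℝ ℝ ℝ :=
    fun n => a n • ContinuousMultilinearMap.mkPiAlgebraFin ℝ n ℝ with hpdef
  have papp : ∀ (n : ℕ) (y : ℝ), (p n fun _ => y) = a n * y ^ n := by
    intro n y
    simp [hpdef, ContinuousMultilinearMap.mkPiAlgebraFin_apply, List.ofFn_const,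
      List.prod_replicate]
  have pnorm : ∀ n, ‖p n‖ ≤ |a n| := by
    intro n
    have hM : ‖ContinuousMultilinearMap.mkPiAlgebraFin ℝ n ℝ‖ ≤ 1 := by
      simpa using ContinuousMultilinearMap.norm_mkPiAlgebraFin_le (𝕜 := ℝ) (n := n) (A := ℝ)
    calc ‖p n‖ ≤ ‖a n‖ * ‖ContinuousMultilinearMap.mkPiAlgebraFin ℝ n ℝ‖ :=
          ContinuousMultilinearMap.opNorm_smul_le _ _
      _ ≤ |a n| * 1 := by
          rw [Real.norm_eq_abs]
          exact mul_le_mul_of_nonneg_left hM (abs_nonneg _)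
      _ = |a n| := mul_one _
  have hsr : Summable fun k => a k * r ^ k := (hf r (by rwa [abs_of_pos hr0])).summable
  obtain ⟨C, hC⟩ : ∃ C, ∀ k, |a k * r ^ k| ≤ C := by
    obtain ⟨C, hC⟩ := (hsr.tendsto_atTop_zero.abs).bddAbove_range
    exact ⟨C, fun k => hC (Set.mem_range_self k)⟩
  have hcoe : ((r.toNNReal : ℝ≥0) : ℝ) = r := Real.coe_toNNReal r hr0.le
  have hrad : (r.toNNReal : ℝ≥0∞) ≤ p.radius := by
    refine p.le_radius_of_bound C (fun n => ?_)
    rw [hcoe]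
    calc ‖p n‖ * r ^ n ≤ |a n| * r ^ n :=
          mul_le_mul_of_nonneg_right (pnorm n) (by positivity)
      _ = |a n * r ^ n| := by rw [abs_mul, abs_pow, abs_of_pos hr0]
      _ ≤ C := hC n
  have hball : HasFPowerSeriesOnBall f p 0 r.toNNReal := by
    refine ⟨hrad, ?_, ?_⟩
    · exact_mod_cast Real.toNNReal_pos.2 hr0
    · intro y hy
      have hy' : |y| < r := by
        rw [Metric.emetric_ball_nnreal] at hy
        simpa [Real.dist_eq, hcoe] using hy
      rw [zero_add]
      simp only [papp]
      exact hf y (hy'.trans hrR)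
  refine hball.analyticAt_of_mem ?_
  rw [Metric.emetric_ball_nnreal]
  simpa [Real.dist_eq, hcoe] using hzr


private lemma diffAt_of_comp {ψ g : ℝ → ℝ} {m : ℝ} (hψ : HasStrictDerivAt ψ m 1) (hm : m ≠ 0)
    (hg : DifferentiableAt ℝ (fun t => g (ψ t)) 1) : DifferentiableAt ℝ g (ψ 1) := by
  have hF := hψ.hasStrictFDerivAt_equiv hm
  set φ : ℝ → ℝ := hF.localInverse ψ _ 1 with hφdef
  have hφdiff : DifferentiableAt ℝ φ (ψ 1) := hF.to_localInverse.differentiableAt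
  have h1 : φ (ψ 1) = 1 := hF.localInverse_apply_image
  have hg' : DifferentiableAt ℝ (fun t => g (ψ t)) (φ (ψ 1)) := by rw [h1]; exact hg
  have hcomp : DifferentiableAt ℝ (fun z => g (ψ (φ z))) (ψ 1) := by
    simpa [Function.comp_def] using hg'.comp (ψ 1) hφdiff
  have hev : (fun z => g (ψ (φ z))) =ᶠ[𝓝 (ψ 1)] g :=
    hF.eventually_right_inverse.mono (fun z hz => by simp only [hφdef]; exact congrArg g hz)
  exact hev.differentiableAt_iff.mp hcomp



/-- First central moment `L_n^{(ν₁,ν₂)}(s−x; x)`. -/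
theorem stancuL_central_one (B : BrenkeData) (ν₁ ν₂ : ℝ) (hν₁ : 0 ≤ ν₁) (hν₂ : 0 ≤ ν₂)
    (n : ℕ) (hn : 1 ≤ n) (x : ℝ) (hx : 0 ≤ x) :
    stancuL B ν₁ ν₂ n (fun s => s - x) x =
      (deriv B.A₂ (n * x * B.h 1) * n / (B.A₂ (n * x * B.h 1) * (n + ν₂)) - 1) * x
        + (deriv B.A₁ (B.h 1) / B.A₁ (B.h 1) + ν₁) * (1 / (n + ν₂)) := by
  have h1R : |(1:ℝ)| < B.R := by rw [abs_one]; exact B.hR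
  set y : ℝ := (n : ℝ) * x with hy
  -- strict derivative of h at 1
  have hanal : AnalyticAt ℝ B.h 1 := analyticAt_of_hasSum B.hh h1R
  have hstrict : HasStrictDerivAt B.h 1 1 := by
    have := (hanal.contDiffAt (n := 1)).hasStrictDerivAt one_ne_zero
    rwa [B.hh1] at this
  have hh' : HasDerivAt B.h 1 1 := hstrict.hasDerivAt
  -- termwise derivative of the generating function at t = 1, for parameter y and 0
  obtain ⟨hsum1, hder1⟩ := termwise
    (f := fun t => B.A₁ (B.h t) * B.A₂ (y * B.h t)) (fun t ht => B.hgen y t ht) h1R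
  obtain ⟨_, hder0⟩ := termwise
    (f := fun t => B.A₁ (B.h t) * B.A₂ (0 * B.h t)) (fun t ht => B.hgen 0 t ht) h1R
  -- t ↦ A₁ (h t) differentiable at 1
  have hG0 : DifferentiableAt ℝ (fun t => B.A₁ (B.h t)) 1 := by
    have hd := hder0.differentiableAt
    have he : (fun t => B.A₁ (B.h t) * B.A₂ (0 * B.h t)) =
        fun t => B.A₁ (B.h t) * B.A₂ 0 := by funext t; rw [zero_mul]
    rw [he] at hd
    have h2 : (fun t => B.A₁ (B.h t) * B.A₂ 0 * (B.A₂ 0)⁻¹) = fun t => B.A₁ (B.h t) := by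
      funext t
      rw [mul_assoc, mul_inv_cancel₀ (ne_of_gt (B.hA₂pos 0)), mul_one]
    exact h2 ▸ hd.mul_const (B.A₂ 0)⁻¹
  have hA₁diff : DifferentiableAt ℝ B.A₁ (B.h 1) :=
    diffAt_of_comp hstrict one_ne_zero hG0
  -- t ↦ A₂ (y * h t) differentiable at 1
  have hGy : DifferentiableAt ℝ (fun t => B.A₂ (y * B.h t)) 1 := by
    have hd := hder1.differentiableAt
    have he : (fun t => B.A₂ (y * B.h t)) =
        fun t => B.A₁ (B.h t) * B.A₂ (y * B.h t) / B.A₁ (B.h t) := by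
      funext t
      rw [mul_comm (B.A₁ (B.h t)), mul_div_assoc, div_self (ne_of_gt (B.hA₁pos _)), mul_one]
    rw [he]
    exact hd.div hG0 (ne_of_gt (B.hA₁pos _))
  have hA₂diff : DifferentiableAt ℝ B.A₂ (y * B.h 1) := by
    rcases eq_or_ne y 0 with hy0 | hy0
    · rw [hy0, zero_mul]
      have h0R : |(0:ℝ)| < B.R := by rw [abs_zero]; linarith [B.hR]
      exact (termwise B.hA₂ h0R).2.differentiableAt
    · have hψ : HasStrictDerivAt (fun t => y * B.h t) y 1 := by
        simpa using hstrict.const_mul y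
      exact diffAt_of_comp hψ hy0 hGy
  -- chain rule at t = 1
  have hc1 : HasDerivAt (fun t => B.A₁ (B.h t)) (deriv B.A₁ (B.h 1)) 1 := by
    have := (hA₁diff.hasDerivAt).comp 1 hh'
    simpa [Function.comp_def] using this
  have hc2 : HasDerivAt (fun t => B.A₂ (y * B.h t)) (deriv B.A₂ (y * B.h 1) * y) 1 := by
    have hinner : HasDerivAt (fun t => y * B.h t) y 1 := by simpa using hh'.const_mul y
    have := (hA₂diff.hasDerivAt).comp 1 hinner
    simpa [Function.comp_def] using this
  have hprod : HasDerivAt (fun t => B.A₁ (B.h t) * B.A₂ (y * B.h t))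
      (deriv B.A₁ (B.h 1) * B.A₂ (y * B.h 1) +
        B.A₁ (B.h 1) * (deriv B.A₂ (y * B.h 1) * y)) 1 := hc1.mul hc2
  have hSval : ∑' k, B.p k y * ((k : ℝ) * (1:ℝ) ^ (k - 1)) =
      deriv B.A₁ (B.h 1) * B.A₂ (y * B.h 1) +
        B.A₁ (B.h 1) * (deriv B.A₂ (y * B.h 1) * y) := hder1.unique hprod
  simp only [one_pow, mul_one] at hsum1 hSval
  -- assemble the sums
  have hs1 : HasSum (fun k => B.p k y * (k : ℝ))
      (deriv B.A₁ (B.h 1) * B.A₂ (y * B.h 1) +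
        B.A₁ (B.h 1) * (deriv B.A₂ (y * B.h 1) * y)) := by
    have := hsum1.hasSum
    rwa [hSval] at this
  have hs0 : HasSum (fun k => B.p k y) (B.A₁ (B.h 1) * B.A₂ (y * B.h 1)) := by
    have := B.hgen y 1 h1R
    simpa using this
  have hd0 : (0:ℝ) < (n : ℝ) + ν₂ := by
    have : (1:ℝ) ≤ (n : ℝ) := by exact_mod_cast hn
    linarith
  have hsum_main : HasSum (fun k : ℕ => B.p k y * (((k : ℝ) + ν₁) / ((n : ℝ) + ν₂) - x))
      ((deriv B.A₁ (B.h 1) * B.A₂ (y * B.h 1) +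
          B.A₁ (B.h 1) * (deriv B.A₂ (y * B.h 1) * y)) * ((n : ℝ) + ν₂)⁻¹ +
        B.A₁ (B.h 1) * B.A₂ (y * B.h 1) * (ν₁ / ((n : ℝ) + ν₂) - x)) := by
    have h := (hs1.mul_right ((n : ℝ) + ν₂)⁻¹).add (hs0.mul_right (ν₁ / ((n : ℝ) + ν₂) - x))
    have heq : (fun k : ℕ => B.p k y * (((k : ℝ) + ν₁) / ((n : ℝ) + ν₂) - x)) =
        fun k : ℕ => B.p k y * (k : ℝ) * ((n : ℝ) + ν₂)⁻¹ +
          B.p k y * (ν₁ / ((n : ℝ) + ν₂) - x) := by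
      funext k
      field_simp
      ring
    rw [heq]
    exact h
  rw [stancuL, ← hy, hsum_main.tsum_eq]
  rw [hy]
  have hA1 : B.A₁ (B.h 1) ≠ 0 := ne_of_gt (B.hA₁pos _)
  have hA2 : B.A₂ ((n : ℝ) * x * B.h 1) ≠ 0 := ne_of_gt (B.hA₂pos _)
  field_simp
  ring
end

section
/- For every n ≥ 1, ν₁, ν₂ ≥ 0 and x ≥ 0, the second central moment of the Stancu-type operator satisfies L_n^{(ν₁,ν₂)}((s−x)²; x) = [A₂''(nx·h(1))·n²/(A₂(nx·h(1))·(n+ν₂)²) − 2A₂'(nx·h(1))·n/(A₂(nx·h(1))·(n+ν₂)) + 1]·x² + {(1+2ν₁+h''(1))·A₂'(nx·h(1))·n/(A₂(nx·h(1))·(n+ν₂)²) + 2A₁'(h(1))·A₂'(nx·h(1))·n/(A₁(h(1))·A₂(nx·h(1))·(n+ν₂)²) − 2(A₁'(h(1))/A₁(h(1)) + ν₁)/(n+ν₂)}·x + ν₁²/(n+ν₂)² + [(1+2ν₁+h''(1))·A₁'(h(1)) + A₁''(h(1))]/(A₁(h(1))·(n+ν₂)²). -/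
open Filter Topology Metric
open scoped ENNReal NNReal

namespace BrenkeAux

lemma exists_coeff_bound {c : ℕ → ℝ} {t : ℝ} (hs : Summable fun k => c k * t ^ k) :
    ∃ M : ℝ, ∀ k, |c k| * |t| ^ k ≤ M := by
  have h0 : Tendsto (fun k => |c k * t ^ k|) atTop (𝓝 0) := by
    simpa using hs.tendsto_atTop_zero.abs
  obtain ⟨M, hM⟩ := h0.bddAbove_range
  exact ⟨M, fun k => by simpa [abs_mul, abs_pow] using hM (Set.mem_range_self k)⟩

lemma summable_weight {c : ℕ → ℝ} {t s : ℝ} (hs : Summable fun k => c k * t ^ k)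
    (hst : |s| < t) (m : ℕ) : Summable fun k : ℕ => (k : ℝ) ^ m * (|c k| * |s| ^ k) := by
  obtain ⟨M, hM⟩ := exists_coeff_bound hs
  have ht0 : 0 < t := (abs_nonneg s).trans_lt hst
  have hq : |s| / t < 1 := (div_lt_one ht0).2 hst
  have hq0 : 0 ≤ |s| / t := by positivity
  have hsum : Summable fun k : ℕ => M * ((k : ℝ) ^ m * (|s| / t) ^ k) :=
    (summable_pow_mul_geometric_of_norm_lt_one m
      (by rwa [Real.norm_eq_abs, abs_of_nonneg hq0])).mul_left M
  refine Summable.of_nonneg_of_le (fun k => by positivity) (fun k => ?_) hsum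
  have hk := hM k
  have habs : |t| = t := abs_of_pos ht0
  calc (k : ℝ) ^ m * (|c k| * |s| ^ k)
      = (|c k| * t ^ k) * ((k : ℝ) ^ m * (|s| / t) ^ k) := by
        rw [div_pow]; field_simp
    _ ≤ M * ((k : ℝ) ^ m * (|s| / t) ^ k) := by
        apply mul_le_mul_of_nonneg_right _ (by positivity)
        calc |c k| * t ^ k = |c k| * |t| ^ k := by rw [habs]
          _ ≤ M := hk

lemma analyticAt_of_hasSum {R : ℝ} (hR : 1 < R) {c : ℕ → ℝ} {F : ℝ → ℝ}
    (hF : ∀ t : ℝ, |t| < R → HasSum (fun k => c k * t ^ k) (F t)) {t₀ : ℝ} (ht₀ : |t₀| ≤ 1) :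
    AnalyticAt ℝ F t₀ := by
  set s₁ : ℝ := (3 + R) / 4 with hs₁def
  set s₂ : ℝ := (1 + R) / 2 with hs₂def
  have h1s₁ : 1 < s₁ := by rw [hs₁def]; linarith
  have hs₁s₂ : s₁ < s₂ := by rw [hs₁def, hs₂def]; linarith
  have hs₂R : s₂ < R := by rw [hs₂def]; linarith
  have hsum₂ : Summable fun k => c k * s₂ ^ k :=
    (hF s₂ (by rw [abs_of_pos (by linarith)]; exact hs₂R)).summable
  set ps := FormalMultilinearSeries.ofScalars ℝ c with hps
  have hrad : (s₁.toNNReal : ℝ≥0∞) ≤ ps.radius := by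
    apply FormalMultilinearSeries.le_radius_of_summable
    have hw := summable_weight hsum₂ (show |s₁| < s₂ by
      rw [abs_of_pos (by linarith)]; exact hs₁s₂) 0
    apply hw.congr
    intro k
    have h1 : ((s₁.toNNReal : ℝ≥0) : ℝ) = s₁ := Real.coe_toNNReal _ (by linarith)
    rw [hps, FormalMultilinearSeries.ofScalars_norm, Real.norm_eq_abs, pow_zero, one_mul,
      abs_of_pos (by linarith : (0:ℝ) < s₁), h1]
  have hradpos : 0 < ps.radius := by
    refine lt_of_lt_of_le ?_ hrad
    simp only [ENNReal.coe_pos, ← NNReal.coe_pos, Real.coe_toNNReal _ (by linarith : (0:ℝ) ≤ s₁)]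
    linarith
  have hball := ps.hasFPowerSeriesOnBall hradpos
  have ht₀mem : t₀ ∈ Metric.eball (0 : ℝ) ps.radius := by
    rw [Metric.mem_eball, edist_dist, dist_zero_right, Real.norm_eq_abs]
    calc ENNReal.ofReal |t₀| ≤ ENNReal.ofReal 1 := ENNReal.ofReal_le_ofReal ht₀
      _ < (s₁.toNNReal : ℝ≥0∞) := by
          rw [ENNReal.ofReal_one, ← ENNReal.coe_one, ENNReal.coe_lt_coe, ← NNReal.coe_lt_coe,
            Real.coe_toNNReal _ (by linarith : (0:ℝ) ≤ s₁)]
          simpa using h1s₁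
      _ ≤ ps.radius := hrad
  have hanal : AnalyticAt ℝ ps.sum t₀ := hball.analyticAt_of_mem ht₀mem
  apply hanal.congr
  have hmem : Metric.ball (0 : ℝ) R ∈ 𝓝 t₀ := by
    apply Metric.isOpen_ball.mem_nhds
    simp only [Metric.mem_ball, dist_zero_right, Real.norm_eq_abs]
    linarith [ht₀]
  filter_upwards [hmem] with u hu
  have hu' : |u| < R := by simpa [Real.dist_eq] using hu
  have hsumeq : ps.sum u = ∑' k, c k * u ^ k := by
    simp only [FormalMultilinearSeries.sum]
    apply tsum_congr; intro k
    rw [hps]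
    rw [FormalMultilinearSeries.ofScalars_apply_eq, smul_eq_mul]
  rw [hsumeq, ← (hF u hu').tsum_eq]

lemma hasSum_derivs_of_hasSum {R : ℝ} (hR : 1 < R) {c : ℕ → ℝ} {F : ℝ → ℝ}
    (hF : ∀ t : ℝ, |t| < R → HasSum (fun k => c k * t ^ k) (F t)) :
    HasSum (fun k : ℕ => (k : ℝ) * c k) (deriv F 1) ∧
      HasSum (fun k : ℕ => (k : ℝ) * ((k : ℝ) - 1) * c k) (deriv (deriv F) 1) := by
  set s₁ : ℝ := (3 + R) / 4 with hs₁def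
  set s₂ : ℝ := (1 + R) / 2 with hs₂def
  have h1s₁ : 1 < s₁ := by rw [hs₁def]; linarith
  have hs₁s₂ : s₁ < s₂ := by rw [hs₁def, hs₂def]; linarith
  have hs₂R : s₂ < R := by rw [hs₂def]; linarith
  have hs₁R : s₁ < R := by linarith
  have hs₁0 : (0:ℝ) < s₁ := by linarith
  have habs₁ : |s₁| = s₁ := abs_of_pos hs₁0
  have hsum₂ : Summable fun k => c k * s₂ ^ k :=
    (hF s₂ (by rw [abs_of_pos (by linarith)]; exact hs₂R)).summable
  have hw : ∀ m : ℕ, Summable fun k : ℕ => (k : ℝ) ^ m * (|c k| * s₁ ^ k) := by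
    intro m
    have := summable_weight hsum₂ (by rw [habs₁]; exact hs₁s₂) m
    rwa [habs₁] at this
  have h1S : (1:ℝ) ∈ ball (0:ℝ) s₁ := by
    simp only [mem_ball, dist_zero_right, Real.norm_eq_abs, abs_one]; exact h1s₁
  have hsum1 : Summable fun k : ℕ => c k * 1 ^ k := by
    refine Summable.of_norm_bounded (hw 0) fun k => ?_
    simp only [Real.norm_eq_abs, abs_mul, one_pow, abs_one, mul_one, pow_zero, one_mul]
    exact le_mul_of_one_le_right (abs_nonneg _) (one_le_pow₀ h1s₁.le)
  have hu1 : Summable fun k : ℕ => |c k| * ((k : ℝ) * s₁ ^ k) :=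
    (hw 1).congr fun k => by ring
  have hder1 : ∀ z ∈ ball (0:ℝ) s₁,
      HasDerivAt (fun w => ∑' k, c k * w ^ k) (∑' k, c k * ((k : ℝ) * z ^ (k - 1))) z := by
    intro z hz
    refine hasDerivAt_tsum_of_isPreconnected hu1 isOpen_ball
      (convex_ball (0:ℝ) s₁).isPreconnected
      (fun k w _ => (hasDerivAt_pow k w).const_mul (c k)) (fun k w hw' => ?_) h1S hsum1 hz
    have hwlt : |w| < s₁ := by simpa [Real.dist_eq] using hw'
    have h1 : |w| ^ (k - 1) ≤ s₁ ^ (k - 1) := pow_le_pow_left₀ (abs_nonneg w) hwlt.le _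
    have h2 : s₁ ^ (k - 1) ≤ s₁ ^ k := pow_le_pow_right₀ h1s₁.le (Nat.sub_le k 1)
    calc ‖c k * ((k : ℝ) * w ^ (k - 1))‖ = |c k| * ((k : ℝ) * |w| ^ (k - 1)) := by
          simp [Real.norm_eq_abs, abs_mul, abs_pow, Nat.abs_cast]
      _ ≤ |c k| * ((k : ℝ) * s₁ ^ k) := by
          refine mul_le_mul_of_nonneg_left ?_ (abs_nonneg _)
          exact mul_le_mul_of_nonneg_left (h1.trans h2) (Nat.cast_nonneg k)
  have hFev : ∀ z ∈ ball (0:ℝ) s₁, F =ᶠ[𝓝 z] fun w => ∑' k, c k * w ^ k := by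
    intro z hz
    have hzR : z ∈ ball (0:ℝ) R := by
      have : |z| < s₁ := by simpa [Real.dist_eq] using hz
      simp only [mem_ball, dist_zero_right, Real.norm_eq_abs]; linarith
    filter_upwards [isOpen_ball.mem_nhds hzR] with w hw'
    have : |w| < R := by simpa [Real.dist_eq] using hw'
    exact ((hF w this).tsum_eq).symm
  have hFd : ∀ z ∈ ball (0:ℝ) s₁,
      HasDerivAt F (∑' k, c k * ((k : ℝ) * z ^ (k - 1))) z :=
    fun z hz => (hder1 z hz).congr_of_eventuallyEq (hFev z hz)
  have hderivF : ∀ z ∈ ball (0:ℝ) s₁,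
      deriv F z = ∑' k, c k * ((k : ℝ) * z ^ (k - 1)) :=
    fun z hz => (hFd z hz).deriv
  have hsummk : Summable fun k : ℕ => (k : ℝ) * c k := by
    refine Summable.of_norm_bounded (hw 1) fun k => ?_
    simp only [Real.norm_eq_abs, abs_mul, Nat.abs_cast, pow_one]
    refine mul_le_mul_of_nonneg_left ?_ (Nat.cast_nonneg k)
    exact le_mul_of_one_le_right (abs_nonneg _) (one_le_pow₀ h1s₁.le)
  have hd1 : HasSum (fun k : ℕ => (k:ℝ) * c k) (deriv F 1) := by
    have h1 : deriv F 1 = ∑' k, c k * ((k:ℝ) * (1:ℝ) ^ (k-1)) := hderivF 1 h1S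
    have h2 : (∑' k, c k * ((k:ℝ) * (1:ℝ) ^ (k-1))) = ∑' k : ℕ, (k:ℝ) * c k :=
      tsum_congr fun k => by rw [one_pow]; ring
    rw [h1, h2]; exact hsummk.hasSum
  -- second derivative
  have hu2 : Summable fun k : ℕ => |c k| * ((k:ℝ) * ((k:ℝ) * s₁ ^ k)) :=
    (hw 2).congr fun k => by ring
  have hsumG1at1 : Summable fun k : ℕ => c k * ((k:ℝ) * (1:ℝ) ^ (k-1)) :=
    hsummk.congr fun k => by rw [one_pow]; ring
  have hder2 : HasDerivAt (fun z => ∑' k, c k * ((k:ℝ) * z ^ (k-1)))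
      (∑' k, c k * ((k:ℝ) * (((k-1 : ℕ) : ℝ) * (1:ℝ) ^ (k - 1 - 1)))) 1 := by
    refine hasDerivAt_tsum_of_isPreconnected
      (g := fun (k : ℕ) (w : ℝ) => c k * ((k:ℝ) * w ^ (k-1)))
      (g' := fun (k : ℕ) (z : ℝ) => c k * ((k:ℝ) * (((k-1:ℕ):ℝ) * z ^ (k-1-1))))
      hu2 isOpen_ball
      (convex_ball (0:ℝ) s₁).isPreconnected (fun k w _ => ?_) (fun k w hw' => ?_) h1S hsumG1at1 h1S
    · have := (hasDerivAt_pow (k-1) w).const_mul (c k * (k:ℝ))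
      simpa [mul_assoc] using this
    · have hwlt : |w| < s₁ := by simpa [Real.dist_eq] using hw'
      have h1 : |w| ^ (k-1-1) ≤ s₁ ^ k :=
        le_trans (pow_le_pow_left₀ (abs_nonneg w) hwlt.le _)
          (pow_le_pow_right₀ h1s₁.le (by omega))
      have hk1 : ((k-1:ℕ):ℝ) ≤ (k:ℝ) := Nat.cast_le.2 (Nat.sub_le k 1)
      calc ‖c k * ((k:ℝ) * (((k-1:ℕ):ℝ) * w ^ (k-1-1)))‖
          = |c k| * ((k:ℝ) * (((k-1:ℕ):ℝ) * |w| ^ (k-1-1))) := by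
            simp [Real.norm_eq_abs, abs_mul, abs_pow, Nat.abs_cast]
        _ ≤ |c k| * ((k:ℝ) * ((k:ℝ) * s₁ ^ k)) := by
            refine mul_le_mul_of_nonneg_left ?_ (abs_nonneg _)
            refine mul_le_mul_of_nonneg_left ?_ (Nat.cast_nonneg k)
            exact mul_le_mul hk1 h1 (pow_nonneg (abs_nonneg w) _) (Nat.cast_nonneg k)
  have hG1ev : deriv F =ᶠ[𝓝 1] fun z => ∑' k, c k * ((k:ℝ) * z ^ (k-1)) := by
    filter_upwards [isOpen_ball.mem_nhds h1S] with z hz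
    exact hderivF z hz
  have hder2' : HasDerivAt (deriv F)
      (∑' k, c k * ((k:ℝ) * (((k-1:ℕ):ℝ) * (1:ℝ) ^ (k-1-1)))) 1 :=
    hder2.congr_of_eventuallyEq hG1ev
  have hsumk2 : Summable fun k : ℕ => (k:ℝ) * ((k:ℝ) - 1) * c k := by
    refine Summable.of_norm_bounded (hw 2) fun k => ?_
    cases k with
    | zero => simp
    | succ m =>
      have e2 : (1:ℝ) ≤ s₁ ^ (m+1) := one_le_pow₀ h1s₁.le
      have e3 : (0:ℝ) ≤ |c (m+1)| := abs_nonneg _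
      have e4 : (0:ℝ) ≤ (m:ℝ) := Nat.cast_nonneg m
      simp only [Real.norm_eq_abs, abs_mul, Nat.abs_cast]
      push_cast
      rw [abs_of_nonneg (by linarith : (0:ℝ) ≤ (m:ℝ) + 1 - 1)]
      have e5 : |c (m+1)| ≤ |c (m+1)| * s₁ ^ (m+1) := le_mul_of_one_le_right e3 e2
      have e6 : ((m:ℝ)+1)*((m:ℝ)+1-1) ≤ ((m:ℝ)+1)^2 := by nlinarith
      exact mul_le_mul e6 e5 e3 (by positivity)
  have hval : (∑' k, c k * ((k:ℝ) * (((k-1:ℕ):ℝ) * (1:ℝ) ^ (k-1-1))))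
      = ∑' k : ℕ, (k:ℝ)*((k:ℝ)-1)*c k := by
    apply tsum_congr; intro k
    cases k with
    | zero => simp
    | succ m => simp only [Nat.add_sub_cancel, one_pow]; push_cast; ring
  have hd2 : HasSum (fun k : ℕ => (k:ℝ)*((k:ℝ)-1)*c k) (deriv (deriv F) 1) := by
    rw [hder2'.deriv, hval]; exact hsumk2.hasSum
  exact ⟨hd1, hd2⟩

lemma contDiffAt_outer {g G : ℝ → ℝ} (hg : AnalyticAt ℝ g 1)
    (hgd : deriv g 1 ≠ 0)
    (hco : AnalyticAt ℝ (fun t => G (g t)) 1) :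
    ContDiffAt ℝ 2 G (g 1) := by
  have hgdiff : DifferentiableAt ℝ g 1 := hg.differentiableAt
  set e : ℝ ≃L[ℝ] ℝ := ContinuousLinearEquiv.unitsEquivAut ℝ (Units.mk0 _ hgd) with he_def
  have he : HasFDerivAt g (e : ℝ →L[ℝ] ℝ) 1 := by
    have h1 := hgdiff.hasDerivAt.hasFDerivAt
    exact h1.congr_fderiv (by ext; simp [he_def])
  have hcd : ContDiffAt ℝ 2 g 1 := hg.contDiffAt
  have hn : (2 : WithTop ℕ∞) ≠ 0 := two_ne_zero
  have hinv : ContDiffAt ℝ 2 (hcd.localInverse he hn) (g 1) := hcd.to_localInverse he hn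
  have himg : hcd.localInverse he hn (g 1) = 1 := hcd.localInverse_apply_image he hn
  have hev : ∀ᶠ u in 𝓝 (g 1), g (hcd.localInverse he hn u) = u :=
    (hcd.hasStrictFDerivAt' he hn).eventually_right_inverse
  have hcomp : ContDiffAt ℝ 2 ((fun t => G (g t)) ∘ (hcd.localInverse he hn)) (g 1) := by
    refine ContDiffAt.comp _ ?_ hinv
    rw [himg]
    exact hco.contDiffAt
  apply hcomp.congr_of_eventuallyEq
  filter_upwards [hev] with u hu
  simp only [Function.comp_apply]
  rw [hu]

lemma cd2_props {G : ℝ → ℝ} {v : ℝ} (hG : ContDiffAt ℝ 2 G v) :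
    (∀ᶠ u in 𝓝 v, DifferentiableAt ℝ G u) ∧ DifferentiableAt ℝ (deriv G) v := by
  obtain ⟨u, hu, hcd⟩ := hG.contDiffOn le_rfl (by simp)
  obtain ⟨V, hVu, hVo, hvV⟩ := _root_.mem_nhds_iff.1 hu
  have h1 : ContDiffOn ℝ 2 G V := hcd.mono hVu
  constructor
  · filter_upwards [hVo.mem_nhds hvV] with w hw
    exact (h1.differentiableOn (by norm_num) w hw).differentiableAt (hVo.mem_nhds hw)
  · have h2 : ContDiffOn ℝ 1 (deriv G) V := h1.deriv_of_isOpen hVo (by norm_num)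
    exact (h2.differentiableOn one_ne_zero v hvV).differentiableAt (hVo.mem_nhds hvV)

lemma chain_derivs {A1 A2 H : ℝ → ℝ} {y : ℝ}
    (cd1 : ContDiffAt ℝ 2 A1 (H 1)) (cd2 : ContDiffAt ℝ 2 A2 (y * H 1))
    (cdh : ContDiffAt ℝ 2 H 1) (hH1 : deriv H 1 = 1) :
    deriv (fun t => A1 (H t) * A2 (y * H t)) 1
      = deriv A1 (H 1) * A2 (y * H 1) + A1 (H 1) * (deriv A2 (y * H 1) * y) ∧
    deriv (deriv (fun t => A1 (H t) * A2 (y * H t))) 1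
      = deriv (deriv A1) (H 1) * A2 (y * H 1)
        + 2 * deriv A1 (H 1) * deriv A2 (y * H 1) * y
        + A1 (H 1) * deriv (deriv A2) (y * H 1) * y ^ 2
        + (deriv A1 (H 1) * A2 (y * H 1) + A1 (H 1) * deriv A2 (y * H 1) * y)
            * deriv (deriv H) 1 := by
  obtain ⟨hev1, hd1'⟩ := cd2_props cd1
  obtain ⟨hev2, hd2'⟩ := cd2_props cd2
  obtain ⟨hevH, hdH'⟩ := cd2_props cdh
  have hHdiff : DifferentiableAt ℝ H 1 := cdh.differentiableAt two_ne_zero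
  have hHd : HasDerivAt H 1 1 := by
    have := hHdiff.hasDerivAt
    rwa [hH1] at this
  have hcont : ContinuousAt H 1 := hHdiff.continuousAt
  have hcont2 : ContinuousAt (fun t => y * H t) 1 := continuousAt_const.mul hcont
  set E : ℝ → ℝ := fun t => deriv A1 (H t) * deriv H t * A2 (y * H t)
      + A1 (H t) * (deriv A2 (y * H t) * (y * deriv H t)) with hE_def
  have hEv : ∀ᶠ t in 𝓝 1, DifferentiableAt ℝ A1 (H t) ∧ DifferentiableAt ℝ A2 (y * H t)
      ∧ DifferentiableAt ℝ H t :=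
    (hcont.eventually hev1).and ((hcont2.eventually hev2).and hevH)
  have hder_eq : deriv (fun t => A1 (H t) * A2 (y * H t)) =ᶠ[𝓝 1] E := by
    filter_upwards [hEv] with t ht
    obtain ⟨d1, d2, d3⟩ := ht
    have k1 : HasDerivAt (fun s => A1 (H s)) (deriv A1 (H t) * deriv H t) t :=
      d1.hasDerivAt.comp t d3.hasDerivAt
    have k2 : HasDerivAt (fun s => A2 (y * H s)) (deriv A2 (y * H t) * (y * deriv H t)) t :=
      d2.hasDerivAt.comp t (d3.hasDerivAt.const_mul y)
    exact (k1.mul k2).deriv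
  constructor
  · rw [hder_eq.self_of_nhds, hE_def]
    simp only [hH1]
    ring
  · have q1 : HasDerivAt (fun t => deriv A1 (H t)) (deriv (deriv A1) (H 1) * 1) 1 :=
      hd1'.hasDerivAt.comp 1 hHd
    have q2 : HasDerivAt (deriv H) (deriv (deriv H) 1) 1 := hdH'.hasDerivAt
    have q3 : HasDerivAt (fun t => A2 (y * H t)) (deriv A2 (y * H 1) * (y * 1)) 1 :=
      (cd2.differentiableAt two_ne_zero).hasDerivAt.comp 1 (hHd.const_mul y)
    have q4 : HasDerivAt (fun t => A1 (H t)) (deriv A1 (H 1) * 1) 1 :=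
      (cd1.differentiableAt two_ne_zero).hasDerivAt.comp 1 hHd
    have q5 : HasDerivAt (fun t => deriv A2 (y * H t))
        (deriv (deriv A2) (y * H 1) * (y * 1)) 1 :=
      by have := hd2'.hasDerivAt.comp 1 (hHd.const_mul y); exact this
    have q6 : HasDerivAt (fun t => y * deriv H t) (y * deriv (deriv H) 1) 1 :=
      q2.const_mul y
    have hE : HasDerivAt E
        ((deriv (deriv A1) (H 1) * 1 * deriv H 1 + deriv A1 (H 1) * deriv (deriv H) 1)
            * A2 (y * H 1)
          + deriv A1 (H 1) * deriv H 1 * (deriv A2 (y * H 1) * (y * 1))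
          + (deriv A1 (H 1) * 1 * (deriv A2 (y * H 1) * (y * deriv H 1))
            + A1 (H 1) * (deriv (deriv A2) (y * H 1) * (y * 1) * (y * deriv H 1)
              + deriv A2 (y * H 1) * (y * deriv (deriv H) 1)))) 1 := by
      have := ((q1.mul q2).mul q3).add (q4.mul (q5.mul q6))
      exact this
    have hφ2 : HasDerivAt (deriv (fun t => A1 (H t) * A2 (y * H t)))
        ((deriv (deriv A1) (H 1) * 1 * deriv H 1 + deriv A1 (H 1) * deriv (deriv H) 1)
            * A2 (y * H 1)
          + deriv A1 (H 1) * deriv H 1 * (deriv A2 (y * H 1) * (y * 1))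
          + (deriv A1 (H 1) * 1 * (deriv A2 (y * H 1) * (y * deriv H 1))
            + A1 (H 1) * (deriv (deriv A2) (y * H 1) * (y * 1) * (y * deriv H 1)
              + deriv A2 (y * H 1) * (y * deriv (deriv H) 1)))) 1 :=
      hE.congr_of_eventuallyEq hder_eq
    rw [hφ2.deriv, hH1]
    ring

end BrenkeAux

/-- Second central moment `L_n^{(ν₁,ν₂)}((s−x)²; x)`. -/
theorem stancuL_central_two (B : BrenkeData) (ν₁ ν₂ : ℝ) (hν₁ : 0 ≤ ν₁) (hν₂ : 0 ≤ ν₂)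
    (n : ℕ) (hn : 1 ≤ n) (x : ℝ) (hx : 0 ≤ x) :
    stancuL B ν₁ ν₂ n (fun s => (s - x) ^ 2) x =
      (deriv (deriv B.A₂) (n * x * B.h 1) * n ^ 2 / (B.A₂ (n * x * B.h 1) * (n + ν₂) ^ 2)
          - 2 * deriv B.A₂ (n * x * B.h 1) * n / (B.A₂ (n * x * B.h 1) * (n + ν₂)) + 1) * x ^ 2
        + ((1 + 2 * ν₁ + deriv (deriv B.h) 1) * deriv B.A₂ (n * x * B.h 1) * n
              / (B.A₂ (n * x * B.h 1) * (n + ν₂) ^ 2)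
            + 2 * deriv B.A₁ (B.h 1) * deriv B.A₂ (n * x * B.h 1) * n
              / (B.A₁ (B.h 1) * B.A₂ (n * x * B.h 1) * (n + ν₂) ^ 2)
            - 2 * (deriv B.A₁ (B.h 1) / B.A₁ (B.h 1) + ν₁) / (n + ν₂)) * x
        + ν₁ ^ 2 / (n + ν₂) ^ 2
        + ((1 + 2 * ν₁ + deriv (deriv B.h) 1) * deriv B.A₁ (B.h 1)
            + deriv (deriv B.A₁) (B.h 1)) / (B.A₁ (B.h 1) * (n + ν₂) ^ 2) := by
  classical
  simp only [stancuL]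
  set y : ℝ := (n : ℝ) * x with hy_def
  have hy : 0 ≤ y := by
    rw [hy_def]; positivity
  -- generating function facts
  have hφsum : ∀ t : ℝ, |t| < B.R →
      HasSum (fun k => B.p k y * t ^ k) ((fun t => B.A₁ (B.h t) * B.A₂ (y * B.h t)) t) :=
    fun t ht => B.hgen y t ht
  obtain ⟨hS1, hS2⟩ := BrenkeAux.hasSum_derivs_of_hasSum B.hR hφsum
  have hS0 : HasSum (fun k => B.p k y) (B.A₁ (B.h 1) * B.A₂ (y * B.h 1)) := by
    simpa using B.hgen y 1 (by rw [abs_one]; exact B.hR)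
  -- analyticity facts
  have h_an : AnalyticAt ℝ B.h 1 :=
    BrenkeAux.analyticAt_of_hasSum B.hR B.hh (by norm_num)
  have φ0_an : AnalyticAt ℝ (fun t => B.A₁ (B.h t) * B.A₂ (0 * B.h t)) 1 :=
    BrenkeAux.analyticAt_of_hasSum B.hR (fun t ht => B.hgen 0 t ht) (by norm_num)
  have hA₂0ne : B.A₂ 0 ≠ 0 := ne_of_gt (B.hA₂pos 0)
  have ψ_an : AnalyticAt ℝ (fun t => B.A₁ (B.h t)) 1 := by
    have h1 : AnalyticAt ℝ (fun t => (B.A₁ (B.h t) * B.A₂ (0 * B.h t)) * (B.A₂ 0)⁻¹) 1 :=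
      φ0_an.mul analyticAt_const
    apply h1.congr
    apply Filter.EventuallyEq.of_eq
    funext t
    rw [zero_mul]
    field_simp
  have cd1 : ContDiffAt ℝ 2 B.A₁ (B.h 1) := by
    refine BrenkeAux.contDiffAt_outer h_an ?_ ψ_an
    rw [B.hh1]; norm_num
  have cdh : ContDiffAt ℝ 2 B.h 1 := h_an.contDiffAt
  have cd2 : ContDiffAt ℝ 2 B.A₂ (y * B.h 1) := by
    by_cases hy0 : y = 0
    · rw [hy0, zero_mul]
      exact (BrenkeAux.analyticAt_of_hasSum B.hR B.hA₂ (by norm_num)).contDiffAt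
    · have hg_an : AnalyticAt ℝ (fun t => y * B.h t) 1 := analyticAt_const.mul h_an
      have hgd : deriv (fun t => y * B.h t) 1 ≠ 0 := by
        rw [deriv_const_mul y h_an.differentiableAt, B.hh1, mul_one]
        exact hy0
      have φy_an : AnalyticAt ℝ (fun t => B.A₁ (B.h t) * B.A₂ (y * B.h t)) 1 :=
        BrenkeAux.analyticAt_of_hasSum B.hR hφsum (by norm_num)
      have inv_an : AnalyticAt ℝ (fun t => (B.A₁ (B.h t))⁻¹) 1 :=
        ψ_an.inv (ne_of_gt (B.hA₁pos _))
      have hco : AnalyticAt ℝ (fun t => B.A₂ (y * B.h t)) 1 := by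
        have h1 := φy_an.mul inv_an
        apply h1.congr
        apply Filter.EventuallyEq.of_eq
        funext t
        have : B.A₁ (B.h t) ≠ 0 := ne_of_gt (B.hA₁pos _)
        simp only [Pi.mul_apply]
        field_simp
      exact BrenkeAux.contDiffAt_outer hg_an hgd hco
  obtain ⟨hD1, hD2⟩ := BrenkeAux.chain_derivs cd1 cd2 cdh B.hh1
  -- positivity facts
  have hn1 : (1:ℝ) ≤ (n:ℝ) := by exact_mod_cast hn
  have hnν : (0:ℝ) < (n:ℝ) + ν₂ := by linarith
  have hnνne : ((n:ℝ) + ν₂) ≠ 0 := ne_of_gt hnν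
  have hA1ne : B.A₁ (B.h 1) ≠ 0 := ne_of_gt (B.hA₁pos _)
  have hA2ne : B.A₂ (y * B.h 1) ≠ 0 := ne_of_gt (B.hA₂pos _)
  -- the big sum
  have hBig : HasSum (fun k : ℕ => B.p k y * (((k:ℝ) + ν₁) / ((n:ℝ) + ν₂) - x) ^ 2)
      ((((n:ℝ)+ν₂)⁻¹ ^ 2) * deriv (deriv (fun t => B.A₁ (B.h t) * B.A₂ (y * B.h t))) 1
        + ((((n:ℝ)+ν₂)⁻¹ ^ 2 * (2*ν₁+1) - 2*x*((n:ℝ)+ν₂)⁻¹)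
            * deriv (fun t => B.A₁ (B.h t) * B.A₂ (y * B.h t)) 1
          + (ν₁*((n:ℝ)+ν₂)⁻¹ - x)^2 * (B.A₁ (B.h 1) * B.A₂ (y * B.h 1)))) := by
    have h1 := (hS2.mul_left ((((n:ℝ)+ν₂)⁻¹ ^ 2))).add
      ((hS1.mul_left ((((n:ℝ)+ν₂)⁻¹ ^ 2 * (2*ν₁+1) - 2*x*((n:ℝ)+ν₂)⁻¹))).add
        (hS0.mul_left ((ν₁*((n:ℝ)+ν₂)⁻¹ - x)^2)))
    have hfun : (fun k : ℕ => (((n:ℝ)+ν₂)⁻¹ ^ 2) * ((k:ℝ)*((k:ℝ)-1)*B.p k y)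
        + (((((n:ℝ)+ν₂)⁻¹ ^ 2 * (2*ν₁+1) - 2*x*((n:ℝ)+ν₂)⁻¹)) * ((k:ℝ)*B.p k y)
          + ((ν₁*((n:ℝ)+ν₂)⁻¹ - x)^2) * B.p k y))
        = fun k : ℕ => B.p k y * (((k:ℝ) + ν₁) / ((n:ℝ) + ν₂) - x) ^ 2 := by
      funext k
      field_simp
      ring
    rw [← hfun]
    exact h1
  rw [hBig.tsum_eq, hD1, hD2, hy_def]
  have hA2ne' : B.A₂ ((n:ℝ) * x * B.h 1) ≠ 0 := ne_of_gt (B.hA₂pos _)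
  field_simp
  ring
end

section
/- Let f : [0,∞) → ℝ be uniformly continuous with f(x)/(1+x²) convergent as x → ∞. Then for all n ≥ 1 and x ≥ 0, |L_n^{(ν₁,ν₂)}(f; x) − f(x)| ≤ 2·ω(f; δ_n(x)), where δ_n(x) = √(L_n^{(ν₁,ν₂)}((s−x)²; x)) and ω(f; δ) = sup{|f(t)−f(s)| : t, s ∈ [0,∞), |t−s| ≤ δ} is the modulus of continuity of f. -/
/-- The modulus of continuity of `f` on `[0,∞)`:
`ω(f; δ) = sup {|f t − f s| : t, s ∈ [0,∞), |t − s| ≤ δ}`. -/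
noncomputable def modulus (f : ℝ → ℝ) (δ : ℝ) : ℝ :=
  sSup {d : ℝ | ∃ t s : ℝ, 0 ≤ t ∧ 0 ≤ s ∧ |t - s| ≤ δ ∧ d = |f t - f s|}


private lemma chain_bound (f : ℝ → ℝ) (t s : ℝ) (ht : 0 ≤ t) (hs : 0 ≤ s)
    (m : ℕ) (hm : 0 < m) (bound : ℝ)
    (hb : ∀ u v : ℝ, 0 ≤ u → 0 ≤ v → |u - v| ≤ |t - s| / m → |f u - f v| ≤ bound) :
    |f t - f s| ≤ m * bound := by
  have hm' : (0:ℝ) < m := by exact_mod_cast hm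
  set d : ℝ := (t - s) / m with hd
  have hmd : (m:ℝ) * d = t - s := by rw [hd]; field_simp [hm'.ne']
  set g : ℕ → ℝ := fun i => s + i * d with hg
  have hgm : g m = t := by simp [hg, hmd]
  have hg0 : g 0 = s := by simp [hg]
  have hgnn : ∀ i, i ≤ m → 0 ≤ g i := by
    intro i hi
    have him : (i:ℝ) ≤ m := by exact_mod_cast hi
    rcases le_total s t with h | h
    · have hd0 : 0 ≤ d := by
        apply div_nonneg (by linarith) hm'.le
      have : 0 ≤ (i:ℝ) * d := mul_nonneg (Nat.cast_nonneg i) hd0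
      simp only [hg]; linarith
    · have hd0 : d ≤ 0 := div_nonpos_of_nonpos_of_nonneg (by linarith) hm'.le
      have : (m:ℝ) * d ≤ (i:ℝ) * d := mul_le_mul_of_nonpos_right him hd0
      simp only [hg]; nlinarith
  have hstep : ∀ i, |g (i+1) - g i| = |t - s| / m := by
    intro i
    have : g (i+1) - g i = d := by simp [hg]; push_cast; ring
    rw [this, hd, abs_div, Nat.abs_cast]
  have key : f t - f s = ∑ i ∈ Finset.range m, (f (g (i+1)) - f (g i)) := by
    rw [Finset.sum_range_sub (fun i => f (g i)), hgm, hg0]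
  calc |f t - f s| = |∑ i ∈ Finset.range m, (f (g (i+1)) - f (g i))| := by rw [key]
    _ ≤ ∑ i ∈ Finset.range m, |f (g (i+1)) - f (g i)| := Finset.abs_sum_le_sum_abs _ _
    _ ≤ ∑ _i ∈ Finset.range m, bound := by
        apply Finset.sum_le_sum
        intro i hi
        have hi' : i < m := Finset.mem_range.mp hi
        exact hb _ _ (hgnn _ (by omega)) (hgnn _ (by omega)) (le_of_eq (hstep i))
    _ = m * bound := by simp [mul_comm]

private lemma modulus_bddAbove (f : ℝ → ℝ) (hf : UniformContinuousOn f (Set.Ici 0))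
    {δ : ℝ} (hδ : 0 ≤ δ) :
    BddAbove {d : ℝ | ∃ t s : ℝ, 0 ≤ t ∧ 0 ≤ s ∧ |t - s| ≤ δ ∧ d = |f t - f s|} := by
  rw [Metric.uniformContinuousOn_iff] at hf
  obtain ⟨δ₀, hδ₀, hprop⟩ := hf 1 one_pos
  set m : ℕ := ⌈δ / δ₀⌉₊ + 1 with hm
  have hm0 : 0 < m := Nat.succ_pos _
  have hm' : (0:ℝ) < m := by exact_mod_cast hm0
  have hδm : δ / m < δ₀ := by
    rw [div_lt_iff₀ hm']
    have h1 : δ / δ₀ ≤ (⌈δ / δ₀⌉₊ : ℝ) := Nat.le_ceil _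
    have h2 : δ ≤ (⌈δ / δ₀⌉₊ : ℝ) * δ₀ := by
      rw [div_le_iff₀ hδ₀] at h1; linarith
    have : ((⌈δ / δ₀⌉₊ : ℝ) + 1) * δ₀ = (m:ℝ) * δ₀ := by push_cast [hm]; ring
    nlinarith
  refine ⟨m, ?_⟩
  rintro d ⟨t, s, ht, hs, hts, rfl⟩
  have := chain_bound f t s ht hs m hm0 1 ?_
  · simpa using this
  · intro u v hu hv huv
    have h1 : |t - s| / m ≤ δ / m := by gcongr
    have : dist (f u) (f v) < 1 :=
      hprop u hu v hv (by rw [Real.dist_eq]; linarith)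
    rw [Real.dist_eq] at this; linarith

private lemma le_modulus (f : ℝ → ℝ) (hf : UniformContinuousOn f (Set.Ici 0))
    {t s δ : ℝ} (ht : 0 ≤ t) (hs : 0 ≤ s) (hts : |t - s| ≤ δ) (hδ : 0 ≤ δ) :
    |f t - f s| ≤ modulus f δ :=
  le_csSup (modulus_bddAbove f hf hδ) ⟨t, s, ht, hs, hts, rfl⟩

private lemma modulus_nonneg (f : ℝ → ℝ) (hf : UniformContinuousOn f (Set.Ici 0))
    {δ : ℝ} (hδ : 0 ≤ δ) : 0 ≤ modulus f δ := by
  have := le_modulus f hf (t := 0) (s := 0) le_rfl le_rfl (by simpa using hδ) hδ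
  simpa using this

private lemma key_estimate (f : ℝ → ℝ) (hf : UniformContinuousOn f (Set.Ici 0))
    {t x δ : ℝ} (ht : 0 ≤ t) (hx : 0 ≤ x) (hδ : 0 < δ) :
    |f t - f x| ≤ (1 + (t - x) ^ 2 / δ ^ 2) * modulus f δ := by
  have hω0 : 0 ≤ modulus f δ := modulus_nonneg f hf hδ.le
  have hfac : (1:ℝ) ≤ 1 + (t - x) ^ 2 / δ ^ 2 := by
    have := div_nonneg (sq_nonneg (t - x)) (sq_nonneg δ); linarith
  rcases eq_or_lt_of_le (abs_nonneg (t - x)) with h0 | h0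
  · have htx : t = x := by
      have := abs_eq_zero.mp h0.symm; linarith
    rw [htx, sub_self, abs_zero]
    exact mul_nonneg (by positivity) hω0
  · set d : ℝ := |t - x| with hd
    set m : ℕ := ⌈d / δ⌉₊ with hm
    have hm0 : 0 < m := Nat.ceil_pos.mpr (div_pos h0 hδ)
    have hm' : (0:ℝ) < m := by exact_mod_cast hm0
    have hstep : d / m ≤ δ := by
      rw [div_le_iff₀ hm']
      have h1 : d / δ ≤ (m:ℝ) := Nat.le_ceil _
      rw [div_le_iff₀ hδ] at h1; linarith
    have hmain : |f t - f x| ≤ m * modulus f δ := by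
      apply chain_bound f t x ht hx m hm0 _
      intro u v hu hv huv
      exact le_modulus f hf hu hv (huv.trans hstep) hδ.le
    have hdsq : d ^ 2 = (t - x) ^ 2 := sq_abs _
    have hmle : (m:ℝ) ≤ 1 + (t - x) ^ 2 / δ ^ 2 := by
      rcases le_total d δ with h | h
      · have : m ≤ 1 := Nat.ceil_le.mpr (by push_cast; rw [div_le_one hδ]; exact h)
        have : (m:ℝ) ≤ 1 := by exact_mod_cast this
        linarith
      · have h1 : (m:ℝ) < d / δ + 1 := Nat.ceil_lt_add_one (by positivity)
        have h2 : d / δ ≤ d ^ 2 / δ ^ 2 := by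
          rw [div_le_div_iff₀ hδ (by positivity)]
          nlinarith [mul_nonneg (mul_nonneg (sub_nonneg.2 h) h0.le) hδ.le]
        rw [← hdsq]; linarith
    calc |f t - f x| ≤ m * modulus f δ := hmain
      _ ≤ (1 + (t - x) ^ 2 / δ ^ 2) * modulus f δ :=
          mul_le_mul_of_nonneg_right hmle hω0

private lemma exists_poly_bound (f : ℝ → ℝ) (hcont : ContinuousOn f (Set.Ici 0))
    (hfE : ∃ l : ℝ, Filter.Tendsto (fun x => f x / (1 + x ^ 2)) Filter.atTop (nhds l)) :
    ∃ C : ℝ, 0 ≤ C ∧ ∀ u : ℝ, 0 ≤ u → |f u| ≤ C * (1 + u ^ 2) := by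
  obtain ⟨l, hl⟩ := hfE
  have h1 : ∀ᶠ u in Filter.atTop, |f u / (1 + u ^ 2) - l| < 1 := by
    have := Metric.tendsto_nhds.mp hl 1 one_pos
    simpa [Real.dist_eq] using this
  obtain ⟨M, hM⟩ := Filter.eventually_atTop.mp h1
  set M' : ℝ := max M 0 with hM'
  obtain ⟨C₁, hC₁⟩ := (isCompact_Icc (a := (0:ℝ)) (b := M')).exists_bound_of_continuousOn
    (hcont.mono (fun u hu => hu.1))
  refine ⟨max (max C₁ (|l| + 1)) 0, le_max_right _ _, fun u hu => ?_⟩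
  set C : ℝ := max (max C₁ (|l| + 1)) 0 with hC
  have hC0 : 0 ≤ C := le_max_right _ _
  have husq : (1:ℝ) ≤ 1 + u ^ 2 := by nlinarith [sq_nonneg u]
  rcases le_total u M' with h | h
  · have := hC₁ u ⟨hu, h⟩
    rw [Real.norm_eq_abs] at this
    calc |f u| ≤ C₁ := this
      _ ≤ C := le_trans (le_max_left _ _) (le_max_left _ _)
      _ ≤ C * (1 + u ^ 2) := le_mul_of_one_le_right hC0 husq
  · have huM : M ≤ u := le_trans (le_max_left _ _) h
    have h2 := hM u huM
    have h3 : |f u / (1 + u ^ 2)| ≤ |l| + 1 := by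
      have := abs_sub_abs_le_abs_sub (f u / (1 + u ^ 2)) l
      linarith [abs_abs (f u / (1 + u ^ 2))]
    have hpos : (0:ℝ) < 1 + u ^ 2 := by positivity
    have h4 : |f u| = |f u / (1 + u ^ 2)| * (1 + u ^ 2) := by
      rw [abs_div, abs_of_pos hpos]
      field_simp
    rw [h4]
    have hCl : |l| + 1 ≤ C := le_trans (le_max_right _ _) (le_max_left _ _)
    nlinarith

private lemma summable_mul_of_bound {q g : ℕ → ℝ} (hq0 : ∀ k, 0 ≤ q k)
    (S1 : Summable q) (S2 : Summable fun k => q k * (k:ℝ) ^ 2) {a b : ℝ}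
    (hg : ∀ k, |g k| ≤ a + b * (k:ℝ) ^ 2) :
    Summable fun k => q k * g k := by
  apply Summable.of_norm
  refine Summable.of_nonneg_of_le (fun k => norm_nonneg _) (fun k => ?_)
    (((S1.mul_left a)).add (S2.mul_left b))
  rw [Real.norm_eq_abs, abs_mul, abs_of_nonneg (hq0 k)]
  calc q k * |g k| ≤ q k * (a + b * (k:ℝ) ^ 2) := mul_le_mul_of_nonneg_left (hg k) (hq0 k)
    _ = a * q k + b * (q k * (k:ℝ) ^ 2) := by ring

/-- Theorem 2.2: `|L_n^{(ν₁,ν₂)}(f;x) − f(x)| ≤ 2 ω(f; δₙ(x))` with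
`δₙ(x) = √(L_n^{(ν₁,ν₂)}((s−x)²; x))` for uniformly continuous `f` in the class `E`. -/
theorem stancuL_modulus_estimate (B : BrenkeData) (ν₁ ν₂ : ℝ) (hν₁ : 0 ≤ ν₁) (hν₂ : 0 ≤ ν₂)
    (f : ℝ → ℝ) (hf : UniformContinuousOn f (Set.Ici 0))
    (hfE : ∃ l : ℝ, Filter.Tendsto (fun x => f x / (1 + x ^ 2)) Filter.atTop (nhds l))
    (n : ℕ) (hn : 1 ≤ n) (x : ℝ) (hx : 0 ≤ x) :
    |stancuL B ν₁ ν₂ n f x - f x| ≤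
      2 * modulus f (Real.sqrt (stancuL B ν₁ ν₂ n (fun s => (s - x) ^ 2) x)) := by
  classical
  have hcont : ContinuousOn f (Set.Ici 0) := hf.continuousOn
  obtain ⟨C, hC0, hC⟩ := exists_poly_bound f hcont hfE
  set y : ℝ := (n:ℝ) * x with hy
  have hy0 : 0 ≤ y := mul_nonneg (Nat.cast_nonneg n) hx
  have hp : ∀ k, 0 ≤ B.p k y := fun k => B.hpos k y hy0
  set sk : ℕ → ℝ := fun k => ((k:ℝ) + ν₁) / ((n:ℝ) + ν₂) with hskdef
  have hden : (1:ℝ) ≤ (n:ℝ) + ν₂ := by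
    have : (1:ℝ) ≤ (n:ℝ) := by exact_mod_cast hn
    linarith
  have hsk0 : ∀ k, 0 ≤ sk k := fun k => div_nonneg (by positivity) (by linarith)
  have hskle : ∀ k, sk k ≤ (k:ℝ) + ν₁ := fun k => div_le_self (by positivity) hden
  -- normalization
  have h1R : |(1:ℝ)| < B.R := by rw [abs_one]; exact B.hR
  set N : ℝ := B.A₁ (B.h 1) * B.A₂ (y * B.h 1) with hNdef
  have hN : HasSum (fun k => B.p k y) N := by
    have := B.hgen y 1 h1R
    simpa using this
  have hNpos : 0 < N := mul_pos (B.hA₁pos _) (B.hA₂pos _)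
  have S1 : Summable (fun k => B.p k y) := hN.summable
  -- summability of p·k²
  set r : ℝ := (1 + B.R) / 2 with hr
  have hr1 : 1 < r := by rw [hr]; linarith [B.hR]
  have hr0 : (0:ℝ) < r := by linarith
  have hrR : |r| < B.R := by rw [abs_of_pos hr0, hr]; linarith [B.hR]
  have hCr := B.hgen y r hrR
  set C₀ : ℝ := B.A₁ (B.h r) * B.A₂ (y * B.h r) with hC₀def
  have hler : ∀ k, B.p k y * r ^ k ≤ C₀ := fun k =>
    le_hasSum hCr k (fun j _ => mul_nonneg (hp j) (pow_nonneg hr0.le j))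
  have S2 : Summable (fun k => B.p k y * (k:ℝ) ^ 2) := by
    have hcmp : Summable (fun k : ℕ => C₀ * ((k:ℝ) ^ 2 * (1/r) ^ k)) := by
      apply Summable.mul_left
      apply summable_pow_mul_geometric_of_norm_lt_one
      rw [Real.norm_eq_abs, abs_of_pos (by positivity), div_lt_one hr0]
      exact hr1
    refine Summable.of_nonneg_of_le (fun k => mul_nonneg (hp k) (sq_nonneg _))
      (fun k => ?_) hcmp
    have hrk : (0:ℝ) < r ^ k := pow_pos hr0 k
    have h1 : B.p k y ≤ C₀ / r ^ k := (le_div_iff₀ hrk).2 (hler k)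
    calc B.p k y * (k:ℝ) ^ 2 ≤ (C₀ / r ^ k) * (k:ℝ) ^ 2 :=
          mul_le_mul_of_nonneg_right h1 (sq_nonneg _)
      _ = C₀ * ((k:ℝ) ^ 2 * (1/r) ^ k) := by rw [one_div, inv_pow]; ring
  -- summability of the relevant series
  have hsksq : ∀ k, (sk k) ^ 2 ≤ ((k:ℝ) + ν₁) ^ 2 :=
    fun k => pow_le_pow_left₀ (hsk0 k) (hskle k) 2
  have Sf : Summable (fun k => B.p k y * f (sk k)) := by
    apply summable_mul_of_bound hp S1 S2 (a := C * (1 + 2 * ν₁ ^ 2)) (b := 2 * C)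
    intro k
    have h1 := hC (sk k) (hsk0 k)
    nlinarith [hsksq k, mul_nonneg hC0 (sq_nonneg ((k:ℝ) - ν₁)), hC0]
  have Ssq : Summable (fun k => B.p k y * (sk k - x) ^ 2) := by
    apply summable_mul_of_bound hp S1 S2 (a := 4 * ν₁ ^ 2 + 2 * x ^ 2) (b := 4)
    intro k
    rw [abs_of_nonneg (sq_nonneg _)]
    nlinarith [sq_nonneg (sk k + x), hsksq k, sq_nonneg ((k:ℝ) - ν₁)]
  set T : ℝ := ∑' k, B.p k y * (sk k - x) ^ 2 with hTdef
  have hT0 : 0 ≤ T := tsum_nonneg (fun k => mul_nonneg (hp k) (sq_nonneg _))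
  -- rewrite the goal
  have goal1 : stancuL B ν₁ ν₂ n f x = N⁻¹ * ∑' k, B.p k y * f (sk k) := rfl
  have goal2 : stancuL B ν₁ ν₂ n (fun s => (s - x) ^ 2) x = N⁻¹ * T := rfl
  rw [goal1, goal2]
  set δ : ℝ := Real.sqrt (N⁻¹ * T) with hδdef
  have hδ0 : 0 ≤ δ := Real.sqrt_nonneg _
  have hω0 : 0 ≤ modulus f δ := modulus_nonneg f hf hδ0
  rcases hT0.eq_or_lt with h0 | h0
  · -- degenerate case T = 0
    have hterm : ∀ k, B.p k y * (sk k - x) ^ 2 = 0 := by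
      intro k
      have hle : B.p k y * (sk k - x) ^ 2 ≤ T :=
        Summable.le_tsum Ssq k (fun j _ => mul_nonneg (hp j) (sq_nonneg _))
      have hge := mul_nonneg (hp k) (sq_nonneg (sk k - x))
      linarith [h0]
    have hfs : ∀ k, B.p k y * f (sk k) = f x * B.p k y := by
      intro k
      rcases mul_eq_zero.mp (hterm k) with h | h
      · rw [h]; ring
      · have hsx : sk k = x := by
          have := pow_eq_zero_iff (n := 2) (by norm_num) |>.mp h
          linarith
        rw [hsx]; ring
    have hF : (∑' k, B.p k y * f (sk k)) = f x * N := by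
      rw [tsum_congr hfs, tsum_mul_left, hN.tsum_eq]
    rw [hF]
    have hz : N⁻¹ * (f x * N) - f x = 0 := by field_simp; ring
    rw [hz, abs_zero]
    positivity
  · -- main case T > 0
    have hδpos : 0 < δ := Real.sqrt_pos.mpr (by positivity)
    have hδsq : δ ^ 2 = N⁻¹ * T := Real.sq_sqrt (by positivity)
    set ω : ℝ := modulus f δ with hωdef
    have hptw : ∀ k, B.p k y * |f (sk k) - f x| ≤
        ω * B.p k y + (ω / δ ^ 2) * (B.p k y * (sk k - x) ^ 2) := by
      intro k
      have hkey := key_estimate f hf (hsk0 k) hx hδpos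
      calc B.p k y * |f (sk k) - f x|
          ≤ B.p k y * ((1 + (sk k - x) ^ 2 / δ ^ 2) * ω) :=
            mul_le_mul_of_nonneg_left hkey (hp k)
        _ = ω * B.p k y + (ω / δ ^ 2) * (B.p k y * (sk k - x) ^ 2) := by
            field_simp
    have Scmp : Summable (fun k => ω * B.p k y + (ω / δ ^ 2) * (B.p k y * (sk k - x) ^ 2)) :=
      (S1.mul_left ω).add (Ssq.mul_left (ω / δ ^ 2))
    have Sabs : Summable (fun k => B.p k y * |f (sk k) - f x|) :=
      Summable.of_nonneg_of_le (fun k => mul_nonneg (hp k) (abs_nonneg _)) hptw Scmp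
    have hnormeq : ∀ k, ‖B.p k y * (f (sk k) - f x)‖ = B.p k y * |f (sk k) - f x| := by
      intro k
      rw [Real.norm_eq_abs, abs_mul, abs_of_nonneg (hp k)]
    have Snorm : Summable (fun k => ‖B.p k y * (f (sk k) - f x)‖) := by
      exact Sabs.congr (fun k => (hnormeq k).symm)
    have Sdiff : Summable (fun k => B.p k y * (f (sk k) - f x)) := Summable.of_norm Snorm
    have hdiff_eq : (∑' k, B.p k y * f (sk k)) - f x * N
        = ∑' k, B.p k y * (f (sk k) - f x) := by
      have h1 : (fun k => B.p k y * (f (sk k) - f x))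
          = fun k => B.p k y * f (sk k) - f x * B.p k y := by
        funext k; ring
      rw [h1, Summable.tsum_sub Sf (S1.mul_left (f x)), tsum_mul_left, hN.tsum_eq]
    have habs : |∑' k, B.p k y * (f (sk k) - f x)| ≤ ∑' k, B.p k y * |f (sk k) - f x| := by
      have := norm_tsum_le_tsum_norm Snorm
      rw [Real.norm_eq_abs] at this
      calc |∑' k, B.p k y * (f (sk k) - f x)| ≤ ∑' k, ‖B.p k y * (f (sk k) - f x)‖ := this
        _ = ∑' k, B.p k y * |f (sk k) - f x| := tsum_congr hnormeq
    have htsum_le : (∑' k, B.p k y * |f (sk k) - f x|) ≤ ω * N + (ω / δ ^ 2) * T := by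
      have h1 := Summable.tsum_le_tsum hptw Sabs Scmp
      have h2 : (∑' k, (ω * B.p k y + (ω / δ ^ 2) * (B.p k y * (sk k - x) ^ 2)))
          = ω * N + (ω / δ ^ 2) * T := by
        rw [Summable.tsum_add (S1.mul_left ω) (Ssq.mul_left (ω / δ ^ 2)),
          tsum_mul_left, tsum_mul_left, hN.tsum_eq]
      linarith [h1, h2.le, h2.ge]
    have hfinal : ω * N + (ω / δ ^ 2) * T = 2 * ω * N := by
      rw [hδsq]
      field_simp
      ring
    have hgoal_eq : N⁻¹ * (∑' k, B.p k y * f (sk k)) - f x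
        = N⁻¹ * ((∑' k, B.p k y * f (sk k)) - f x * N) := by
      field_simp
    rw [hgoal_eq, hdiff_eq, abs_mul, abs_of_pos (inv_pos.mpr hNpos)]
    calc N⁻¹ * |∑' k, B.p k y * (f (sk k) - f x)|
        ≤ N⁻¹ * (ω * N + (ω / δ ^ 2) * T) := by
          apply mul_le_mul_of_nonneg_left _ (inv_nonneg.mpr hNpos.le)
          exact habs.trans htsum_le
      _ = 2 * ω := by rw [hfinal]; field_simp
end

section
/- Let 0 < α ≤ 1, M > 0, and let f : [0,∞) → ℝ satisfy |f(t₁) − f(t₂)| ≤ M·|t₁ − t₂|^α for all t₁, t₂ ∈ [0,∞). Then for all n ≥ 1 and x ≥ 0, |L_n^{(ν₁,ν₂)}(f; x) − f(x)| ≤ M·(δ_n(x))^α, where δ_n(x) = √(L_n^{(ν₁,ν₂)}((s−x)²; x)). -/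
lemma aux_rpow_le_one_add {a α : ℝ} (ha : 0 ≤ a) (hα : 0 < α) (hα1 : α ≤ 1) :
    a ^ α ≤ 1 + a := by
  rcases le_or_gt a 1 with h | h
  · have : a ^ α ≤ 1 := Real.rpow_le_one ha h hα.le
    linarith
  · have : a ^ α ≤ a ^ (1 : ℝ) := Real.rpow_le_rpow_of_exponent_le h.le hα1
    rw [Real.rpow_one] at this
    linarith

lemma aux_summable_of_quad {g v : ℕ → ℝ} (hg0 : ∀ k, 0 ≤ g k)
    (hkey : Summable fun k => g k * ((k : ℝ) + 1) ^ 2) {C : ℝ}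
    (hv : ∀ k, |v k| ≤ C * ((k : ℝ) + 1) ^ 2) :
    Summable fun k => g k * v k := by
  apply Summable.of_norm
  apply Summable.of_nonneg_of_le (fun k => norm_nonneg _) (fun k => ?_) (hkey.mul_left C)
  rw [Real.norm_eq_abs, abs_mul, abs_of_nonneg (hg0 k)]
  calc g k * |v k| ≤ g k * (C * ((k : ℝ) + 1) ^ 2) := by
        apply mul_le_mul_of_nonneg_left (hv k) (hg0 k)
    _ = C * (g k * ((k : ℝ) + 1) ^ 2) := by ring

lemma aux_summable_quad_geom {t : ℝ} (ht : 1 < t) :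
    Summable fun k : ℕ => ((k : ℝ) + 1) ^ 2 * t⁻¹ ^ k := by
  have hr : ‖t⁻¹‖ < 1 := by
    rw [Real.norm_eq_abs, abs_of_pos (by positivity)]
    rw [inv_lt_one_iff₀]; right; exact ht
  have h2 := summable_pow_mul_geometric_of_norm_lt_one 2 hr
  have h1 := summable_pow_mul_geometric_of_norm_lt_one 1 hr
  have h0 := summable_geometric_of_norm_lt_one hr
  exact (h2.add ((h1.mul_left 2).add h0)).congr fun k => by ring

lemma aux_core {g u v : ℕ → ℝ} {S M α : ℝ} (hg0 : ∀ k, 0 ≤ g k)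
    (hS : HasSum g S) (hSpos : 0 < S) (hα : 0 < α) (hα1 : α ≤ 1) (hM : 0 ≤ M)
    (hv : ∀ k, |v k| ≤ M * |u k| ^ α)
    (hsum_sq : Summable fun k => g k * u k ^ 2)
    (hsum_a : Summable fun k => g k * |u k| ^ α)
    (hsum_v : Summable fun k => g k * v k) :
    |S⁻¹ * ∑' k, g k * v k| ≤ M * Real.sqrt (S⁻¹ * ∑' k, g k * u k ^ 2) ^ α := by
  have hα0 : (α : ℝ) ≠ 0 := hα.ne'
  have h2α : (0 : ℝ) < 2 - α := by linarith
  have hT0 : 0 ≤ ∑' k, g k * u k ^ 2 :=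
    tsum_nonneg fun k => mul_nonneg (hg0 k) (sq_nonneg _)
  have hpq : Real.HolderConjugate (2 / α) (2 / (2 - α)) := by
    refine ⟨?_, div_pos two_pos hα, div_pos two_pos h2α⟩
    rw [inv_div, inv_div, inv_one]; ring
  have hexp1 : ∀ X : ℝ, 0 ≤ X → (X ^ (α / 2)) ^ (2 / α) = X := by
    intro X hX
    rw [← Real.rpow_mul hX, show α / 2 * (2 / α) = 1 by field_simp, Real.rpow_one]
  have hexp2 : ∀ X : ℝ, 0 ≤ X → (X ^ (1 - α / 2)) ^ (2 / (2 - α)) = X := by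
    intro X hX
    rw [← Real.rpow_mul hX, show (1 - α / 2) * (2 / (2 - α)) = 1 by
      field_simp, Real.rpow_one]
  have hfsumP : Summable fun k => ((g k * u k ^ 2) ^ (α / 2)) ^ (2 / α) :=
    hsum_sq.congr fun k => (hexp1 _ (mul_nonneg (hg0 k) (sq_nonneg _))).symm
  have hfsumQ : Summable fun k => (g k ^ (1 - α / 2)) ^ (2 / (2 - α)) :=
    hS.summable.congr fun k => (hexp2 _ (hg0 k)).symm
  have h1 : ∀ k, (g k * u k ^ 2) ^ (α / 2) * g k ^ (1 - α / 2) = g k * |u k| ^ α := by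
    intro k
    rw [Real.mul_rpow (hg0 k) (sq_nonneg _)]
    have h2 : (u k ^ 2 : ℝ) ^ (α / 2) = |u k| ^ α := by
      rw [← sq_abs, ← Real.rpow_natCast |u k| 2, ← Real.rpow_mul (abs_nonneg _),
        show ((2 : ℕ) : ℝ) * (α / 2) = α by push_cast; ring]
    have hne : α / 2 + (1 - α / 2) = 1 := by ring
    have h3 : g k ^ (α / 2) * g k ^ (1 - α / 2) = g k := by
      rw [← Real.rpow_add' (hg0 k) (by rw [hne]; norm_num), hne, Real.rpow_one]
    rw [h2, mul_right_comm, h3]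
  have holder : ∑' k, g k * |u k| ^ α ≤
      (∑' k, g k * u k ^ 2) ^ (α / 2) * S ^ (1 - α / 2) := by
    calc ∑' k, g k * |u k| ^ α
        = ∑' k, (g k * u k ^ 2) ^ (α / 2) * g k ^ (1 - α / 2) :=
          tsum_congr fun k => (h1 k).symm
      _ ≤ (∑' k, ((g k * u k ^ 2) ^ (α / 2)) ^ (2 / α)) ^ (1 / (2 / α)) *
          (∑' k, (g k ^ (1 - α / 2)) ^ (2 / (2 - α))) ^ (1 / (2 / (2 - α))) :=
          Real.inner_le_Lp_mul_Lq_tsum_of_nonneg hpq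
            (fun k => Real.rpow_nonneg (mul_nonneg (hg0 k) (sq_nonneg _)) _)
            (fun k => Real.rpow_nonneg (hg0 k) _) hfsumP hfsumQ
      _ = (∑' k, g k * u k ^ 2) ^ (α / 2) * S ^ (1 - α / 2) := by
          rw [tsum_congr fun k => hexp1 _ (mul_nonneg (hg0 k) (sq_nonneg _)),
            tsum_congr fun k => hexp2 _ (hg0 k), hS.tsum_eq,
            one_div_div, one_div_div, show (2 - α) / 2 = 1 - α / 2 by ring]
  have hinv : (0 : ℝ) ≤ S⁻¹ := inv_nonneg.mpr hSpos.le
  calc |S⁻¹ * ∑' k, g k * v k| = S⁻¹ * |∑' k, g k * v k| := by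
        rw [abs_mul, abs_of_nonneg hinv]
    _ ≤ S⁻¹ * ∑' k, M * (g k * |u k| ^ α) := by
        apply mul_le_mul_of_nonneg_left _ hinv
        calc |∑' k, g k * v k| ≤ ∑' k, |g k * v k| := by
              have hnorm : Summable fun k => ‖g k * v k‖ :=
                hsum_v.abs.congr fun k => (Real.norm_eq_abs _).symm
              simpa only [Real.norm_eq_abs] using
                norm_tsum_le_tsum_norm (f := fun k => g k * v k) hnorm
          _ ≤ ∑' k, M * (g k * |u k| ^ α) := by
              apply Summable.tsum_le_tsum _ hsum_v.abs (hsum_a.mul_left M)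
              intro k
              rw [abs_mul, abs_of_nonneg (hg0 k)]
              calc g k * |v k| ≤ g k * (M * |u k| ^ α) :=
                    mul_le_mul_of_nonneg_left (hv k) (hg0 k)
                _ = M * (g k * |u k| ^ α) := by ring
    _ = S⁻¹ * (M * ∑' k, g k * |u k| ^ α) := by rw [tsum_mul_left]
    _ ≤ S⁻¹ * (M * ((∑' k, g k * u k ^ 2) ^ (α / 2) * S ^ (1 - α / 2))) := by
        apply mul_le_mul_of_nonneg_left (mul_le_mul_of_nonneg_left holder hM) hinv
    _ = M * (S⁻¹ * S ^ (1 - α / 2) * (∑' k, g k * u k ^ 2) ^ (α / 2)) := by ring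
    _ = M * (S ^ (-(α / 2)) * (∑' k, g k * u k ^ 2) ^ (α / 2)) := by
        rw [← Real.rpow_neg_one S, ← Real.rpow_add hSpos,
          show (-1 : ℝ) + (1 - α / 2) = -(α / 2) by ring]
    _ = M * Real.sqrt (S⁻¹ * ∑' k, g k * u k ^ 2) ^ α := by
        rw [Real.sqrt_eq_rpow, ← Real.rpow_mul (mul_nonneg hinv hT0),
          show 1 / 2 * α = α / 2 by ring,
          Real.mul_rpow hinv hT0, Real.inv_rpow hSpos.le, ← Real.rpow_neg hSpos.le]
/-- Theorem 2.3: for `f` Lipschitz of order `α` with constant `M` on `[0,∞)`,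
`|L_n^{(ν₁,ν₂)}(f;x) − f(x)| ≤ M · (δₙ(x))^α` with `δₙ(x) = √(L_n^{(ν₁,ν₂)}((s−x)²; x))`. -/
theorem stancuL_lipschitz_estimate (B : BrenkeData) (ν₁ ν₂ : ℝ) (hν₁ : 0 ≤ ν₁) (hν₂ : 0 ≤ ν₂)
    (α M : ℝ) (hα : 0 < α) (hα1 : α ≤ 1) (hM : 0 < M)
    (f : ℝ → ℝ) (hf : ∀ t₁ t₂ : ℝ, 0 ≤ t₁ → 0 ≤ t₂ → |f t₁ - f t₂| ≤ M * |t₁ - t₂| ^ α)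
    (n : ℕ) (hn : 1 ≤ n) (x : ℝ) (hx : 0 ≤ x) :
    |stancuL B ν₁ ν₂ n f x - f x| ≤
      M * (Real.sqrt (stancuL B ν₁ ν₂ n (fun s => (s - x) ^ 2) x)) ^ α := by
  have hn1 : (1 : ℝ) ≤ (n : ℝ) := by exact_mod_cast hn
  have hnx : (0 : ℝ) ≤ (n : ℝ) * x := by positivity
  have hg0 : ∀ k, 0 ≤ B.p k ((n : ℝ) * x) := fun k => B.hpos k _ hnx
  have hden : (1 : ℝ) ≤ (n : ℝ) + ν₂ := by linarith
  have hs0 : ∀ k : ℕ, 0 ≤ ((k : ℝ) + ν₁) / ((n : ℝ) + ν₂) := fun k =>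
    div_nonneg (by positivity) (by linarith)
  have hsle : ∀ k : ℕ, ((k : ℝ) + ν₁) / ((n : ℝ) + ν₂) ≤ (k : ℝ) + ν₁ := fun k =>
    div_le_self (by positivity) hden
  have hSsum : HasSum (fun k => B.p k ((n : ℝ) * x))
      (B.A₁ (B.h 1) * B.A₂ ((n : ℝ) * x * B.h 1)) := by
    have := B.hgen ((n : ℝ) * x) 1 (by rw [abs_one]; exact B.hR)
    simpa using this
  have hS : 0 < B.A₁ (B.h 1) * B.A₂ ((n : ℝ) * x * B.h 1) :=
    mul_pos (B.hA₁pos _) (B.hA₂pos _)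
  -- geometric decay of the coefficients
  set t₀ : ℝ := (1 + B.R) / 2 with ht₀def
  have hR := B.hR
  have ht₀1 : 1 < t₀ := by rw [ht₀def]; linarith
  have ht₀R : |t₀| < B.R := by
    rw [abs_of_pos (by linarith)]; rw [ht₀def]; linarith
  have hSum₀ : Summable fun k => B.p k ((n : ℝ) * x) * t₀ ^ k :=
    (B.hgen ((n : ℝ) * x) t₀ ht₀R).summable
  have hgb : ∀ k, B.p k ((n : ℝ) * x) * t₀ ^ k ≤ ∑' j, B.p j ((n : ℝ) * x) * t₀ ^ j := fun k =>
    Summable.le_tsum hSum₀ k fun j _ => mul_nonneg (hg0 j) (by positivity)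
  have hkey : Summable fun k => B.p k ((n : ℝ) * x) * ((k : ℝ) + 1) ^ 2 := by
    apply Summable.of_nonneg_of_le (fun k => mul_nonneg (hg0 k) (by positivity))
      (fun k => ?_) ((aux_summable_quad_geom ht₀1).mul_left (∑' j, B.p j ((n : ℝ) * x) * t₀ ^ j))
    have ht0 : (0 : ℝ) < t₀ := by linarith
    have heq : B.p k ((n : ℝ) * x) * ((k : ℝ) + 1) ^ 2 =
        (B.p k ((n : ℝ) * x) * t₀ ^ k) * (((k : ℝ) + 1) ^ 2 * t₀⁻¹ ^ k) := by
      rw [inv_pow]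
      field_simp
    rw [heq]
    exact mul_le_mul_of_nonneg_right (hgb k) (by positivity)
  -- bounds
  have hu : ∀ k : ℕ, |((k : ℝ) + ν₁) / ((n : ℝ) + ν₂) - x| ≤ (ν₁ + x + 1) * ((k : ℝ) + 1) := by
    intro k
    rw [abs_le]
    have h1 := hs0 k
    have h2 := hsle k
    have h3 : (0 : ℝ) ≤ (k : ℝ) := Nat.cast_nonneg k
    constructor <;> nlinarith
  have hαb : ∀ k : ℕ, |((k : ℝ) + ν₁) / ((n : ℝ) + ν₂) - x| ^ α ≤
      (ν₁ + x + 2) * ((k : ℝ) + 1) := by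
    intro k
    have h3 : (0 : ℝ) ≤ (k : ℝ) := Nat.cast_nonneg k
    calc |((k : ℝ) + ν₁) / ((n : ℝ) + ν₂) - x| ^ α
        ≤ 1 + |((k : ℝ) + ν₁) / ((n : ℝ) + ν₂) - x| :=
          aux_rpow_le_one_add (abs_nonneg _) hα hα1
      _ ≤ 1 + (ν₁ + x + 1) * ((k : ℝ) + 1) := by linarith [hu k]
      _ ≤ (ν₁ + x + 2) * ((k : ℝ) + 1) := by nlinarith
  have hk1 : ∀ k : ℕ, ((k : ℝ) + 1) ≤ ((k : ℝ) + 1) ^ 2 := by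
    intro k
    have h3 : (0 : ℝ) ≤ (k : ℝ) := Nat.cast_nonneg k
    nlinarith
  have hsum_sq : Summable fun k =>
      B.p k ((n : ℝ) * x) * (((k : ℝ) + ν₁) / ((n : ℝ) + ν₂) - x) ^ 2 := by
    apply aux_summable_of_quad hg0 hkey (C := (ν₁ + x + 1) ^ 2)
    intro k
    rw [abs_of_nonneg (sq_nonneg _)]
    calc (((k : ℝ) + ν₁) / ((n : ℝ) + ν₂) - x) ^ 2
        ≤ ((ν₁ + x + 1) * ((k : ℝ) + 1)) ^ 2 := by
          rw [← sq_abs]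
          apply pow_le_pow_left₀ (abs_nonneg _) (hu k)
      _ = (ν₁ + x + 1) ^ 2 * ((k : ℝ) + 1) ^ 2 := by ring
  have hsum_a : Summable fun k =>
      B.p k ((n : ℝ) * x) * |((k : ℝ) + ν₁) / ((n : ℝ) + ν₂) - x| ^ α := by
    apply aux_summable_of_quad hg0 hkey (C := ν₁ + x + 2)
    intro k
    rw [abs_of_nonneg (Real.rpow_nonneg (abs_nonneg _) _)]
    calc |((k : ℝ) + ν₁) / ((n : ℝ) + ν₂) - x| ^ α
        ≤ (ν₁ + x + 2) * ((k : ℝ) + 1) := hαb k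
      _ ≤ (ν₁ + x + 2) * ((k : ℝ) + 1) ^ 2 := by
          apply mul_le_mul_of_nonneg_left (hk1 k) (by linarith)
  have hfb : ∀ k : ℕ, |f (((k : ℝ) + ν₁) / ((n : ℝ) + ν₂)) - f x| ≤
      M * |((k : ℝ) + ν₁) / ((n : ℝ) + ν₂) - x| ^ α := fun k => hf _ _ (hs0 k) hx
  have hsum_v : Summable fun k =>
      B.p k ((n : ℝ) * x) * (f (((k : ℝ) + ν₁) / ((n : ℝ) + ν₂)) - f x) := by
    apply aux_summable_of_quad hg0 hkey (C := M * (ν₁ + x + 2))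
    intro k
    calc |f (((k : ℝ) + ν₁) / ((n : ℝ) + ν₂)) - f x|
        ≤ M * |((k : ℝ) + ν₁) / ((n : ℝ) + ν₂) - x| ^ α := hfb k
      _ ≤ M * ((ν₁ + x + 2) * ((k : ℝ) + 1)) := mul_le_mul_of_nonneg_left (hαb k) hM.le
      _ = M * (ν₁ + x + 2) * ((k : ℝ) + 1) := by ring
      _ ≤ M * (ν₁ + x + 2) * ((k : ℝ) + 1) ^ 2 := by
          apply mul_le_mul_of_nonneg_left (hk1 k) (by positivity)
  -- rewrite the operator values
  simp only [stancuL]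
  have hsplit : (B.A₁ (B.h 1) * B.A₂ ((n : ℝ) * x * B.h 1))⁻¹ *
        (∑' k : ℕ, B.p k ((n : ℝ) * x) * f (((k : ℝ) + ν₁) / ((n : ℝ) + ν₂))) - f x =
      (B.A₁ (B.h 1) * B.A₂ ((n : ℝ) * x * B.h 1))⁻¹ *
        ∑' k : ℕ, B.p k ((n : ℝ) * x) * (f (((k : ℝ) + ν₁) / ((n : ℝ) + ν₂)) - f x) := by
    have h1 : ∑' k : ℕ, B.p k ((n : ℝ) * x) * f (((k : ℝ) + ν₁) / ((n : ℝ) + ν₂)) =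
        (∑' k : ℕ, B.p k ((n : ℝ) * x) * (f (((k : ℝ) + ν₁) / ((n : ℝ) + ν₂)) - f x)) +
          (B.A₁ (B.h 1) * B.A₂ ((n : ℝ) * x * B.h 1)) * f x := by
      rw [← (hSsum.mul_right (f x)).tsum_eq,
        ← Summable.tsum_add hsum_v (hSsum.summable.mul_right (f x))]
      exact tsum_congr fun k => by ring
    rw [h1]
    rw [mul_add, inv_mul_cancel_left₀ hS.ne']; ring
  rw [hsplit]
  exact aux_core hg0 hSsum hS hα hα1 hM.le hfb hsum_sq hsum_a hsum_v
end

section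
/- Let m > −1 be an integer and let G_k^{(m)} be the Miller-Lee polynomials. For ν₁, ν₂ ≥ 0 define the operators L_n^{(ν₁,ν₂)}(f; x) = e^{−nx} Σ_{k=0}^∞ [G_k^{(m)}(2nx)/2^{m+k+1}]·f((k+ν₁)/(n+ν₂)). Then for every continuous f : [0,∞) → ℝ with f(x)/(1+x²) convergent as x → ∞, L_n^{(ν₁,ν₂)}(f; x) → f(x) uniformly as n → ∞ on every compact subset of [0,∞). -/
set_option maxHeartbeats 1000000

/-- The Miller-Lee polynomials
`G_k^{(m)}(x) = ∑_{r=0}^{k} (m+1)_r/(r!(k−r)!) x^{k−r}`,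
where `(·)_r` is the Pochhammer symbol. -/
noncomputable def millerLee (m : ℤ) (k : ℕ) (x : ℝ) : ℝ :=
  ∑ r ∈ Finset.range (k + 1),
    (ascPochhammer ℝ r).eval ((m : ℝ) + 1) / (r.factorial * (k - r).factorial) * x ^ (k - r)

/-- The Stancu type operators built from the Miller-Lee polynomials:
`L_n^{(ν₁,ν₂)}(f;x) = e^{−nx} ∑ₖ G_k^{(m)}(2nx)/2^{m+k+1} · f((k+ν₁)/(n+ν₂))`. -/
noncomputable def mlOp (m : ℤ) (ν₁ ν₂ : ℝ) (n : ℕ) (f : ℝ → ℝ) (x : ℝ) : ℝ :=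
  Real.exp (-(n * x)) *
    ∑' k : ℕ, millerLee m k (2 * n * x) / (2 : ℝ) ^ (m + (k : ℤ) + 1) * f ((k + ν₁) / (n + ν₂))

open Finset


private lemma choose_shift (s M : ℕ) :
    (s + 1) * ((s + 1 + M).choose M) = (M + 1) * ((s + (M + 1)).choose (M + 1)) := by
  have h1 := Nat.add_one_mul_choose_eq (s + M) s
  have h2 := Nat.add_one_mul_choose_eq (s + M) M
  have h3 : (s + M).choose s = (s + M).choose M := Nat.choose_symm_add
  have h4 : (s + 1 + M).choose M = (s + M + 1).choose (s + 1) := by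
    rw [← Nat.choose_symm_add]
    congr 1
    omega
  have h5 : (s + (M + 1)).choose (M + 1) = (s + M + 1).choose (M + 1) := rfl
  rw [h4, h5]
  calc (s + 1) * (s + M + 1).choose (s + 1)
      = (s + M + 1).choose (s + 1) * (s + 1) := mul_comm _ _
    _ = (s + M + 1) * (s + M).choose s := h1.symm
    _ = (s + M + 1) * (s + M).choose M := by rw [h3]
    _ = (s + M + 1).choose (M + 1) * (M + 1) := h2
    _ = (M + 1) * (s + M + 1).choose (M + 1) := mul_comm _ _

private lemma shift1 {f : ℕ → ℝ} {V : ℝ} (h : HasSum (fun s => f (s + 1)) V) (h0 : f 0 = 0) :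
    HasSum f V := by
  have h2 := (hasSum_nat_add_iff (f := f) 1).mp h
  simp only [Finset.sum_range_one, h0, add_zero] at h2
  exact h2

private lemma shift1' {f : ℕ → ℝ} {V : ℝ} (h : HasSum f V) (h0 : f 0 = 0) :
    HasSum (fun s => f (s + 1)) V := by
  apply (hasSum_nat_add_iff (f := f) 1).mpr
  simp only [Finset.sum_range_one, h0, add_zero]
  exact h

private lemma shift2 {f : ℕ → ℝ} {V : ℝ} (h : HasSum (fun s => f (s + 2)) V) (h0 : f 0 = 0)
    (h1 : f 1 = 0) : HasSum f V := by
  have h2 := (hasSum_nat_add_iff (f := f) 2).mp h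
  simp only [Finset.sum_range_succ, Finset.sum_range_zero, zero_add, h0, h1, add_zero] at h2
  exact h2

private lemma hasSum_A (M : ℕ) :
    HasSum (fun r : ℕ => (((r + M).choose M : ℕ) : ℝ) * 2⁻¹ ^ r) (2 ^ (M + 1)) := by
  have h := hasSum_choose_mul_geometric_of_norm_lt_one (𝕜 := ℝ) M (r := 2⁻¹)
    (by rw [norm_inv]; norm_num)
  convert h using 2
  · rfl
  rw [show (1 : ℝ) - 2⁻¹ = 2⁻¹ by norm_num, one_div, ← inv_pow, inv_inv]

private lemma hasSum_A1 (M : ℕ) :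
    HasSum (fun r : ℕ => (r : ℝ) * ((((r + M).choose M : ℕ) : ℝ) * 2⁻¹ ^ r))
      ((M + 1) * 2 ^ (M + 1)) := by
  apply shift1 (f := fun r : ℕ => (r : ℝ) * ((((r + M).choose M : ℕ) : ℝ) * 2⁻¹ ^ r))
  · have h := (hasSum_A (M + 1)).mul_left ((M + 1 : ℝ) * 2⁻¹)
    have hval : (M + 1 : ℝ) * 2⁻¹ * 2 ^ (M + 1 + 1) = (M + 1) * 2 ^ (M + 1) := by
      rw [pow_succ]; ring
    rw [hval] at h
    convert h using 1
    · rfl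
    funext s
    have hc : ((s + 1) * ((s + 1 + M).choose M) : ℕ) = ((M + 1) * ((s + (M + 1)).choose (M + 1)) : ℕ) := by
      rw [choose_shift]
    have hc' : ((s : ℝ) + 1) * (((s + 1 + M).choose M : ℕ) : ℝ)
        = ((M : ℝ) + 1) * (((s + (M + 1)).choose (M + 1) : ℕ) : ℝ) := by
      exact_mod_cast congrArg (fun n : ℕ => (n : ℝ)) hc
    push_cast
    linear_combination (2⁻¹ ^ s * 2⁻¹ : ℝ) * hc'
  · simp

private lemma hasSum_A2 (M : ℕ) :
    HasSum (fun r : ℕ => (r : ℝ) * ((r : ℝ) - 1) * ((((r + M).choose M : ℕ) : ℝ) * 2⁻¹ ^ r))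
      ((M + 1) * (M + 2) * 2 ^ (M + 1)) := by
  apply shift2 (f := fun r : ℕ => (r : ℝ) * ((r : ℝ) - 1) * ((((r + M).choose M : ℕ) : ℝ) * 2⁻¹ ^ r))
  · have h0 : HasSum (fun s : ℕ => ((s : ℝ) + 1) * ((((s + 1 + (M + 1)).choose (M + 1) : ℕ) : ℝ) * 2⁻¹ ^ (s + 1)))
        (((M : ℝ) + 2) * 2 ^ (M + 2)) := by
      have h1 := shift1' (hasSum_A1 (M + 1)) (by simp)
      convert h1 using 1
      · funext s; push_cast; ring_nf
      · push_cast; ring_nf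
    have h := h0.mul_left ((M + 1 : ℝ) * 2⁻¹)
    have hval : (M + 1 : ℝ) * 2⁻¹ * (((M : ℝ) + 2) * 2 ^ (M + 2))
        = (M + 1) * (M + 2) * 2 ^ (M + 1) := by
      rw [pow_succ]; ring
    rw [hval] at h
    convert h using 1
    · rfl
    funext s
    have hc : ((s + 2) * ((s + 2 + M).choose M) : ℕ)
        = ((M + 1) * ((s + 1 + (M + 1)).choose (M + 1)) : ℕ) := by
      simpa [show s + 1 + 1 = s + 2 by omega, show s + 1 + 1 + M = s + 2 + M by omega]
        using choose_shift (s + 1) M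
    have hc' : ((s : ℝ) + 2) * (((s + 2 + M).choose M : ℕ) : ℝ)
        = ((M : ℝ) + 1) * (((s + 1 + (M + 1)).choose (M + 1) : ℕ) : ℝ) := by
      exact_mod_cast congrArg (fun n : ℕ => (n : ℝ)) hc
    push_cast
    linear_combination (((s : ℝ) + 1) * 2⁻¹ ^ (s + 1) * 2⁻¹) * hc'
  · simp
  · norm_num


private lemma hasSum_B (lam : ℝ) :
    HasSum (fun j : ℕ => lam ^ j / (j.factorial : ℝ)) (Real.exp lam) := by
  have h := NormedSpace.expSeries_div_hasSum_exp lam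
  rwa [← Real.exp_eq_exp_ℝ] at h

private lemma hasSum_B1 (lam : ℝ) :
    HasSum (fun j : ℕ => (j : ℝ) * (lam ^ j / (j.factorial : ℝ))) (lam * Real.exp lam) := by
  have h : HasSum (fun s : ℕ => ((s : ℝ) + 1) * (lam ^ (s + 1) / ((s + 1).factorial : ℝ)))
      (lam * Real.exp lam) := by
    have := (hasSum_B lam).mul_left lam
    convert this using 1
    · rfl
    funext s
    have hs : ((s + 1).factorial : ℝ) = ((s : ℝ) + 1) * (s.factorial : ℝ) := by
      rw [Nat.factorial_succ]; push_cast; ring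
    have h1 : (s.factorial : ℝ) ≠ 0 := Nat.cast_ne_zero.mpr s.factorial_ne_zero
    have h2 : ((s : ℝ) + 1) ≠ 0 := by positivity
    rw [hs]
    field_simp
    ring
  have h' := h
  have := shift1 (f := fun j : ℕ => (j : ℝ) * (lam ^ j / (j.factorial : ℝ)))
    (by push_cast; exact h') (by simp)
  exact this

private lemma hasSum_B2 (lam : ℝ) :
    HasSum (fun j : ℕ => (j : ℝ) * ((j : ℝ) - 1) * (lam ^ j / (j.factorial : ℝ)))
      (lam ^ 2 * Real.exp lam) := by
  have h : HasSum (fun s : ℕ => ((s : ℝ) + 2) * ((s : ℝ) + 1) * (lam ^ (s + 2) / ((s + 2).factorial : ℝ)))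
      (lam ^ 2 * Real.exp lam) := by
    have := (hasSum_B lam).mul_left (lam ^ 2)
    convert this using 1
    · rfl
    funext s
    have hs : ((s + 2).factorial : ℝ) = ((s : ℝ) + 2) * (((s : ℝ) + 1) * (s.factorial : ℝ)) := by
      rw [show s + 2 = (s + 1) + 1 from rfl, Nat.factorial_succ, Nat.factorial_succ]
      push_cast; ring
    have h1 : (s.factorial : ℝ) ≠ 0 := Nat.cast_ne_zero.mpr s.factorial_ne_zero
    have h2 : ((s : ℝ) + 1) ≠ 0 := by positivity
    have h3 : ((s : ℝ) + 2) ≠ 0 := by positivity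
    rw [hs]
    field_simp
    ring
  apply shift2 (f := fun j : ℕ => (j : ℝ) * ((j : ℝ) - 1) * (lam ^ j / (j.factorial : ℝ)))
  · convert h using 1
    funext s; push_cast; ring
  · simp
  · norm_num

private lemma hasSum_cauchy {u v : ℕ → ℝ} {U V : ℝ} (hu : HasSum u U) (hv : HasSum v V) :
    HasSum (fun k => ∑ r ∈ Finset.range (k + 1), u r * v (k - r)) (U * V) := by
  have hu' : Summable fun r => ‖u r‖ := by
    simpa [Real.norm_eq_abs] using summable_abs_iff.mpr hu.summable
  have hv' : Summable fun r => ‖v r‖ := by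
    simpa [Real.norm_eq_abs] using summable_abs_iff.mpr hv.summable
  have h := hasSum_sum_range_mul_of_summable_norm hu' hv'
  rwa [hu.tsum_eq, hv.tsum_eq] at h



private lemma millerLee_key (M : ℕ) (k : ℕ) (lam : ℝ) :
    millerLee (M : ℤ) k (2 * lam) * 2⁻¹ ^ k
      = ∑ r ∈ Finset.range (k + 1),
          ((((r + M).choose M : ℕ) : ℝ) * 2⁻¹ ^ r) * (lam ^ (k - r) / ((k - r).factorial : ℝ)) := by
  unfold millerLee
  rw [Finset.sum_mul]
  refine Finset.sum_congr rfl fun r hr => ?_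
  have hrk : r ≤ k := by
    have := Finset.mem_range.mp hr; omega
  have hev : (ascPochhammer ℝ r).eval (((M : ℤ) : ℝ) + 1)
      = (r.factorial : ℝ) * (((r + M).choose M : ℕ) : ℝ) := by
    have h1 : (((M : ℤ) : ℝ) + 1) = (((M + 1 : ℕ) : ℕ) : ℝ) := by push_cast; ring
    rw [h1, ← ascPochhammer_eval_cast, ascPochhammer_nat_eq_ascFactorial,
      Nat.ascFactorial_eq_factorial_mul_choose]
    have : (M + r).choose r = (r + M).choose M := by
      rw [Nat.add_comm M r, Nat.choose_symm_add]
    rw [this]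
    push_cast
    ring
  rw [hev, mul_pow]
  have h2 : (2⁻¹ : ℝ) ^ k = 2⁻¹ ^ r * 2⁻¹ ^ (k - r) := by
    rw [← pow_add]; congr 1; omega
  have h3 : (2 : ℝ) ^ (k - r) * (2⁻¹ : ℝ) ^ (k - r) = 1 := by
    rw [← mul_pow]; norm_num
  have hfr : (r.factorial : ℝ) ≠ 0 := Nat.cast_ne_zero.mpr r.factorial_ne_zero
  have hfkr : ((k - r).factorial : ℝ) ≠ 0 := Nat.cast_ne_zero.mpr (k - r).factorial_ne_zero
  rw [h2]
  field_simp
  ring_nf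
  rw [mul_assoc, ← mul_pow]; norm_num

section Wsums

private lemma hasSum_W0 (M : ℕ) (lam : ℝ) :
    HasSum (fun k : ℕ => millerLee (M : ℤ) k (2 * lam) * 2⁻¹ ^ k)
      (2 ^ (M + 1) * Real.exp lam) := by
  have h := hasSum_cauchy (hasSum_A M) (hasSum_B lam)
  convert h using 1
  funext k
  exact millerLee_key M k lam

private lemma hasSum_W1 (M : ℕ) (lam : ℝ) :
    HasSum (fun k : ℕ => (k : ℝ) * (millerLee (M : ℤ) k (2 * lam) * 2⁻¹ ^ k))
      (2 ^ (M + 1) * Real.exp lam * ((M + 1) + lam)) := by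
  have h1 := hasSum_cauchy (hasSum_A1 M) (hasSum_B lam)
  have h2 := hasSum_cauchy (hasSum_A M) (hasSum_B1 lam)
  convert h1.add h2 using 1
  · funext k
    rw [millerLee_key, Finset.mul_sum, ← Finset.sum_add_distrib]
    refine Finset.sum_congr rfl fun r hr => ?_
    have hrk : r ≤ k := by have := Finset.mem_range.mp hr; omega
    have hc : ((k - r : ℕ) : ℝ) = (k : ℝ) - (r : ℝ) := by
      push_cast [Nat.cast_sub hrk]; ring
    rw [hc]
    ring
  · ring

private lemma hasSum_W2 (M : ℕ) (lam : ℝ) :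
    HasSum (fun k : ℕ => (k : ℝ) ^ 2 * (millerLee (M : ℤ) k (2 * lam) * 2⁻¹ ^ k))
      (2 ^ (M + 1) * Real.exp lam *
        ((M + 1) * (M + 2) + lam ^ 2 + 2 * (M + 1) * lam + ((M + 1) + lam))) := by
  have c1 := hasSum_cauchy (hasSum_A2 M) (hasSum_B lam)
  have c2 := hasSum_cauchy (hasSum_A M) (hasSum_B2 lam)
  have c3 := (hasSum_cauchy (hasSum_A1 M) (hasSum_B1 lam)).mul_left 2
  have c4 := hasSum_cauchy (hasSum_A1 M) (hasSum_B lam)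
  have c5 := hasSum_cauchy (hasSum_A M) (hasSum_B1 lam)
  convert (((c1.add c2).add c3).add c4).add c5 using 1
  · funext k
    rw [millerLee_key, Finset.mul_sum, Finset.mul_sum, ← Finset.sum_add_distrib,
      ← Finset.sum_add_distrib, ← Finset.sum_add_distrib, ← Finset.sum_add_distrib]
    refine Finset.sum_congr rfl fun r hr => ?_
    have hrk : r ≤ k := by have := Finset.mem_range.mp hr; omega
    have hc : ((k - r : ℕ) : ℝ) = (k : ℝ) - (r : ℝ) := by
      push_cast [Nat.cast_sub hrk]; ring
    rw [hc]
    ring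
  · ring

private lemma millerLee_w_nonneg (M : ℕ) (lam : ℝ) (hlam : 0 ≤ lam) (k : ℕ) :
    0 ≤ millerLee (M : ℤ) k (2 * lam) * 2⁻¹ ^ k := by
  rw [millerLee_key]
  apply Finset.sum_nonneg
  intro r _
  have : (0:ℝ) ≤ lam ^ (k - r) := pow_nonneg hlam _
  positivity

end Wsums

private lemma final_bound (M n : ℕ) (nu1 nu2 R x B eps : ℝ)
    (hnu1 : 0 ≤ nu1) (hnu2 : 0 ≤ nu2) (hR0 : 0 ≤ R) (hx0 : 0 ≤ x) (hxRx : x ≤ R)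
    (hB0 : 0 ≤ B) (hn1 : 1 ≤ n) (heps : 0 < eps)
    (hbig : B * ((((M:ℝ) + 1 + nu1 + nu2 * R) ^ 2 + 2 * ((M:ℝ) + 1)) + R) < eps / 2 * (n:ℝ)) :
    eps / 2 + B * (((((M:ℝ) + 1 + nu1 - nu2 * x) ^ 2) + ((n:ℝ) * x + 2 * ((M:ℝ) + 1)))
      / ((n:ℝ) + nu2) ^ 2) < eps := by
  have hn0 : (0:ℝ) < (n:ℝ) := by exact_mod_cast hn1
  set C₂ : ℝ := ((M:ℝ) + 1 + nu1 + nu2 * R) ^ 2 + 2 * ((M:ℝ) + 1) with hC₂def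
  have hM : (0:ℝ) ≤ (M:ℝ) := Nat.cast_nonneg M
  have hC₂0 : (0:ℝ) ≤ C₂ := by positivity
  have hnum : (((M:ℝ) + 1 + nu1 - nu2 * x) ^ 2) + ((n:ℝ) * x + 2 * ((M:ℝ) + 1))
      ≤ C₂ + (n:ℝ) * R := by
    have h1 : (((M:ℝ) + 1 + nu1 - nu2 * x) ^ 2) ≤ ((M:ℝ) + 1 + nu1 + nu2 * R) ^ 2 := by
      apply sq_le_sq'
      · linarith [mul_le_mul_of_nonneg_left hxRx hnu2, mul_nonneg hnu2 hR0]
      · linarith [mul_nonneg hnu2 hx0, mul_nonneg hnu2 hR0]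
    have h2 : (n:ℝ) * x ≤ (n:ℝ) * R := mul_le_mul_of_nonneg_left hxRx hn0.le
    rw [hC₂def]
    linarith
  have hD : (0:ℝ) < ((n:ℝ) + nu2) ^ 2 := by positivity
  have hn2 : (0:ℝ) < (n:ℝ) ^ 2 := by positivity
  have hDle : (n:ℝ) ^ 2 ≤ ((n:ℝ) + nu2) ^ 2 := by nlinarith
  have hXnn : (0:ℝ) ≤ (((M:ℝ) + 1 + nu1 - nu2 * x) ^ 2) + ((n:ℝ) * x + 2 * ((M:ℝ) + 1)) := by
    have h3 : (0:ℝ) ≤ (n:ℝ) * x := mul_nonneg hn0.le hx0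
    nlinarith [sq_nonneg ((M:ℝ) + 1 + nu1 - nu2 * x)]
  have hYnn : (0:ℝ) ≤ C₂ + (n:ℝ) * R := le_trans hXnn hnum
  have hfrac : ((((M:ℝ) + 1 + nu1 - nu2 * x) ^ 2) + ((n:ℝ) * x + 2 * ((M:ℝ) + 1))) / ((n:ℝ) + nu2) ^ 2
      ≤ (C₂ + (n:ℝ) * R) / (n:ℝ) ^ 2 := by
    rw [div_le_div_iff₀ hD hn2]
    have e1 := mul_le_mul_of_nonneg_right hnum hn2.le
    have e2 := mul_le_mul_of_nonneg_left hDle hYnn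
    nlinarith [e1, e2]
  have hfrac2 : (C₂ + (n:ℝ) * R) / (n:ℝ) ^ 2 ≤ (C₂ + R) / (n:ℝ) := by
    rw [div_le_div_iff₀ hn2 hn0]
    have hn1' : (1:ℝ) ≤ (n:ℝ) := by exact_mod_cast hn1
    have h4 : C₂ ≤ (n:ℝ) * C₂ := by nlinarith [mul_le_mul_of_nonneg_right hn1' hC₂0]
    nlinarith [mul_le_mul_of_nonneg_right h4 hn0.le]
  have hfinal : B * ((C₂ + R) / (n:ℝ)) < eps / 2 := by
    have h5 : B * ((C₂ + R) / (n:ℝ)) = B * (C₂ + R) / (n:ℝ) := by ring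
    rw [h5, div_lt_iff₀ hn0]
    nlinarith
  have hmono := mul_le_mul_of_nonneg_left (le_trans hfrac hfrac2) hB0
  linarith

/-- Example 3.2: for integer `m > −1`, the Miller-Lee operators converge uniformly
to `f` on every compact subset of `[0,∞)`, for continuous `f` in the class `E`. -/
theorem mlOp_tendstoUniformlyOn (m : ℤ) (hm : -1 < m)
    (ν₁ ν₂ : ℝ) (hν₁ : 0 ≤ ν₁) (hν₂ : 0 ≤ ν₂)
    (f : ℝ → ℝ) (hf : ContinuousOn f (Set.Ici 0))
    (hfE : ∃ l : ℝ, Filter.Tendsto (fun x => f x / (1 + x ^ 2)) Filter.atTop (nhds l))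
    (K : Set ℝ) (hK : K ⊆ Set.Ici 0) (hKc : IsCompact K) :
    TendstoUniformlyOn (fun (n : ℕ) (x : ℝ) => mlOp m ν₁ ν₂ n f x) f Filter.atTop K := by
  obtain ⟨M, rfl⟩ : ∃ M : ℕ, (M : ℤ) = m := ⟨m.toNat, Int.toNat_of_nonneg (by omega)⟩
  -- a bound for K
  obtain ⟨R₀, hR₀⟩ := hKc.bddAbove
  set R : ℝ := max R₀ 0 with hRdef
  have hR0 : (0:ℝ) ≤ R := le_max_right _ _
  have hxR : ∀ x ∈ K, x ≤ R := fun x hx => le_trans (hR₀ hx) (le_max_left _ _)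
  -- growth bound for f
  obtain ⟨C, hC0, hCf⟩ : ∃ C : ℝ, 0 < C ∧ ∀ t : ℝ, 0 ≤ t → |f t| ≤ C * (1 + t ^ 2) := by
    obtain ⟨l, hl⟩ := hfE
    have h1 : ∀ᶠ t in Filter.atTop, |f t / (1 + t ^ 2)| < |l| + 1 :=
      (hl.abs).eventually_lt_const (lt_add_one |l|)
    obtain ⟨A, hA⟩ := Filter.eventually_atTop.mp h1
    obtain ⟨C₁, hC₁⟩ := (isCompact_Icc (a := (0:ℝ)) (b := max A 0)).exists_bound_of_continuousOn
      (hf.mono (fun t ht => ht.1))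
    refine ⟨max C₁ (|l| + 1) + 1, by positivity, ?_⟩
    intro t ht
    rcases le_or_gt t (max A 0) with hcase | hcase
    · have h2 : |f t| ≤ C₁ := by
        have := hC₁ t ⟨ht, hcase⟩
        simpa [Real.norm_eq_abs] using this
      have h3 : C₁ ≤ max C₁ (|l| + 1) := le_max_left _ _
      nlinarith [sq_nonneg t, abs_nonneg (f t)]
    · have hA' : A ≤ t := le_of_lt (lt_of_le_of_lt (le_max_left A 0) hcase)
      have h2 := le_of_lt (hA t hA')
      have hpos : (0:ℝ) < 1 + t ^ 2 := by positivity
      have h3 : |f t| = |f t / (1 + t ^ 2)| * (1 + t ^ 2) := by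
        rw [abs_div, abs_of_pos hpos]
        field_simp
      have h4 : |l| + 1 ≤ max C₁ (|l| + 1) + 1 := by
        have := le_max_right C₁ (|l| + 1); linarith
      rw [h3]
      have h5 : |f t / (1 + t ^ 2)| * (1 + t ^ 2) ≤ (|l| + 1) * (1 + t ^ 2) :=
        mul_le_mul_of_nonneg_right h2 hpos.le
      have h6 : (|l| + 1) * (1 + t ^ 2) ≤ (max C₁ (|l| + 1) + 1) * (1 + t ^ 2) :=
        mul_le_mul_of_nonneg_right h4 hpos.le
      linarith
  rw [Metric.tendstoUniformlyOn_iff]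
  intro ε hε
  -- pointwise bound with ε/2
  obtain ⟨B, hB0, hB⟩ : ∃ B : ℝ, 0 ≤ B ∧ ∀ x ∈ K, ∀ t : ℝ, 0 ≤ t →
      |f t - f x| ≤ ε / 2 + B * (t - x) ^ 2 := by
    have hKsub : K ⊆ Set.Icc 0 (R + 1) := fun x hx =>
      ⟨hK hx, le_trans (hxR x hx) (by linarith)⟩
    have hUC : UniformContinuousOn f (Set.Icc 0 (R + 1)) :=
      isCompact_Icc.uniformContinuousOn_of_continuous (hf.mono (fun t ht => ht.1))
    obtain ⟨δ, hδ0, hδ⟩ := Metric.uniformContinuousOn_iff.mp hUC (ε / 2) (by linarith)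
    set δ' : ℝ := min δ 1 with hδ'def
    have hδ'0 : 0 < δ' := lt_min hδ0 one_pos
    have hδ'1 : δ' ≤ 1 := min_le_right _ _
    refine ⟨C * (2 + 3 * R ^ 2) / δ' ^ 2 + 2 * C, by positivity, ?_⟩
    intro x hx t ht
    have hx0 : (0:ℝ) ≤ x := hK hx
    have hxR' : x ≤ R := hxR x hx
    by_cases hcase : |t - x| < δ'
    · have htI : t ∈ Set.Icc 0 (R + 1) := by
        constructor
        · exact ht
        · have h1 : t - x ≤ |t - x| := le_abs_self _
          linarith [lt_of_lt_of_le hcase hδ'1]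
      have h2 := hδ t htI x (hKsub hx)
        (by rw [Real.dist_eq]; exact lt_of_lt_of_le hcase (min_le_left _ _))
      rw [Real.dist_eq] at h2
      have h3 : 0 ≤ (C * (2 + 3 * R ^ 2) / δ' ^ 2 + 2 * C) * (t - x) ^ 2 := by positivity
      linarith [le_of_lt h2]
    · push_neg at hcase
      have h1 : δ' ^ 2 ≤ (t - x) ^ 2 := by
        have h := sq_abs (t - x)
        nlinarith [abs_nonneg (t - x)]
      have hft := hCf t ht
      have hfx := hCf x hx0
      have habs : |f t - f x| ≤ |f t| + |f x| := by
        calc |f t - f x| = |f t + -(f x)| := by ring_nf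
          _ ≤ |f t| + |-(f x)| := abs_add_le _ _
          _ = |f t| + |f x| := by rw [abs_neg]
      have ht2 : t ^ 2 ≤ 2 * (t - x) ^ 2 + 2 * x ^ 2 := by nlinarith [sq_nonneg (t - 2 * x)]
      have e1 : C * (2 + 3 * R ^ 2) ≤ C * (2 + 3 * R ^ 2) / δ' ^ 2 * (t - x) ^ 2 := by
        rw [div_mul_eq_mul_div, le_div_iff₀ (by positivity)]
        have h5 : C * (2 + 3 * R ^ 2) * δ' ^ 2 ≤ C * (2 + 3 * R ^ 2) * (t - x) ^ 2 :=
          mul_le_mul_of_nonneg_left h1 (by positivity)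
        linarith
      have key : C * (1 + t ^ 2) + C * (1 + x ^ 2)
          ≤ C * (2 + 3 * R ^ 2) / δ' ^ 2 * (t - x) ^ 2 + 2 * C * (t - x) ^ 2 := by
        nlinarith [sq_nonneg (t - x), mul_le_mul_of_nonneg_left ht2 hC0.le,
          mul_le_mul_of_nonneg_left (sq_le_sq' (by linarith : -R ≤ x) hxR') hC0.le]
      have hε2 : 0 ≤ ε / 2 := by linarith
      linarith
  -- choose N
  obtain ⟨N, hN⟩ := exists_nat_gt
    (B * ((((M:ℝ) + 1 + ν₁ + ν₂ * R) ^ 2 + 2 * ((M:ℝ) + 1)) + R) / (ε / 2))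
  have hN1 : 0 < N := by
    have hM : (0:ℝ) ≤ (M:ℝ) := Nat.cast_nonneg M
    have : (0:ℝ) ≤ B * ((((M:ℝ) + 1 + ν₁ + ν₂ * R) ^ 2 + 2 * ((M:ℝ) + 1)) + R) / (ε / 2) := by
      positivity
    exact_mod_cast lt_of_le_of_lt this hN
  filter_upwards [Filter.eventually_ge_atTop N] with n hn
  intro x hx
  have hn1 : 1 ≤ n := le_trans hN1 hn
  have hx0 : (0:ℝ) ≤ x := hK hx
  have hxRx : x ≤ R := hxR x hx
  have hn0 : (0:ℝ) < (n:ℝ) := by exact_mod_cast hn1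
  have hden : (0:ℝ) < (n:ℝ) + ν₂ := by linarith
  set lam : ℝ := (n:ℝ) * x with hlamdef
  have hlam0 : 0 ≤ lam := by positivity
  have hW0 := hasSum_W0 M lam
  have hW1 := hasSum_W1 M lam
  have hW2 := hasSum_W2 M lam
  set w : ℕ → ℝ := fun k => millerLee (M:ℤ) k (2 * lam) * 2⁻¹ ^ k with hwdef
  have hwnn : ∀ k, 0 ≤ w k := millerLee_w_nonneg M lam hlam0
  set T : ℕ → ℝ := fun k => ((k:ℝ) + ν₁) / ((n:ℝ) + ν₂) with hTdef
  have hT0 : ∀ k, 0 ≤ T k := fun k => div_nonneg (by positivity) hden.le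
  set α : ℝ := 1 / ((n:ℝ) + ν₂) with hαdef
  set c : ℝ := ν₁ / ((n:ℝ) + ν₂) - x with hcdef
  have hTk : ∀ k, T k - x = α * (k:ℝ) + c := by
    intro k
    rw [hTdef, hαdef, hcdef]
    field_simp
    ring
  -- dominating series
  have hH := ((hW0.mul_left (ε / 2 + B * c ^ 2)).add (hW1.mul_left (2 * B * α * c))).add
    (hW2.mul_left (B * α ^ 2))
  have hpt : ∀ k : ℕ, ((ε / 2 + B * c ^ 2) * w k + 2 * B * α * c * ((k:ℝ) * w k))
        + B * α ^ 2 * ((k:ℝ) ^ 2 * w k) = w k * (ε / 2 + B * (T k - x) ^ 2) := by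
    intro k
    rw [hTk k]
    ring
  set Htot : ℝ := ((ε / 2 + B * c ^ 2) * (2 ^ (M + 1) * Real.exp lam)
      + 2 * B * α * c * (2 ^ (M + 1) * Real.exp lam * (((M:ℝ) + 1) + lam)))
      + B * α ^ 2 * (2 ^ (M + 1) * Real.exp lam *
        (((M:ℝ) + 1) * ((M:ℝ) + 2) + lam ^ 2 + 2 * ((M:ℝ) + 1) * lam + (((M:ℝ) + 1) + lam)))
    with hHtotdef
  have hH' : HasSum (fun k => w k * (ε / 2 + B * (T k - x) ^ 2)) Htot := by
    convert hH using 1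
    · rfl
    funext k
    exact (hpt k).symm
  have hhnn : ∀ k, 0 ≤ w k * (ε / 2 + B * (T k - x) ^ 2) := by
    intro k
    have : 0 ≤ ε / 2 + B * (T k - x) ^ 2 := by positivity
    exact mul_nonneg (hwnn k) this
  -- the error series
  set g : ℕ → ℝ := fun k => w k * (f (T k) - f x) with hgdef
  have hgle : ∀ k, |g k| ≤ w k * (ε / 2 + B * (T k - x) ^ 2) := by
    intro k
    rw [hgdef]
    simp only
    rw [abs_mul, abs_of_nonneg (hwnn k)]
    exact mul_le_mul_of_nonneg_left (hB x hx (T k) (hT0 k)) (hwnn k)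
  have hgabs : Summable (fun k => |g k|) :=
    Summable.of_nonneg_of_le (fun k => abs_nonneg _) hgle hH'.summable
  have hg : Summable g := summable_abs_iff.mp hgabs
  have hwfx : Summable (fun k => w k * f x) := hW0.summable.mul_right (f x)
  have hwfT : Summable (fun k => w k * f (T k)) := by
    have heq : (fun k => w k * f (T k)) = fun k => g k + w k * f x := by
      funext k; rw [hgdef]; ring
    rw [heq]
    exact hg.add hwfx
  -- identify mlOp with the weighted sum
  have hmlOp : mlOp (M:ℤ) ν₁ ν₂ n f x
      = Real.exp (-lam) * ((2 ^ (M + 1) : ℝ)⁻¹ * ∑' k, w k * f (T k)) := by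
    rw [mlOp]
    have harg : 2 * (n:ℝ) * x = 2 * lam := by rw [hlamdef]; ring
    have hexp : -((n:ℝ) * x) = -lam := by rw [hlamdef]
    rw [hexp, harg]
    congr 1
    rw [← tsum_mul_left]
    apply tsum_congr
    intro k
    have hzp : (2:ℝ) ^ ((M:ℤ) + (k:ℤ) + 1) = 2 ^ (M + 1) * 2 ^ k := by
      rw [show (M:ℤ) + (k:ℤ) + 1 = ((M + 1 + k : ℕ) : ℤ) by push_cast; ring,
        zpow_natCast, pow_add]
    rw [hzp]
    have h2k : (2⁻¹:ℝ) ^ k = ((2:ℝ) ^ k)⁻¹ := inv_pow 2 k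
    rw [hwdef]
    simp only
    rw [h2k, hTdef]
    simp only
    field_simp
  -- the value of f x in terms of the weights
  have hfxval : f x = Real.exp (-lam) * ((2 ^ (M + 1) : ℝ)⁻¹ * ((2 ^ (M + 1) * Real.exp lam) * f x)) := by
    rw [Real.exp_neg]
    have h1 : Real.exp lam ≠ 0 := Real.exp_ne_zero lam
    have h2 : ((2:ℝ) ^ (M + 1)) ≠ 0 := by positivity
    field_simp
  have htsumg : ∑' k, g k = (∑' k, w k * f (T k)) - (2 ^ (M + 1) * Real.exp lam) * f x := by
    have h1 : ∑' k, g k = (∑' k, w k * f (T k)) - ∑' k, w k * f x := by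
      rw [← Summable.tsum_sub hwfT hwfx]
      apply tsum_congr
      intro k
      rw [hgdef]
      ring
    rw [h1, tsum_mul_right, hW0.tsum_eq]
  -- the difference
  have hdiff : mlOp (M:ℤ) ν₁ ν₂ n f x - f x
      = Real.exp (-lam) * ((2 ^ (M + 1) : ℝ)⁻¹ * ∑' k, g k) := by
    rw [hmlOp, htsumg]
    nth_rewrite 1 [hfxval]
    ring
  -- bound on |∑ g|
  have hgabs' : |∑' k, g k| ≤ Htot := by
    have h1 : |∑' k, g k| ≤ ∑' k, |g k| := by
      have hnorm : Summable fun k => ‖g k‖ := by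
        simpa only [Real.norm_eq_abs] using hgabs
      have h := norm_tsum_le_tsum_norm hnorm
      simpa only [Real.norm_eq_abs] using h
    have h2 : ∑' k, |g k| ≤ ∑' k, w k * (ε / 2 + B * (T k - x) ^ 2) :=
      Summable.tsum_le_tsum hgle hgabs hH'.summable
    rw [hH'.tsum_eq] at h2
    linarith
  have hbound1 : |mlOp (M:ℤ) ν₁ ν₂ n f x - f x|
      ≤ Real.exp (-lam) * ((2 ^ (M + 1) : ℝ)⁻¹ * Htot) := by
    rw [hdiff]
    rw [abs_mul, abs_mul]
    have e1 : |Real.exp (-lam)| = Real.exp (-lam) := abs_of_pos (Real.exp_pos _)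
    have e2 : |((2:ℝ) ^ (M + 1))⁻¹| = ((2:ℝ) ^ (M + 1))⁻¹ := abs_of_pos (by positivity)
    rw [e1, e2]
    have hstep := mul_le_mul_of_nonneg_left hgabs'
      (le_of_lt (by positivity : (0:ℝ) < ((2:ℝ) ^ (M + 1))⁻¹))
    exact mul_le_mul_of_nonneg_left hstep (Real.exp_pos _).le
  -- evaluate the bound
  have hEval : Real.exp (-lam) * ((2 ^ (M + 1) : ℝ)⁻¹ * Htot)
      = ε / 2 + B * (c ^ 2 + 2 * α * c * (((M:ℝ) + 1) + lam)
        + α ^ 2 * (((M:ℝ) + 1) * ((M:ℝ) + 2) + lam ^ 2 + 2 * ((M:ℝ) + 1) * lam + (((M:ℝ) + 1) + lam))) := by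
    rw [hHtotdef, Real.exp_neg]
    have h1 : Real.exp lam ≠ 0 := Real.exp_ne_zero lam
    have h2 : ((2:ℝ) ^ (M + 1)) ≠ 0 := by positivity
    field_simp
    ring
  have hBracket : c ^ 2 + 2 * α * c * (((M:ℝ) + 1) + lam)
      + α ^ 2 * (((M:ℝ) + 1) * ((M:ℝ) + 2) + lam ^ 2 + 2 * ((M:ℝ) + 1) * lam + (((M:ℝ) + 1) + lam))
      = ((((M:ℝ) + 1 + ν₁ - ν₂ * x) ^ 2) + ((n:ℝ) * x + 2 * ((M:ℝ) + 1))) / ((n:ℝ) + ν₂) ^ 2 := by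
    have hden' : ((n:ℝ) + ν₂) ≠ 0 := ne_of_gt hden
    rw [hαdef, hcdef, hlamdef]
    field_simp
    ring
  -- conclude
  rw [Real.dist_eq, abs_sub_comm]
  have hbig : B * ((((M:ℝ) + 1 + ν₁ + ν₂ * R) ^ 2 + 2 * ((M:ℝ) + 1)) + R) < ε / 2 * (n:ℝ) := by
    have hNn : (N:ℝ) ≤ (n:ℝ) := by exact_mod_cast hn
    have hε2 : (0:ℝ) < ε / 2 := by linarith
    rw [div_lt_iff₀ hε2] at hN
    have h2 : (N:ℝ) * (ε / 2) ≤ (n:ℝ) * (ε / 2) := mul_le_mul_of_nonneg_right hNn hε2.le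
    nlinarith [hN, h2]
  have hfb := final_bound M n ν₁ ν₂ R x B ε hν₁ hν₂ hR0 hx0 hxRx hB0 hn1 hε hbig
  calc |mlOp (M:ℤ) ν₁ ν₂ n f x - f x|
      ≤ Real.exp (-lam) * ((2 ^ (M + 1) : ℝ)⁻¹ * Htot) := hbound1
    _ = ε / 2 + B * (c ^ 2 + 2 * α * c * (((M:ℝ) + 1) + lam)
        + α ^ 2 * (((M:ℝ) + 1) * ((M:ℝ) + 2) + lam ^ 2 + 2 * ((M:ℝ) + 1) * lam + (((M:ℝ) + 1) + lam))) := hEval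
    _ = ε / 2 + B * (((((M:ℝ) + 1 + ν₁ - ν₂ * x) ^ 2) + ((n:ℝ) * x + 2 * ((M:ℝ) + 1))) / ((n:ℝ) + ν₂) ^ 2) := by
        rw [hBracket]
    _ < ε := hfb
end
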